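/- arXiv:2005.02833 — 10 statements merged into one kernel-verified Lean document; each statement's English description precedes it below -/
import Mathlib

section
/- Every graph that has a normal spanning tree has countable colouring number. -/
open SimpleGraph

universe u v w

/-- `x ≤ y` in the tree-order of the tree `T` rooted at `r`:
`x` lies on every path in `T` from `r` to `y`. -/
def treeLE {V : Type u} (T : SimpleGraph V) (r x y : V) : Prop :=
  ∀ p : T.Walk r y, p.IsPath → x ∈ p.support

/-- `T` is a normal spanning tree of `G` with root `r`. -/
def IsNormalSpanningTree {V : Type u} (G T : SimpleGraph V) (r : V) : Prop :=
  T ≤ G ∧ T.IsTree ∧ ∀ ⦃x y : V⦄, G.Adj x y → (treeLE T r x y ∨ treeLE T r y x)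

def HasNormalSpanningTree {V : Type u} (G : SimpleGraph V) : Prop :=
  ∃ (T : SimpleGraph V) (r : V), IsNormalSpanningTree G T r

/-- `G` has countable colouring number: there is a well-order on `V` in which
every vertex has only finitely many neighbours preceding it. -/
def CountableColouringNumber {V : Type u} (G : SimpleGraph V) : Prop :=
  ∃ lt : V → V → Prop, IsWellOrder V lt ∧ ∀ v : V, {u : V | G.Adj u v ∧ lt u v}.Finite

/-- A witness that `H` is a minor of `G`, via branch sets. -/
structure MinorMap {W : Type w} {V : Type v} (H : SimpleGraph W) (G : SimpleGraph V) where
  branch : W → Set V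
  branch_nonempty : ∀ x, (branch x).Nonempty
  branch_connected : ∀ x, (G.induce (branch x)).Connected
  branch_disjoint : ∀ ⦃x y⦄, x ≠ y → Disjoint (branch x) (branch y)
  branch_adj : ∀ ⦃x y⦄, H.Adj x y → ∃ u ∈ branch x, ∃ v ∈ branch y, G.Adj u v

def IsMinor {W : Type w} {V : Type v} (H : SimpleGraph W) (G : SimpleGraph V) : Prop :=
  Nonempty (MinorMap H G)


/-- Every graph with a normal spanning tree has countable colouring number. -/
theorem stmt2 {V : Type u} (G : SimpleGraph V) (h : HasNormalSpanningTree G) :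
    CountableColouringNumber G := by
  classical
  obtain ⟨T, r, hTG, hTree, hcomp⟩ := h
  have hreach : ∀ v : V, T.Reachable r v := fun v => hTree.isConnected r v
  let p : ∀ v : V, T.Path r v := fun v => ((hreach v).some).toPath
  let d : V → ℕ := fun v => (p v).1.length
  -- strict monotonicity of depth along tree order
  have key : ∀ x y : V, treeLE T r x y → x ≠ y → d x < d y := by
    intro x y hxy hne
    have hx : x ∈ (p y).1.support := hxy (p y).1 (p y).2
    have hq : ((p y).1.takeUntil x hx).IsPath := (p y).2.takeUntil hx
    have hpq : (p x) = ⟨(p y).1.takeUntil x hx, hq⟩ :=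
      hTree.IsAcyclic.path_unique _ _
    have hdx : (p x).1.length = ((p y).1.takeUntil x hx).length := by
      rw [hpq]
    have hspec := (p y).1.take_spec hx
    have hlen : ((p y).1.takeUntil x hx).length + ((p y).1.dropUntil x hx).length
        = (p y).1.length := by
      conv_rhs => rw [← hspec]
      rw [SimpleGraph.Walk.length_append]
    have hpos : 0 < ((p y).1.dropUntil x hx).length := by
      rcases Nat.eq_zero_or_pos ((p y).1.dropUntil x hx).length with h0 | h0
      · exact absurd (SimpleGraph.Walk.eq_of_length_eq_zero h0) hne
      · exact h0
    have : d x < d y := by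
      show (p x).1.length < (p y).1.length
      omega
    exact this
  -- the well-order: lexicographic on (depth, arbitrary well-order)
  let lt : V → V → Prop := fun u v =>
    Prod.Lex (· < · : ℕ → ℕ → Prop) (WellOrderingRel) (d u, u) (d v, v)
  have hwo : IsWellOrder V lt := by
    have e : lt ↪r Prod.Lex (· < · : ℕ → ℕ → Prop) (WellOrderingRel) :=
      ⟨⟨fun v => (d v, v), fun a b hab => congrArg Prod.snd hab⟩, Iff.rfl⟩
    exact e.isWellOrder
  refine ⟨lt, hwo, fun v => ?_⟩
  apply Set.Finite.subset ((p v).1.support.toFinset.finite_toSet)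
  intro u hu
  obtain ⟨hadj, hlt⟩ := hu
  simp only [Finset.coe_sort_coe, List.coe_toFinset, Set.mem_setOf_eq]
  rcases hcomp hadj with huv | hvu
  · exact huv (p v).1 (p v).2
  · exfalso
    have hne : v ≠ u := hadj.ne'
    have hd : d v < d u := key v u hvu hne
    have hlt2 : Prod.Lex (· < · : ℕ → ℕ → Prop) WellOrderingRel (d u, u) (d v, v) := hlt
    rw [Prod.lex_def] at hlt2
    rcases hlt2 with h1 | ⟨h1, _⟩
    · exact absurd h1 (by simpa using Nat.not_lt.mpr (Nat.le_of_lt hd))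
    · exact absurd h1 (by simpa using Nat.ne_of_gt hd)
end

section
/- The property of having a normal spanning tree is closed under taking connected minors: if a graph G has a normal spanning tree and H is a connected minor of G, then H has a normal spanning tree. -/
open SimpleGraph

universe u v w

open scoped Classical

section Aux

variable {α : Type*}

/-- predecessor of `x` in list `l`. -/
noncomputable def prevL : List α → α → α
  | [], x => x
  | [_], x => x
  | (a :: b :: t), x => if x = b then a else prevL (b :: t) x

theorem prevL_mem {l : List α} {x : α} (hx : x ∈ l.tail) : prevL l x ∈ l := by
  induction l with
  | nil => simp at hx
  | cons a t ih =>
    cases t with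
    | nil => simp at hx
    | cons b t' =>
      simp only [List.tail_cons] at hx
      by_cases hxb : x = b
      · simp [prevL, hxb]
      · have hx' : x ∈ (b :: t').tail := by
          rcases List.mem_cons.mp hx with h | h
          · exact absurd h hxb
          · exact h
        have := ih hx'
        simp only [prevL, if_neg hxb]
        exact List.mem_cons_of_mem _ this

theorem prevL_adj {r : α → α → Prop} {l : List α} {x : α} (hc : List.Chain' r l)
    (hx : x ∈ l.tail) : r (prevL l x) x := by
  induction l with
  | nil => simp at hx
  | cons a t ih =>
    cases t with
    | nil => simp at hx
    | cons b t' =>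
      simp only [List.tail_cons] at hx
      by_cases hxb : x = b
      · subst hxb; simp only [prevL, if_pos rfl]
        exact hc.rel_head
      · have hx' : x ∈ (b :: t').tail := by
          rcases List.mem_cons.mp hx with h | h
          · exact absurd h hxb
          · exact h
        simpa [prevL, hxb] using ih hc.tail hx'

theorem prevL_idx {l : List α} {x : α} (hnd : l.Nodup) (hx : x ∈ l.tail) :
    l.idxOf (prevL l x) + 1 = l.idxOf x := by
  induction l with
  | nil => simp at hx
  | cons a t ih =>
    cases t with
    | nil => simp at hx
    | cons b t' =>
      simp only [List.tail_cons] at hx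
      have hab : a ∉ (b :: t') := (List.nodup_cons.mp hnd).1
      by_cases hxb : x = b
      · subst hxb
        have hxa : a ≠ x := fun h => hab (h ▸ List.mem_cons_self)
        simp only [prevL, if_pos trivial, eq_self_iff_true, if_true]
        rw [List.idxOf_cons_self, List.idxOf_cons_ne _ hxa, List.idxOf_cons_self]
      · have hx' : x ∈ (b :: t').tail := by
          rcases List.mem_cons.mp hx with h | h
          · exact absurd h hxb
          · exact h
        have hxt : x ∈ (b :: t') := List.mem_of_mem_tail hx'
        have hxa : a ≠ x := fun h => hab (h ▸ hxt)
        have hp := ih (List.nodup_cons.mp hnd).2 hx'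
        have hpm : prevL (b :: t') x ∈ (b :: t') := prevL_mem hx'
        have hpa : a ≠ prevL (b :: t') x := fun h => hab (h ▸ hpm)
        simp only [prevL, if_neg hxb]
        rw [List.idxOf_cons_ne _ hpa, List.idxOf_cons_ne _ hxa]
        omega

/-- `a` is an ancestor (or equal) of `b` under parent function `par`. -/
def anc (par : α → α) (a b : α) : Prop := ∃ k : ℕ, par^[k] b = a

theorem anc_refl (par : α → α) (a : α) : anc par a a := ⟨0, rfl⟩

theorem anc_trans {par : α → α} {a b c : α} (h1 : anc par a b) (h2 : anc par b c) :
    anc par a c := by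
  obtain ⟨k, hk⟩ := h1
  obtain ⟨l, hl⟩ := h2
  exact ⟨k + l, by rw [Function.iterate_add_apply, hl, hk]⟩

theorem anc_step {par : α → α} (b : α) : anc par (par b) b := ⟨1, rfl⟩

end Aux
section Core

variable {W : Type u}

/-- A "normal order" for the graph `H`. -/
structure GoodOrder (H : SimpleGraph W) (le' : W → W → Prop) : Prop where
  refl : ∀ x, le' x x
  trans : ∀ {a b c}, le' a b → le' b c → le' a c
  antisymm : ∀ {a b}, le' a b → le' b a → a = b
  chain : ∀ {a b c}, le' a c → le' b c → le' a b ∨ le' b a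
  finite : ∀ x, {y | le' y x}.Finite
  vert : ∀ {x y}, H.Adj x y → le' x y ∨ le' y x

namespace GoodOrder

variable {H : SimpleGraph W} {le' : W → W → Prop}

/-- height of a vertex: number of strict predecessors. -/
noncomputable def ht (le' : W → W → Prop) (x : W) : ℕ := {y | le' y x ∧ y ≠ x}.ncard

theorem ht_mono (go : GoodOrder H le') {a b : W} (h : le' a b) : ht le' a ≤ ht le' b := by
  have hfin : {y | le' y b ∧ y ≠ b}.Finite := (go.finite b).subset (fun y hy => hy.1)
  apply Set.ncard_le_ncard _ hfin
  rintro y ⟨h1, h2⟩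
  refine ⟨go.trans h1 h, fun hyb => ?_⟩
  subst hyb
  exact h2 (go.antisymm h1 h)

theorem ht_strict (go : GoodOrder H le') {a b : W} (h : le' a b) (hne : a ≠ b) : ht le' a < ht le' b := by
  have hfin : {y | le' y b ∧ y ≠ b}.Finite := (go.finite b).subset (fun y hy => hy.1)
  have hsub : insert a {y | le' y a ∧ y ≠ a} ⊆ {y | le' y b ∧ y ≠ b} := by
    rintro y (rfl | ⟨h1, h2⟩)
    · exact ⟨h, hne⟩
    · refine ⟨go.trans h1 h, fun hyb => ?_⟩
      subst hyb
      exact h2 (go.antisymm h1 h)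
  have hfin' : {y | le' y a ∧ y ≠ a}.Finite := (go.finite a).subset (fun y hy => hy.1)
  have := Set.ncard_le_ncard hsub hfin
  rwa [Set.ncard_insert_of_notMem (fun h => h.2 rfl) hfin'] at this

theorem eq_of_le_ht (go : GoodOrder H le') {a b : W} (h : le' a b) (hh : ht le' b ≤ ht le' a) : a = b := by
  by_contra hne
  exact absurd hh (not_le.mpr (go.ht_strict h hne))

end GoodOrder

/-- `a` and `b` are joined by a walk avoiding `U` entirely. -/
def OutW (H : SimpleGraph W) (U : Set W) (a b : W) : Prop :=
  ∃ p : H.Walk a b, ∀ z ∈ p.support, z ∉ U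

/-- `a` and `b` are joined by a walk whose interior avoids `U`. -/
def SepW (H : SimpleGraph W) (U : Set W) (a b : W) : Prop :=
  ∃ p : H.Walk a b, ∀ z ∈ p.support, z = a ∨ z = b ∨ z ∉ U

namespace OutW

variable {H : SimpleGraph W} {U : Set W}

theorem refl {a : W} (ha : a ∉ U) : OutW H U a a :=
  ⟨SimpleGraph.Walk.nil, by simpa using ha⟩

theorem symm {a b : W} (h : OutW H U a b) : OutW H U b a := by
  obtain ⟨p, hp⟩ := h
  exact ⟨p.reverse, fun z hz => hp z (by simpa [SimpleGraph.Walk.support_reverse] using hz)⟩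

theorem trans {a b c : W} (h1 : OutW H U a b) (h2 : OutW H U b c) : OutW H U a c := by
  obtain ⟨p, hp⟩ := h1
  obtain ⟨q, hq⟩ := h2
  refine ⟨p.append q, fun z hz => ?_⟩
  rcases (SimpleGraph.Walk.mem_support_append_iff _ _).mp hz with h | h
  · exact hp z h
  · exact hq z h

theorem left_notMem {a b : W} (h : OutW H U a b) : a ∉ U := by
  obtain ⟨p, hp⟩ := h
  exact hp a p.start_mem_support

theorem right_notMem {a b : W} (h : OutW H U a b) : b ∉ U := by
  obtain ⟨p, hp⟩ := h
  exact hp b p.end_mem_support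

theorem of_adj {a b : W} (ha : a ∉ U) (hb : b ∉ U) (h : H.Adj a b) : OutW H U a b := by
  refine ⟨SimpleGraph.Walk.cons h SimpleGraph.Walk.nil, fun z hz => ?_⟩
  simp only [SimpleGraph.Walk.support_cons, SimpleGraph.Walk.support_nil,
    List.mem_cons, List.mem_singleton] at hz
  rcases hz with rfl | rfl | hz
  · exact ha
  · exact hb
  · simp at hz

theorem walk_sub {a b : W} (p : H.Walk a b) (hp : ∀ z ∈ p.support, z ∉ U) :
    ∀ z ∈ p.support, OutW H U a z := by
  induction p with
  | nil =>
    intro z hz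
    rw [SimpleGraph.Walk.support_nil, List.mem_singleton] at hz
    subst hz
    exact refl (hp _ (by simp))
  | @cons a c b h q ih =>
    intro z hz
    have ha : a ∉ U := hp a (by simp)
    have hc : c ∉ U := hp c (by
      simp only [SimpleGraph.Walk.support_cons, List.mem_cons]
      exact Or.inr q.start_mem_support)
    rcases List.mem_cons.mp (by simpa [SimpleGraph.Walk.support_cons] using hz) with rfl | hz'
    · exact refl ha
    · have := ih (fun y hy => hp y (by simp [SimpleGraph.Walk.support_cons, hy])) z hz'
      exact (of_adj ha hc h).trans this

theorem mono {U' : Set W} (hUU : U ⊆ U') {a b : W} (h : OutW H U' a b) : OutW H U a b := by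
  obtain ⟨p, hp⟩ := h
  exact ⟨p, fun z hz h' => hp z hz (hUU h')⟩

end OutW

end Core
section Core2

variable {W : Type u} {H : SimpleGraph W} {le' : W → W → Prop}

open SimpleGraph

/-- every walk has a `le'`-minimum on its support. -/
theorem walk_min (go : GoodOrder H le') {a b : W} (p : H.Walk a b) :
    ∃ μ ∈ p.support, ∀ z ∈ p.support, le' μ z := by
  induction p with
  | nil =>
    refine ⟨_, Walk.start_mem_support _, ?_⟩
    intro z hz
    rw [Walk.support_nil, List.mem_singleton] at hz
    subst hz
    exact go.refl _
  | @cons a c b h q ih =>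
    obtain ⟨μ, hμmem, hμ⟩ := ih
    have hμc : le' μ c := hμ c q.start_mem_support
    rcases go.vert h with hac | hca
    · rcases go.chain hac hμc with haμ | hμa
      · refine ⟨a, by simp [Walk.support_cons], fun z hz => ?_⟩
        rw [Walk.support_cons, List.mem_cons] at hz
        rcases hz with rfl | hz'
        · exact go.refl _
        · exact go.trans haμ (hμ z hz')
      · refine ⟨μ, by rw [Walk.support_cons]; exact List.mem_cons_of_mem _ hμmem,
          fun z hz => ?_⟩
        rw [Walk.support_cons, List.mem_cons] at hz
        rcases hz with rfl | hz'
        · exact hμa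
        · exact hμ z hz'
    · refine ⟨μ, by rw [Walk.support_cons]; exact List.mem_cons_of_mem _ hμmem,
        fun z hz => ?_⟩
      rw [Walk.support_cons, List.mem_cons] at hz
      rcases hz with rfl | hz'
      · exact go.trans hμc hca
      · exact hμ z hz'

/-- a set that is connected by walks inside itself has a minimum. -/
theorem conn_min (go : GoodOrder H le') {S : Set W}
    (hS : ∀ a ∈ S, ∀ b ∈ S, ∃ p : H.Walk a b, ∀ z ∈ p.support, z ∈ S)
    {v : W} (hv : v ∈ S) : ∃ m, m ∈ S ∧ ∀ s ∈ S, le' m s := by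
  classical
  have hfinD : {y | y ∈ S ∧ le' y v}.Finite := (go.finite v).subset (fun y hy => hy.2)
  have hne : {y | y ∈ S ∧ le' y v}.Nonempty := ⟨v, hv, go.refl v⟩
  obtain ⟨m, hm, hmin⟩ := Finset.exists_min_image hfinD.toFinset (GoodOrder.ht le')
    (by simpa [Set.Finite.toFinset_nonempty] using hne)
  rw [Set.Finite.mem_toFinset] at hm
  refine ⟨m, hm.1, ?_⟩
  intro s hs
  obtain ⟨p, hp⟩ := hS m hm.1 s hs
  obtain ⟨μ, hμmem, hμ⟩ := walk_min go p
  have hμS : μ ∈ S := hp μ hμmem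
  have hμm : le' μ m := hμ m p.start_mem_support
  have hμD : μ ∈ {y | y ∈ S ∧ le' y v} := ⟨hμS, go.trans hμm hm.2⟩
  have : GoodOrder.ht le' m ≤ GoodOrder.ht le' μ := by
    have := hmin μ (by rwa [Set.Finite.mem_toFinset]); exact this
  have hμeq : μ = m := go.eq_of_le_ht hμm this
  subst hμeq
  exact hμ s p.end_mem_support

/-- the neighbourhood in `U` of the component (outside `U`) of `v`. -/
def Nb (H : SimpleGraph W) (U : Set W) (v : W) : Set W :=
  {u | u ∈ U ∧ ∃ w, H.Adj u w ∧ OutW H U v w}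

theorem exit_walk {U : Set W} {a b : W} (p : H.Walk a b) (ha : a ∉ U) (hb : b ∈ U) :
    ∃ u, u ∈ U ∧ ∃ w, H.Adj u w ∧ OutW H U a w := by
  induction p with
  | nil => exact absurd hb ha
  | @cons a c b h q ih =>
    by_cases hc : c ∈ U
    · exact ⟨c, hc, a, h.symm, OutW.refl ha⟩
    · obtain ⟨u, hu, w, hadj, how⟩ := ih hc hb
      exact ⟨u, hu, w, hadj, (OutW.of_adj ha hc h).trans how⟩

theorem Nb_nonempty (hH : H.Connected) {U : Set W} {r0 : W} (hr0 : r0 ∈ U)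
    {v : W} (hv : v ∉ U) : (Nb H U v).Nonempty := by
  obtain ⟨p⟩ := hH.preconnected v r0
  obtain ⟨u, hu, w, hadj, how⟩ := exit_walk p hv hr0
  exact ⟨u, hu, w, hadj, how⟩

/-- the component of `v` outside `U` is walk-connected within itself. -/
theorem comp_conn {U : Set W} {v : W} (hv : v ∉ U) :
    ∀ a ∈ {w | OutW H U v w}, ∀ b ∈ {w | OutW H U v w},
      ∃ p : H.Walk a b, ∀ z ∈ p.support, z ∈ {w | OutW H U v w} := by
  intro a ha b hb
  obtain ⟨p, hp⟩ := ha.symm.trans hb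
  exact ⟨p, fun z hz => ha.trans (OutW.walk_sub p hp z hz)⟩

end Core2
section Core3

open SimpleGraph

variable {W : Type u}

/-- A partial normal tree state. -/
structure St (H : SimpleGraph W) (le' : W → W → Prop) (r0 : W) (n : ℕ) where
  U : Set W
  par : W → W
  dep : W → ℕ
  hr0 : r0 ∈ U
  hparr0 : par r0 = r0
  hdep0 : dep r0 = 0
  hmem : ∀ x ∈ U, x ≠ r0 → par x ∈ U ∧ H.Adj (par x) x ∧ dep x = dep (par x) + 1
  hnorm : ∀ a ∈ U, ∀ b ∈ U, SepW H U a b → anc par a b ∨ anc par b a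
  hNfin : ∀ v, v ∉ U → (Nb H U v).Finite
  hcov : ∀ v, v ∉ U → n < GoodOrder.ht le' v

namespace St

variable {H : SimpleGraph W} {le' : W → W → Prop} {r0 : W} {n : ℕ} (S : St H le' r0 n)

theorem par_mem {x : W} (hx : x ∈ S.U) : S.par x ∈ S.U := by
  by_cases hxr : x = r0
  · subst hxr; rw [S.hparr0]; exact S.hr0
  · exact (S.hmem x hx hxr).1

theorem iter_mem {x : W} (hx : x ∈ S.U) (k : ℕ) : S.par^[k] x ∈ S.U := by
  induction k with
  | zero => exact hx
  | succ k ih => rw [Function.iterate_succ_apply']; exact S.par_mem ih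

theorem dep_iter {x : W} (hx : x ∈ S.U) (k : ℕ) :
    S.par^[k] x = x ∨ S.dep (S.par^[k] x) < S.dep x := by
  induction k with
  | zero => exact Or.inl rfl
  | succ k ih =>
    rw [Function.iterate_succ_apply']
    rcases ih with heq | hlt
    · rw [heq]
      by_cases hxr : x = r0
      · subst hxr; rw [S.hparr0]; exact Or.inl rfl
      · right
        have := (S.hmem x hx hxr).2.2
        omega
    · by_cases hyr : S.par^[k] x = r0
      · right
        rw [hyr, S.hparr0]
        rw [hyr] at hlt
        exact hlt
      · right
        have hy : S.par^[k] x ∈ S.U := S.iter_mem hx k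
        have := (S.hmem _ hy hyr).2.2
        omega

theorem dep_anc {a b : W} (hb : b ∈ S.U) (h : anc S.par a b) :
    a = b ∨ S.dep a < S.dep b := by
  obtain ⟨k, hk⟩ := h
  rcases S.dep_iter hb k with heq | hlt
  · left; rw [← hk, heq]
  · right; rwa [hk] at hlt

theorem anc_antisymm {a b : W} (hb : b ∈ S.U) (h1 : anc S.par a b) (h2 : anc S.par b a) :
    a = b := by
  have ha : a ∈ S.U := by obtain ⟨k, hk⟩ := h1; rw [← hk]; exact S.iter_mem hb k
  rcases S.dep_anc hb h1 with heq | hlt1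
  · exact heq
  · rcases S.dep_anc ha h2 with heq | hlt2
    · exact heq.symm
    · omega

/-- the neighbourhood of a component is a chain, hence has a maximum. -/
theorem Nb_chain {v : W} (hv : v ∉ S.U) :
    ∀ u1 ∈ Nb H S.U v, ∀ u2 ∈ Nb H S.U v, anc S.par u1 u2 ∨ anc S.par u2 u1 := by
  rintro u1 ⟨hu1, w1, ha1, ho1⟩ u2 ⟨hu2, w2, ha2, ho2⟩
  apply S.hnorm u1 hu1 u2 hu2
  obtain ⟨q, hq⟩ := ho1.symm.trans ho2
  refine ⟨Walk.cons ha1 (q.concat ha2.symm), ?_⟩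
  intro z hz
  rw [Walk.support_cons, List.mem_cons] at hz
  rcases hz with rfl | hz
  · exact Or.inl rfl
  · rw [Walk.support_concat, List.mem_append, List.mem_singleton] at hz
    rcases hz with hz | rfl
    · exact Or.inr (Or.inr (hq z hz))
    · exact Or.inr (Or.inl rfl)

theorem Nb_max (hH : H.Connected) {v : W} (hv : v ∉ S.U) :
    ∃ u ∈ Nb H S.U v, ∀ u' ∈ Nb H S.U v, anc S.par u' u := by
  classical
  have hfin := S.hNfin v hv
  have hne := Nb_nonempty hH S.hr0 hv
  obtain ⟨u, hu, hmax⟩ := Finset.exists_max_image hfin.toFinset S.dep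
    (by simpa [Set.Finite.toFinset_nonempty] using hne)
  rw [Set.Finite.mem_toFinset] at hu
  refine ⟨u, hu, ?_⟩
  intro u' hu'
  rcases S.Nb_chain hv u' hu' u hu with h | h
  · exact h
  · have hle := hmax u' (by rwa [Set.Finite.mem_toFinset])
    rcases S.dep_anc (hu'.1) h with heq | hlt
    · rw [heq]; exact anc_refl _ _
    · omega

theorem anc_lift {par' : W → W} (hagree : ∀ x ∈ S.U, par' x = S.par x) {a b : W}
    (hb : b ∈ S.U) (h : anc S.par a b) : anc par' a b := by
  obtain ⟨k, hk⟩ := h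
  refine ⟨k, ?_⟩
  rw [← hk]
  clear hk
  induction k with
  | zero => rfl
  | succ k ih =>
    rw [Function.iterate_succ_apply', Function.iterate_succ_apply', ih]
    exact hagree _ (S.iter_mem hb k)

end St

end Core3
section Core4

open SimpleGraph

variable {W : Type u} {H : SimpleGraph W} {le' : W → W → Prop} {r0 : W} {n : ℕ}

/-- decomposition of a walk whose interior avoids `U'`. -/
theorem sep_cases {U' : Set W} {a b : W} (p : H.Walk a b) (hp : p.IsPath)
    (hcond : ∀ z ∈ p.support, z = a ∨ z = b ∨ z ∉ U') (hab : a ≠ b) :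
    H.Adj a b ∨ ∃ w1 wk, ∃ mw : H.Walk w1 wk, H.Adj a w1 ∧ H.Adj wk b ∧
      ∀ z ∈ mw.support, z ∉ U' := by
  induction p with
  | nil => exact absurd rfl hab
  | @cons a c b h1 q1 ih =>
    have haq : a ∉ q1.support := by
      have := hp.support_nodup
      rw [Walk.support_cons] at this
      exact (List.nodup_cons.mp this).1
    by_cases hcb : c = b
    · subst hcb; exact Or.inl h1
    · have hcmem : c ∈ (Walk.cons h1 q1).support := by
        rw [Walk.support_cons]
        exact List.mem_cons_of_mem _ q1.start_mem_support
      have hca : c ≠ a := fun h => haq (h ▸ q1.start_mem_support)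
      have hcU : c ∉ U' := by
        rcases hcond c hcmem with h | h | h
        · exact absurd h hca
        · exact absurd h hcb
        · exact h
      have hcond' : ∀ z ∈ q1.support, z = c ∨ z = b ∨ z ∉ U' := by
        intro z hz
        have hzmem : z ∈ (Walk.cons h1 q1).support := by
          rw [Walk.support_cons]
          exact List.mem_cons_of_mem _ hz
        rcases hcond z hzmem with h | h | h
        · exact absurd (h ▸ hz) haq
        · exact Or.inr (Or.inl h)
        · exact Or.inr (Or.inr h)
      rcases ih hp.of_cons hcond' hcb with hadj | ⟨w1', wk', mw', h1', h2', h3'⟩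
      · refine Or.inr ⟨c, c, Walk.nil, h1, hadj, ?_⟩
        intro z hz
        rw [Walk.support_nil, List.mem_singleton] at hz
        subst hz; exact hcU
      · refine Or.inr ⟨c, wk', Walk.cons h1' mw', h1, h2', ?_⟩
        intro z hz
        rw [Walk.support_cons, List.mem_cons] at hz
        rcases hz with rfl | hz
        · exact hcU
        · exact h3' z hz

/-- existence of an attachment path for a component minimum `m`. -/
theorem exists_attach (go : GoodOrder H le') (hH : H.Connected) (S : St H le' r0 n)
    {m : W} (hm : m ∉ S.U) (hmin : ∀ s, OutW H S.U m s → le' m s) :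
    ∃ u L, u ∈ S.U ∧ (∀ u' ∈ Nb H S.U m, anc S.par u' u) ∧
      List.Chain' H.Adj (u :: L) ∧ (u :: L).Nodup ∧ m ∈ L ∧
      ∀ z ∈ L, z ∉ S.U ∧ OutW H S.U m z := by
  classical
  obtain ⟨u, hu, hmax⟩ := S.Nb_max hH hm
  obtain ⟨huU, w, hadj, how⟩ := hu
  obtain ⟨q0, hq0⟩ := how.symm
  set full : H.Walk u m := Walk.cons hadj q0 with hfull
  set p : H.Walk u m := (full.toPath : H.Walk u m) with hpdef
  have hppath : p.IsPath := full.toPath.2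
  have hpsub : ∀ z ∈ p.support, z ∈ full.support := fun z hz =>
    Walk.support_toPath_subset full hz
  refine ⟨u, p.support.tail, huU, hmax, ?_, ?_, ?_, ?_⟩
  · have := p.isChain_adj_support
    rwa [p.support_eq_cons] at this
  · have := hppath.support_nodup
    rwa [p.support_eq_cons] at this
  · have hm_mem : m ∈ p.support := p.end_mem_support
    rw [p.support_eq_cons, List.mem_cons] at hm_mem
    rcases hm_mem with rfl | h
    · exact absurd huU hm
    · exact h
  · intro z hz
    have hzmem : z ∈ p.support := List.mem_of_mem_tail hz
    have hzu : z ≠ u := by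
      intro h
      subst h
      have := hppath.support_nodup
      rw [p.support_eq_cons] at this
      exact (List.nodup_cons.mp this).1 hz
    have hzfull := hpsub z hzmem
    rw [hfull, Walk.support_cons, List.mem_cons] at hzfull
    rcases hzfull with rfl | hzq
    · exact absurd rfl hzu
    · have hzU : z ∉ S.U := hq0 z hzq
      have : OutW H S.U w z := OutW.walk_sub q0 hq0 z hzq
      exact ⟨hzU, how.trans this⟩

/-- set of minima to be attached at stage `n+1`. -/
def Mset (le' : W → W → Prop) (S : St H le' r0 n) : Set W :=
  {m | m ∉ S.U ∧ (∀ s, OutW H S.U m s → le' m s) ∧ GoodOrder.ht le' m = n + 1}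

noncomputable def attP (go : GoodOrder H le') (hH : H.Connected) (S : St H le' r0 n)
    (m : W) : W × List W :=
  if h : m ∈ Mset le' S then
    ⟨(exists_attach go hH S h.1 h.2.1).choose,
     (exists_attach go hH S h.1 h.2.1).choose_spec.choose⟩
  else ⟨m, []⟩

theorem attP_spec (go : GoodOrder H le') (hH : H.Connected) (S : St H le' r0 n)
    {m : W} (h : m ∈ Mset le' S) :
    (attP go hH S m).1 ∈ S.U ∧
    (∀ u' ∈ Nb H S.U m, anc S.par u' (attP go hH S m).1) ∧
    List.Chain' H.Adj ((attP go hH S m).1 :: (attP go hH S m).2) ∧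
    ((attP go hH S m).1 :: (attP go hH S m).2).Nodup ∧ m ∈ (attP go hH S m).2 ∧
    ∀ z ∈ (attP go hH S m).2, z ∉ S.U ∧ OutW H S.U m z := by
  rw [attP, dif_pos h]
  exact (exists_attach go hH S h.1 h.2.1).choose_spec.choose_spec

theorem att_unique (go : GoodOrder H le') (hH : H.Connected) (S : St H le' r0 n)
    {m m' x : W} (hm : m ∈ Mset le' S) (hm' : m' ∈ Mset le' S)
    (hx : x ∈ (attP go hH S m).2) (hx' : x ∈ (attP go hH S m').2) : m = m' := by
  have h1 := ((attP_spec go hH S hm).2.2.2.2.2 x hx).2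
  have h2 := ((attP_spec go hH S hm').2.2.2.2.2 x hx').2
  have : OutW H S.U m m' := h1.trans h2.symm
  exact go.antisymm (hm.2.1 m' this) (hm'.2.1 m this.symm)

end Core4
section Core5

open SimpleGraph

variable {W : Type u} {H : SimpleGraph W} {le' : W → W → Prop} {r0 : W} {n : ℕ}

variable (go : GoodOrder H le') (hH : H.Connected)

theorem comp_eq_of_out (go' : GoodOrder H le') (S : St H le' r0 n) {m m' : W} (hm : m ∈ Mset le' S)
    (hm' : m' ∈ Mset le' S) (h : OutW H S.U m m') : m = m' :=
  go'.antisymm (hm.2.1 m' h) (hm'.2.1 m h.symm)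

/-- new vertex set after one stage. -/
def newU (S : St H le' r0 n) : Set W :=
  S.U ∪ {x | ∃ m, m ∈ Mset le' S ∧ x ∈ (attP go hH S m).2}

open scoped Classical in
/-- new parent function. -/
noncomputable def newPar (S : St H le' r0 n) (x : W) : W :=
  if x ∈ S.U then S.par x
  else if h : ∃ m, m ∈ Mset le' S ∧ x ∈ (attP go hH S m).2 then
    prevL ((attP go hH S h.choose).1 :: (attP go hH S h.choose).2) x
  else x

open scoped Classical in
/-- new depth function. -/
noncomputable def newDep (S : St H le' r0 n) (x : W) : ℕ :=
  if x ∈ S.U then S.dep x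
  else if h : ∃ m, m ∈ Mset le' S ∧ x ∈ (attP go hH S m).2 then
    S.dep (attP go hH S h.choose).1 +
      ((attP go hH S h.choose).1 :: (attP go hH S h.choose).2).idxOf x
  else 0

theorem newPar_old (S : St H le' r0 n) {x : W} (hx : x ∈ S.U) :
    newPar go hH S x = S.par x := if_pos hx

theorem newDep_old (S : St H le' r0 n) {x : W} (hx : x ∈ S.U) :
    newDep go hH S x = S.dep x := if_pos hx

theorem newPar_eval (S : St H le' r0 n) {m x : W} (hm : m ∈ Mset le' S)
    (hx : x ∈ (attP go hH S m).2) :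
    newPar go hH S x = prevL ((attP go hH S m).1 :: (attP go hH S m).2) x := by
  have hxU : x ∉ S.U := ((attP_spec go hH S hm).2.2.2.2.2 x hx).1
  have hex : ∃ m', m' ∈ Mset le' S ∧ x ∈ (attP go hH S m').2 := ⟨m, hm, hx⟩
  rw [newPar, if_neg hxU, dif_pos hex]
  have : hex.choose = m :=
    att_unique go hH S hex.choose_spec.1 hm hex.choose_spec.2 hx
  rw [this]

theorem newDep_eval (S : St H le' r0 n) {m x : W} (hm : m ∈ Mset le' S)
    (hx : x ∈ (attP go hH S m).2) :
    newDep go hH S x =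
      S.dep (attP go hH S m).1 +
        ((attP go hH S m).1 :: (attP go hH S m).2).idxOf x := by
  have hxU : x ∉ S.U := ((attP_spec go hH S hm).2.2.2.2.2 x hx).1
  have hex : ∃ m', m' ∈ Mset le' S ∧ x ∈ (attP go hH S m').2 := ⟨m, hm, hx⟩
  rw [newDep, if_neg hxU, dif_pos hex]
  have : hex.choose = m :=
    att_unique go hH S hex.choose_spec.1 hm hex.choose_spec.2 hx
  rw [this]

theorem att_anc_u (S : St H le' r0 n) {m : W} (hm : m ∈ Mset le' S) :
    ∀ x ∈ (attP go hH S m).2, anc (newPar go hH S) (attP go hH S m).1 x := by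
  classical
  set u := (attP go hH S m).1 with hu
  set L := (attP go hH S m).2 with hL
  have spec := attP_spec go hH S hm
  have hchain : List.Chain' H.Adj (u :: L) := spec.2.2.1
  have hnodup : (u :: L).Nodup := spec.2.2.2.1
  intro x hx
  generalize hidx : (u :: L).idxOf x = k
  induction k using Nat.strong_induction_on generalizing x with
  | _ k ih =>
    have heval : newPar go hH S x = prevL (u :: L) x := newPar_eval go hH S hm hx
    have hxt : x ∈ (u :: L).tail := hx
    have hpm : prevL (u :: L) x ∈ (u :: L) := prevL_mem hxt
    have hpidx : (u :: L).idxOf (prevL (u :: L) x) + 1 = (u :: L).idxOf x :=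
      prevL_idx hnodup hxt
    have hstep : anc (newPar go hH S) (prevL (u :: L) x) x := ⟨1, by
      rw [Function.iterate_one, heval]⟩
    rcases List.mem_cons.mp hpm with hpu | hpL
    · rw [← hpu]; exact hstep
    · have : anc (newPar go hH S) u (prevL (u :: L) x) :=
        ih ((u :: L).idxOf (prevL (u :: L) x)) (by omega) _ hpL rfl
      exact anc_trans this hstep

theorem att_pair (S : St H le' r0 n) {m : W} (hm : m ∈ Mset le' S) :
    ∀ x ∈ (attP go hH S m).2, ∀ y ∈ (attP go hH S m).2,
      ((attP go hH S m).1 :: (attP go hH S m).2).idxOf x ≤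
        ((attP go hH S m).1 :: (attP go hH S m).2).idxOf y →
      anc (newPar go hH S) x y := by
  classical
  set u := (attP go hH S m).1 with hu
  set L := (attP go hH S m).2 with hL
  have spec := attP_spec go hH S hm
  have hnodup : (u :: L).Nodup := spec.2.2.2.1
  have huL : u ∉ L := (List.nodup_cons.mp hnodup).1
  intro x hx y hy
  generalize hidx : (u :: L).idxOf y = k
  induction k using Nat.strong_induction_on generalizing y with
  | _ k ih =>
    intro hle
    subst hidx
    by_cases heq : (u :: L).idxOf x = (u :: L).idxOf y
    · have : x = y := by
        have h1 : x ∈ (u :: L) := List.mem_cons_of_mem _ hx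
        have h2 : y ∈ (u :: L) := List.mem_cons_of_mem _ hy
        rw [← List.idxOf_get (List.idxOf_lt_length_iff.mpr h1),
            ← List.idxOf_get (List.idxOf_lt_length_iff.mpr h2)]
        exact congrArg _ (Fin.ext heq)
      rw [this]; exact anc_refl _ _
    · have hlt : (u :: L).idxOf x < (u :: L).idxOf y := lt_of_le_of_ne hle heq
      have heval : newPar go hH S y = prevL (u :: L) y := newPar_eval go hH S hm hy
      have hyt : y ∈ (u :: L).tail := hy
      have hpm : prevL (u :: L) y ∈ (u :: L) := prevL_mem hyt
      have hpidx : (u :: L).idxOf (prevL (u :: L) y) + 1 = (u :: L).idxOf y :=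
        prevL_idx hnodup hyt
      have hstep : anc (newPar go hH S) (prevL (u :: L) y) y := ⟨1, by
        rw [Function.iterate_one, heval]⟩
      rcases List.mem_cons.mp hpm with hpu | hpL
      · exfalso
        have h0 : (u :: L).idxOf (prevL (u :: L) y) = 0 := by
          rw [hpu, List.idxOf_cons_self]
        have hx1 : (u :: L).idxOf x ≠ 0 := by
          intro h
          have hxne : u ≠ x := fun hh => huL (hh ▸ hx)
          rw [List.idxOf_cons_ne _ hxne] at h
          exact Nat.succ_ne_zero _ h
        omega
      · have : anc (newPar go hH S) x (prevL (u :: L) y) :=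
          ih ((u :: L).idxOf (prevL (u :: L) y)) (by omega) _ hpL rfl (by omega)
        exact anc_trans this hstep

end Core5
section Core6

open SimpleGraph

variable {W : Type u} {H : SimpleGraph W} {le' : W → W → Prop} {r0 : W} {n : ℕ}

theorem step (go : GoodOrder H le') (hH : H.Connected) (S : St H le' r0 n) :
    ∃ S' : St H le' r0 (n + 1), S.U ⊆ S'.U ∧ (∀ x ∈ S.U, S'.par x = S.par x) ∧
      (∀ x ∈ S.U, S'.dep x = S.dep x) := by
  classical
  have hUsub : S.U ⊆ (newU go hH S) := fun x hx => Or.inl hx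
  -- classification of members of (newU go hH S)
  have hclass : ∀ x ∈ (newU go hH S), x ∈ S.U ∨ ∃ m, m ∈ Mset le' S ∧ x ∈ (attP go hH S m).2 := by
    intro x hx
    exact hx
  -- new vertices are not in S.U
  have hnew_not : ∀ {m x : W}, m ∈ Mset le' S → x ∈ (attP go hH S m).2 → x ∉ S.U :=
    fun hm hx => ((attP_spec go hH S hm).2.2.2.2.2 _ hx).1
  have hnew_out : ∀ {m x : W}, m ∈ Mset le' S → x ∈ (attP go hH S m).2 →
      OutW H S.U m x :=
    fun hm hx => ((attP_spec go hH S hm).2.2.2.2.2 _ hx).2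
  -- key claim A
  have claimA : ∀ {c m x : W}, c ∈ S.U → m ∈ Mset le' S → x ∈ (attP go hH S m).2 →
      (∃ w, H.Adj c w ∧ OutW H S.U m w) → anc (newPar go hH S) c x := by
    intro c m x hc hm hx hw
    have hcNb : c ∈ Nb H S.U m := ⟨hc, hw⟩
    have h1 : anc S.par c (attP go hH S m).1 := (attP_spec go hH S hm).2.1 c hcNb
    have h2 : anc (newPar go hH S) c (attP go hH S m).1 := by
      have hagree : ∀ y ∈ S.U, (newPar go hH S) y = S.par y := fun y hy => newPar_old go hH S hy
      exact S.anc_lift hagree (attP_spec go hH S hm).1 h1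
    exact anc_trans h2 (att_anc_u go hH S hm x hx)
  -- key claim B
  have claimB : ∀ {m m' x y : W}, m ∈ Mset le' S → m' ∈ Mset le' S →
      x ∈ (attP go hH S m).2 → y ∈ (attP go hH S m').2 → OutW H S.U x y →
      anc (newPar go hH S) x y ∨ anc (newPar go hH S) y x := by
    intro m m' x y hm hm' hx hy hxy
    have hmm' : m = m' := comp_eq_of_out go S hm hm'
      (((hnew_out hm hx).trans hxy).trans (hnew_out hm' hy).symm)
    subst hmm'
    rcases le_total (((attP go hH S m).1 :: (attP go hH S m).2).idxOf x)
        (((attP go hH S m).1 :: (attP go hH S m).2).idxOf y) with h | h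
    · exact Or.inl (att_pair go hH S hm x hx y hy h)
    · exact Or.inr (att_pair go hH S hm y hy x hx h)
  -- lifting of old hnorm
  have hlift : ∀ {a b : W}, a ∈ S.U → b ∈ S.U → SepW H S.U a b →
      anc (newPar go hH S) a b ∨ anc (newPar go hH S) b a := by
    intro a b ha hb hsep
    have hagree : ∀ y ∈ S.U, (newPar go hH S) y = S.par y := fun y hy => newPar_old go hH S hy
    rcases S.hnorm a ha b hb hsep with h | h
    · exact Or.inl (S.anc_lift hagree hb h)
    · exact Or.inr (S.anc_lift hagree ha h)
  refine ⟨⟨(newU go hH S), (newPar go hH S), (newDep go hH S), hUsub S.hr0, ?_, ?_, ?_, ?_, ?_, ?_⟩,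
    hUsub, fun x hx => newPar_old go hH S hx, fun x hx => newDep_old go hH S hx⟩
  · rw [newPar_old go hH S S.hr0, S.hparr0]
  · rw [newDep_old go hH S S.hr0, S.hdep0]
  · -- hmem
    intro x hx hxr
    rcases hclass x hx with hxU | ⟨m, hm, hxm⟩
    · obtain ⟨h1, h2, h3⟩ := S.hmem x hxU hxr
      rw [newPar_old go hH S hxU, newDep_old go hH S hxU, newDep_old go hH S h1]
      exact ⟨hUsub h1, h2, h3⟩
    · set u := (attP go hH S m).1 with hu
      set L := (attP go hH S m).2 with hL
      have spec := attP_spec go hH S hm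
      have hxt : x ∈ (u :: L).tail := hxm
      have heval : (newPar go hH S) x = prevL (u :: L) x := newPar_eval go hH S hm hxm
      have hadj : H.Adj ((newPar go hH S) x) x := by
        rw [heval]; exact prevL_adj spec.2.2.1 hxt
      have hpm : prevL (u :: L) x ∈ (u :: L) := prevL_mem hxt
      have hpidx : (u :: L).idxOf (prevL (u :: L) x) + 1 = (u :: L).idxOf x :=
        prevL_idx spec.2.2.2.1 hxt
      have hdx : (newDep go hH S) x = S.dep u + (u :: L).idxOf x := newDep_eval go hH S hm hxm
      rcases List.mem_cons.mp hpm with hpu | hpL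
      · refine ⟨by rw [heval, hpu]; exact hUsub spec.1, hadj, ?_⟩
        rw [heval, hpu]
        have hdu : (newDep go hH S) u = S.dep u := newDep_old go hH S spec.1
        rw [hpu] at hpidx
        have h0 : (u :: L).idxOf u = 0 := List.idxOf_cons_self
        rw [hdu]
        omega
      · refine ⟨by rw [heval]; exact Or.inr ⟨m, hm, hpL⟩, hadj, ?_⟩
        rw [heval]
        have hdp : (newDep go hH S) (prevL (u :: L) x) =
            S.dep u + (u :: L).idxOf (prevL (u :: L) x) := newDep_eval go hH S hm hpL
        rw [hdp]
        omega
  · -- hnorm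
    intro a ha b hb hsep
    by_cases hab : a = b
    · subst hab; exact Or.inl (anc_refl _ _)
    obtain ⟨p0, hp0⟩ := hsep
    have hp0' : ∀ z ∈ (p0.toPath : H.Walk a b).support, z = a ∨ z = b ∨ z ∉ (newU go hH S) :=
      fun z hz => hp0 z (Walk.support_toPath_subset p0 hz)
    rcases sep_cases (p0.toPath : H.Walk a b) p0.toPath.2 hp0' hab with
      hadj | ⟨w1, wk, mw, hadj1, hadjk, hmw⟩
    · -- edge case
      rcases hclass a ha with haU | ⟨m, hm, ham⟩ <;> rcases hclass b hb with hbU | ⟨m', hm', hbm⟩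
      · apply hlift haU hbU
        refine ⟨Walk.cons hadj Walk.nil, ?_⟩
        intro z hz
        rw [Walk.support_cons, Walk.support_nil, List.mem_cons, List.mem_singleton] at hz
        rcases hz with rfl | rfl
        · exact Or.inl rfl
        · exact Or.inr (Or.inl rfl)
      · exact Or.inl (claimA haU hm' hbm ⟨b, hadj, hnew_out hm' hbm⟩)
      · exact Or.inr (claimA hbU hm ham ⟨a, hadj.symm, hnew_out hm ham⟩)
      · exact claimB hm hm' ham hbm
          (OutW.of_adj (hnew_not hm ham) (hnew_not hm' hbm) hadj)
    · -- interior case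
      have hmwU : ∀ z ∈ mw.support, z ∉ S.U := fun z hz h => hmw z hz (hUsub h)
      have hw1 : w1 ∉ S.U := hmwU w1 mw.start_mem_support
      have hwk : wk ∉ S.U := hmwU wk mw.end_mem_support
      have hout : OutW H S.U w1 wk := ⟨mw, hmwU⟩
      rcases hclass a ha with haU | ⟨m, hm, ham⟩ <;> rcases hclass b hb with hbU | ⟨m', hm', hbm⟩
      · apply hlift haU hbU
        refine ⟨Walk.cons hadj1 (mw.concat hadjk), ?_⟩
        intro z hz
        rw [Walk.support_cons, List.mem_cons] at hz
        rcases hz with rfl | hz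
        · exact Or.inl rfl
        · rw [Walk.support_concat, List.mem_append,
            List.mem_singleton] at hz
          rcases hz with hz | rfl
          · exact Or.inr (Or.inr (hmwU z hz))
          · exact Or.inr (Or.inl rfl)
      · -- a ∈ U, b new
        have hb' : b ∉ S.U := hnew_not hm' hbm
        have h1 : OutW H S.U b wk := OutW.of_adj hb' hwk hadjk.symm
        have h2 : OutW H S.U m' w1 :=
          ((hnew_out hm' hbm).trans h1).trans hout.symm
        exact Or.inl (claimA haU hm' hbm ⟨w1, hadj1, h2⟩)
      · -- a new, b ∈ U
        have ha' : a ∉ S.U := hnew_not hm ham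
        have h1 : OutW H S.U a w1 := OutW.of_adj ha' hw1 hadj1
        have h2 : OutW H S.U m wk := ((hnew_out hm ham).trans h1).trans hout
        exact Or.inr (claimA hbU hm ham ⟨wk, hadjk.symm, h2⟩)
      · -- both new
        have ha' : a ∉ S.U := hnew_not hm ham
        have hb' : b ∉ S.U := hnew_not hm' hbm
        have h1 : OutW H S.U a w1 := OutW.of_adj ha' hw1 hadj1
        have h2 : OutW H S.U wk b := OutW.of_adj hwk hb' hadjk
        exact claimB hm hm' ham hbm ((h1.trans hout).trans h2)
  · -- hNfin
    intro v hv
    have hvU : v ∉ S.U := fun h => hv (hUsub h)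
    have hsub : Nb H (newU go hH S) v ⊆ Nb H S.U v ∪
        {x | ∃ m, m ∈ Mset le' S ∧ OutW H S.U m v ∧ x ∈ (attP go hH S m).2} := by
      rintro u' ⟨hu'U, w, hadj, how⟩
      have how' : OutW H S.U v w := how.mono hUsub
      rcases hclass u' hu'U with h | ⟨m, hm, hum⟩
      · exact Or.inl ⟨h, w, hadj, how'⟩
      · refine Or.inr ⟨m, hm, ?_, hum⟩
        have h1 : OutW H S.U u' w :=
          OutW.of_adj (hnew_not hm hum) how'.right_notMem hadj
        exact ((hnew_out hm hum).trans h1).trans how'.symm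
    apply Set.Finite.subset _ hsub
    apply Set.Finite.union (S.hNfin v hvU)
    by_cases hex : ∃ m0, m0 ∈ Mset le' S ∧ OutW H S.U m0 v
    · obtain ⟨m0, hm0, hout0⟩ := hex
      apply Set.Finite.subset (List.finite_toSet (attP go hH S m0).2)
      rintro x ⟨m, hm, hout, hx⟩
      have : m = m0 := comp_eq_of_out go S hm hm0 (hout.trans hout0.symm)
      subst this
      exact hx
    · convert Set.finite_empty
      ext x
      simp only [Set.mem_setOf_eq, Set.mem_empty_iff_false, iff_false]
      rintro ⟨m, hm, hout, hx⟩
      exact hex ⟨m, hm, hout⟩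
  · -- hcov
    intro v hv
    by_contra hle
    push_neg at hle
    have hvU : v ∉ S.U := fun h => hv (hUsub h)
    obtain ⟨m, hmC, hmin'⟩ := conn_min go (comp_conn hvU) (OutW.refl hvU)
    have hmU : m ∉ S.U := hmC.right_notMem
    have hmv : le' m v := hmin' v (OutW.refl hvU)
    have h1 : n < GoodOrder.ht le' m := S.hcov m hmU
    have h2 : GoodOrder.ht le' m ≤ GoodOrder.ht le' v := go.ht_mono hmv
    have hhtm : GoodOrder.ht le' m = n + 1 := by omega
    have hhtv : GoodOrder.ht le' v ≤ GoodOrder.ht le' m := by omega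
    have hveq : m = v := go.eq_of_le_ht hmv hhtv
    have hmM : m ∈ Mset le' S := by
      refine ⟨hmU, ?_, hhtm⟩
      intro s hs
      exact hmin' s (hmC.trans hs)
    have : m ∈ (attP go hH S m).2 := (attP_spec go hH S hmM).2.2.2.2.1
    exact hv (hveq ▸ (Or.inr ⟨m, hmM, this⟩))

end Core6
section Core7

open SimpleGraph

variable {W : Type u} {H : SimpleGraph W} {le' : W → W → Prop} {r0 : W}

/-- base state. -/
noncomputable def baseSt (go : GoodOrder H le') (hr0min : ∀ x, le' r0 x) :
    St H le' r0 0 where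
  U := {r0}
  par := id
  dep := fun _ => 0
  hr0 := rfl
  hparr0 := rfl
  hdep0 := rfl
  hmem := by
    intro x hx hxr
    exact absurd hx hxr
  hnorm := by
    intro a ha b hb _
    rw [Set.mem_singleton_iff] at ha hb
    subst ha; subst hb
    exact Or.inl (anc_refl _ _)
  hNfin := by
    intro v _
    apply Set.Finite.subset (Set.finite_singleton r0)
    rintro u ⟨hu, _⟩
    exact hu
  hcov := by
    intro v hv
    rw [Set.mem_singleton_iff] at hv
    have hfin : {y | le' y v ∧ y ≠ v}.Finite := (go.finite v).subset (fun y hy => hy.1)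
    have hne : {y | le' y v ∧ y ≠ v}.Nonempty := ⟨r0, hr0min v, fun h => hv h.symm⟩
    rw [GoodOrder.ht]
    exact (Set.ncard_pos hfin).mpr hne

noncomputable def stages (go : GoodOrder H le') (hH : H.Connected) (hr0min : ∀ x, le' r0 x) :
    ∀ n : ℕ, St H le' r0 n
  | 0 => baseSt go hr0min
  | (n + 1) => (step go hH (stages go hH hr0min n)).choose

variable (go : GoodOrder H le') (hH : H.Connected) (hr0min : ∀ x, le' r0 x)

theorem stages_succ (n : ℕ) :
    (stages go hH hr0min n).U ⊆ (stages go hH hr0min (n + 1)).U ∧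
    (∀ x ∈ (stages go hH hr0min n).U,
      (stages go hH hr0min (n + 1)).par x = (stages go hH hr0min n).par x) ∧
    (∀ x ∈ (stages go hH hr0min n).U,
      (stages go hH hr0min (n + 1)).dep x = (stages go hH hr0min n).dep x) := by
  exact (step go hH (stages go hH hr0min n)).choose_spec

theorem stages_mono {m n : ℕ} (h : m ≤ n) :
    (stages go hH hr0min m).U ⊆ (stages go hH hr0min n).U ∧
    (∀ x ∈ (stages go hH hr0min m).U,
      (stages go hH hr0min n).par x = (stages go hH hr0min m).par x) ∧
    (∀ x ∈ (stages go hH hr0min m).U,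
      (stages go hH hr0min n).dep x = (stages go hH hr0min m).dep x) := by
  induction n, h using Nat.le_induction with
  | base => exact ⟨le_refl _, fun x _ => rfl, fun x _ => rfl⟩
  | succ n hmn ih =>
    obtain ⟨h1, h2, h3⟩ := ih
    obtain ⟨g1, g2, g3⟩ := stages_succ go hH hr0min n
    refine ⟨h1.trans g1, fun x hx => ?_, fun x hx => ?_⟩
    · rw [g2 x (h1 hx), h2 x hx]
    · rw [g3 x (h1 hx), h3 x hx]

theorem mem_stage_ht (x : W) : x ∈ (stages go hH hr0min (GoodOrder.ht le' x)).U := by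
  by_contra h
  exact absurd ((stages go hH hr0min (GoodOrder.ht le' x)).hcov x h) (lt_irrefl _)

/-- the limit parent and depth functions. -/
noncomputable def parF (x : W) : W := (stages go hH hr0min (GoodOrder.ht le' x)).par x

noncomputable def depF (x : W) : ℕ := (stages go hH hr0min (GoodOrder.ht le' x)).dep x

theorem parF_agree {n : ℕ} {x : W} (hx : x ∈ (stages go hH hr0min n).U) :
    parF go hH hr0min x = (stages go hH hr0min n).par x := by
  rcases le_total n (GoodOrder.ht le' x) with h | h
  · rw [parF, (stages_mono go hH hr0min h).2.1 x hx]
  · rw [parF, ← (stages_mono go hH hr0min h).2.1 x (mem_stage_ht go hH hr0min x)]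

theorem depF_agree {n : ℕ} {x : W} (hx : x ∈ (stages go hH hr0min n).U) :
    depF go hH hr0min x = (stages go hH hr0min n).dep x := by
  rcases le_total n (GoodOrder.ht le' x) with h | h
  · rw [depF, (stages_mono go hH hr0min h).2.2 x hx]
  · rw [depF, ← (stages_mono go hH hr0min h).2.2 x (mem_stage_ht go hH hr0min x)]

theorem anc_parF {n : ℕ} {a b : W} (hb : b ∈ (stages go hH hr0min n).U)
    (h : anc (stages go hH hr0min n).par a b) : anc (parF go hH hr0min) a b := by
  obtain ⟨k, hk⟩ := h
  refine ⟨k, ?_⟩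
  rw [← hk]
  clear hk
  induction k with
  | zero => rfl
  | succ k ih =>
    rw [Function.iterate_succ_apply', Function.iterate_succ_apply', ih]
    exact parF_agree go hH hr0min ((stages go hH hr0min n).iter_mem hb k)

/-- all the data needed to build the normal spanning tree. -/
theorem core_construction (go : GoodOrder H le') (hH : H.Connected)
    (hr0min : ∀ x, le' r0 x) :
    ∃ (par : W → W) (dep : W → ℕ), par r0 = r0 ∧ dep r0 = 0 ∧
      (∀ x, x ≠ r0 → H.Adj (par x) x ∧ dep x = dep (par x) + 1) ∧
      (∀ x y, H.Adj x y → anc par x y ∨ anc par y x) := by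
  refine ⟨parF go hH hr0min, depF go hH hr0min, ?_, ?_, ?_, ?_⟩
  · rw [parF, (stages go hH hr0min _).hparr0]
  · rw [depF, (stages go hH hr0min _).hdep0]
  · intro x hx
    set n := GoodOrder.ht le' x with hn
    have hxU : x ∈ (stages go hH hr0min n).U := mem_stage_ht go hH hr0min x
    obtain ⟨h1, h2, h3⟩ := (stages go hH hr0min n).hmem x hxU hx
    refine ⟨h2, ?_⟩
    rw [depF, ← hn, h3, parF, ← hn]
    congr 1
    exact (depF_agree go hH hr0min h1).symm
  · intro x y hadj
    set N := max (GoodOrder.ht le' x) (GoodOrder.ht le' y) with hN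
    have hx : x ∈ (stages go hH hr0min N).U :=
      (stages_mono go hH hr0min (le_max_left _ _)).1 (mem_stage_ht go hH hr0min x)
    have hy : y ∈ (stages go hH hr0min N).U :=
      (stages_mono go hH hr0min (le_max_right _ _)).1 (mem_stage_ht go hH hr0min y)
    have hsep : SepW H (stages go hH hr0min N).U x y := by
      refine ⟨Walk.cons hadj Walk.nil, ?_⟩
      intro z hz
      rw [Walk.support_cons, Walk.support_nil, List.mem_cons, List.mem_singleton] at hz
      rcases hz with rfl | rfl
      · exact Or.inl rfl
      · exact Or.inr (Or.inl rfl)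
    rcases (stages go hH hr0min N).hnorm x hx y hy hsep with h | h
    · exact Or.inl (anc_parF go hH hr0min hy h)
    · exact Or.inr (anc_parF go hH hr0min hx h)

end Core7
section Assembly

open SimpleGraph

variable {W : Type u} {H : SimpleGraph W}

/-- the tree defined by a parent function. -/
def pTree (H : SimpleGraph W) (r0 : W) (par : W → W) : SimpleGraph W :=
  SimpleGraph.fromRel (fun x y => x ≠ r0 ∧ par x = y)

theorem pTree_adj {r0 : W} {par : W → W} {x y : W} :
    (pTree H r0 par).Adj x y ↔ x ≠ y ∧ ((x ≠ r0 ∧ par x = y) ∨ (y ≠ r0 ∧ par y = x)) := by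
  rw [pTree, SimpleGraph.fromRel_adj]

variable {r0 : W} {par : W → W} {dep : W → ℕ}

section WithHyps


theorem par_iter_r0 (hpr : par r0 = r0) (k : ℕ) : par^[k] r0 = r0 := by
  induction k with
  | zero => rfl
  | succ k ih => rw [Function.iterate_succ_apply', ih, hpr]

theorem anc_r0_eq (hpr : par r0 = r0) {z : W} (h : anc par z r0) : z = r0 := by
  obtain ⟨k, hk⟩ := h
  rw [par_iter_r0 hpr] at hk
  exact hk.symm

theorem dep_anc_le (hpr : par r0 = r0) (hstep : ∀ x, x ≠ r0 → H.Adj (par x) x ∧ dep x = dep (par x) + 1) {a b : W} (h : anc par a b) : dep a ≤ dep b := by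
  obtain ⟨k, hk⟩ := h
  rw [← hk]
  clear hk
  induction k with
  | zero => exact le_refl _
  | succ k ih =>
    rw [Function.iterate_succ_apply']
    set y := par^[k] b
    by_cases hy : y = r0
    · rw [hy, hpr, ← hy]; exact ih
    · have := (hstep y hy).2
      omega

theorem par_ne_self (hstep : ∀ x, x ≠ r0 → H.Adj (par x) x ∧ dep x = dep (par x) + 1) {x : W} (hx : x ≠ r0) : par x ≠ x := by
  intro h
  have := (hstep x hx).2
  rw [h] at this
  omega

theorem pTree_le (hstep : ∀ x, x ≠ r0 → H.Adj (par x) x ∧ dep x = dep (par x) + 1) : pTree H r0 par ≤ H := by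
  intro x y hxy
  rw [pTree_adj] at hxy
  rcases hxy.2 with ⟨hxr, hp⟩ | ⟨hyr, hp⟩
  · exact hp ▸ ((hstep x hxr).1).symm
  · exact hp ▸ (hstep y hyr).1

theorem pTree_adj_par (hstep : ∀ x, x ≠ r0 → H.Adj (par x) x ∧ dep x = dep (par x) + 1) {x : W} (hx : x ≠ r0) : (pTree H r0 par).Adj (par x) x := by
  rw [pTree_adj]
  exact ⟨par_ne_self hstep hx, Or.inr ⟨hx, rfl⟩⟩

/-- the canonical walk from the root. -/
noncomputable def cw (hstep : ∀ x, x ≠ r0 → H.Adj (par x) x ∧ dep x = dep (par x) + 1) : (k : ℕ) → (x : W) → dep x ≤ k → (pTree H r0 par).Walk r0 x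
  | 0, x, h => by
    have hx : x = r0 := by
      by_contra hne
      have := (hstep x hne).2
      omega
    exact SimpleGraph.Walk.nil.copy rfl hx.symm
  | (k+1), x, h =>
    if hx : x = r0 then SimpleGraph.Walk.nil.copy rfl hx.symm
    else
      (cw hstep k (par x) (by
        have h2 := (hstep x hx).2
        omega)).concat (pTree_adj_par hstep hx)

theorem cw_support (hpr : par r0 = r0) (hstep : ∀ x, x ≠ r0 → H.Adj (par x) x ∧ dep x = dep (par x) + 1) : ∀ (k : ℕ) (x : W) (h : dep x ≤ k) (z : W),
    z ∈ (cw hstep k x h).support ↔ anc par z x := by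
  intro k
  induction k with
  | zero =>
    intro x h z
    rw [cw]
    rw [SimpleGraph.Walk.support_copy, SimpleGraph.Walk.support_nil, List.mem_singleton]
    have hx : x = r0 := by
      by_contra hne
      have := (hstep x hne).2
      omega
    subst hx
    constructor
    · rintro rfl; exact anc_refl _ _
    · intro hz; exact anc_r0_eq hpr hz
  | succ k ih =>
    intro x h z
    rw [cw]
    by_cases hx : x = r0
    · rw [dif_pos hx]
      rw [SimpleGraph.Walk.support_copy, SimpleGraph.Walk.support_nil, List.mem_singleton]
      subst hx
      constructor
      · rintro rfl; exact anc_refl _ _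
      · intro hz; exact anc_r0_eq hpr hz
    · rw [dif_neg hx]
      rw [SimpleGraph.Walk.support_concat, List.mem_append,
        List.mem_singleton, ih]
      constructor
      · rintro (hz | rfl)
        · exact anc_trans hz (anc_step x)
        · exact anc_refl _ _
      · rintro ⟨j, hj⟩
        cases j with
        | zero => exact Or.inr hj.symm
        | succ j =>
          rw [Function.iterate_succ_apply] at hj
          exact Or.inl ⟨j, hj⟩

theorem cw_isPath (hpr : par r0 = r0) (hstep : ∀ x, x ≠ r0 → H.Adj (par x) x ∧ dep x = dep (par x) + 1) : ∀ (k : ℕ) (x : W) (h : dep x ≤ k), (cw hstep k x h).IsPath := by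
  intro k
  induction k with
  | zero =>
    intro x h
    rw [cw]
    simp [SimpleGraph.Walk.isPath_def, SimpleGraph.Walk.support_copy]
  | succ k ih =>
    intro x h
    rw [cw]
    by_cases hx : x = r0
    · rw [dif_pos hx]
      simp [SimpleGraph.Walk.isPath_def, SimpleGraph.Walk.support_copy]
    · rw [dif_neg hx]
      rw [SimpleGraph.Walk.isPath_def, SimpleGraph.Walk.support_concat]
      rw [List.nodup_append]
      refine ⟨(ih (par x) _).support_nodup, List.nodup_singleton _, ?_⟩
      intro z hz z' hz' hzz'
      rw [List.mem_singleton] at hz'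
      subst hz'
      subst hzz'
      rw [cw_support hpr hstep] at hz
      have h1 := dep_anc_le hpr hstep hz
      have h2 := (hstep z hx).2
      omega

theorem pTree_connected (hstep : ∀ x, x ≠ r0 → H.Adj (par x) x ∧ dep x = dep (par x) + 1) : (pTree H r0 par).Connected := by
  rw [SimpleGraph.connected_iff]
  refine ⟨?_, ⟨r0⟩⟩
  intro a b
  have ha : (pTree H r0 par).Reachable r0 a := ⟨cw hstep (dep a) a (le_refl _)⟩
  have hb : (pTree H r0 par).Reachable r0 b := ⟨cw hstep (dep b) b (le_refl _)⟩
  exact ha.symm.trans hb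

theorem list_head_last {β : Type*} {e : β} {t l2 : List β} (h : e :: t = l2 ++ [e])
    (hnd : (e :: t).Nodup) : l2 = [] := by
  cases l2 with
  | nil => rfl
  | cons b l2' =>
    rw [List.cons_append] at h
    injection h with h1 h2
    subst h1
    exfalso
    apply (List.nodup_cons.mp hnd).1
    rw [h2, List.mem_append, List.mem_singleton]
    exact Or.inr rfl

theorem pTree_acyclic (hstep : ∀ x, x ≠ r0 → H.Adj (par x) x ∧ dep x = dep (par x) + 1) : (pTree H r0 par).IsAcyclic := by
  classical
  intro v c hc
  -- find a vertex of maximal depth on the cycle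
  have hvs : v ∈ c.support := c.start_mem_support
  have hne : c.support.toFinset.Nonempty := ⟨v, by rw [List.mem_toFinset]; exact hvs⟩
  obtain ⟨u, hu, hmax⟩ := Finset.exists_max_image c.support.toFinset dep hne
  rw [List.mem_toFinset] at hu
  have hmax' : ∀ z ∈ c.support, dep z ≤ dep u := fun z hz =>
    hmax z (by rwa [List.mem_toFinset])
  set c' : (pTree H r0 par).Walk u u := c.rotate u hu with hc'def
  have hc' : c'.IsCycle := hc.rotate hu
  have hmem' : ∀ z ∈ c'.support, z ∈ c.support := by
    intro z hz
    rw [SimpleGraph.Walk.support_eq_cons, List.mem_cons] at hz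
    rcases hz with rfl | hz
    · exact hu
    · have := (SimpleGraph.Walk.support_rotate c u hu).mem_iff.mp hz
      exact List.mem_of_mem_tail this
  have hlen : 3 ≤ c'.length := hc'.three_le_length
  -- decompose the cycle
  cases hcc : c' with
  | nil =>
    rw [hcc] at hlen
    simp at hlen
  | @cons _ a _ h1 q =>
    obtain ⟨x, q2, e2, heq⟩ := SimpleGraph.Walk.exists_cons_eq_concat h1 q
    have hax : a ∈ c'.support := by
      rw [hcc, SimpleGraph.Walk.support_cons]
      exact List.mem_cons_of_mem _ q.start_mem_support
    have hxx : x ∈ c'.support := by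
      rw [hcc, heq, SimpleGraph.Walk.support_concat, List.mem_append]
      exact Or.inl q2.end_mem_support
    have hda : dep a ≤ dep u := hmax' a (hmem' a hax)
    have hdx : dep x ≤ dep u := hmax' x (hmem' x hxx)
    -- both neighbours are the parent of u
    have hpa : par u = a := by
      rcases (pTree_adj.mp h1).2 with ⟨_, hp⟩ | ⟨har, hp⟩
      · exact hp
      · exfalso
        have := (hstep a har).2
        rw [hp] at this
        omega
    have hpx : par u = x := by
      rcases (pTree_adj.mp e2).2 with ⟨hxr, hp⟩ | ⟨_, hp⟩
      · exfalso
        have := (hstep x hxr).2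
        rw [hp] at this
        omega
      · exact hp
    have haxeq : a = x := hpa ▸ hpx
    subst haxeq
    -- now the first and last edges coincide, contradicting edge-nodup
    have he1 : c'.edges = s(u, a) :: q.edges := by
      rw [hcc, SimpleGraph.Walk.edges_cons]
    have he2 : c'.edges = q2.edges ++ [s(u, a)] := by
      rw [hcc, heq, SimpleGraph.Walk.edges_concat, List.concat_eq_append, Sym2.eq_swap]
    have hnd : c'.edges.Nodup := hc'.edges_nodup
    rw [he1] at hnd
    have : q2.edges = [] := list_head_last (he1 ▸ he2) hnd
    have hq2len : q2.length = 0 := by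
      have := congrArg List.length this
      rwa [SimpleGraph.Walk.length_edges, List.length_nil] at this
    have : c'.length = 1 := by
      rw [hcc, heq, SimpleGraph.Walk.length_concat, hq2len]
    omega

theorem pTree_isTree (hpr : par r0 = r0) (hstep : ∀ x, x ≠ r0 → H.Adj (par x) x ∧ dep x = dep (par x) + 1) : (pTree H r0 par).IsTree :=
  ⟨pTree_connected hstep, pTree_acyclic hstep⟩

theorem treeLE_of_anc (hpr : par r0 = r0) (hstep : ∀ x, x ≠ r0 → H.Adj (par x) x ∧ dep x = dep (par x) + 1) {x y : W} (h : anc par x y) : treeLE (pTree H r0 par) r0 x y := by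
  intro p hp
  have htree := pTree_isTree hpr hstep (H := H)
  have huniq := (SimpleGraph.isTree_iff_existsUnique_path.mp htree).2 r0 y
  have hcwp : (cw hstep (dep y) y (le_refl _) : (pTree H r0 par).Walk r0 y).IsPath :=
    cw_isPath hpr hstep _ _ _
  have : p = cw hstep (dep y) y (le_refl _) := by
    obtain ⟨q, _, hq⟩ := huniq
    rw [hq p hp, hq _ hcwp]
  rw [this, cw_support hpr hstep]
  exact h

/-- assembly: parent data gives a normal spanning tree. -/
theorem assemble (hpr : par r0 = r0) (hstep : ∀ x, x ≠ r0 → H.Adj (par x) x ∧ dep x = dep (par x) + 1) (hvert : ∀ x y, H.Adj x y → anc par x y ∨ anc par y x) :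
    HasNormalSpanningTree H := by
  refine ⟨pTree H r0 par, r0, pTree_le hstep, pTree_isTree hpr hstep, ?_⟩
  intro x y hadj
  rcases hvert x y hadj with h | h
  · exact Or.inl (treeLE_of_anc hpr hstep h)
  · exact Or.inr (treeLE_of_anc hpr hstep h)

end WithHyps

end Assembly
section TreeOrder

open SimpleGraph

variable {V : Type v} {T : SimpleGraph V} {r : V}

theorem treeLE_refl (y : V) : treeLE T r y y := fun p _ => p.end_mem_support

theorem treeLE_of_path_mem (hT : T.IsTree) {x y : V} (p : T.Walk r y) (hp : p.IsPath)
    (hx : x ∈ p.support) : treeLE T r x y := by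
  intro q hq
  have huniq := (SimpleGraph.isTree_iff_existsUnique_path.mp hT).2 r y
  obtain ⟨p0, _, hp0⟩ := huniq
  rw [hp0 q hq, ← hp0 p hp]
  exact hx

theorem treeLE_exists_path (hT : T.IsTree) (y : V) :
    ∃ p : T.Walk r y, p.IsPath := by
  classical
  obtain ⟨p⟩ := hT.isConnected r y
  exact ⟨p.toPath, p.toPath.2⟩

theorem treeLE_trans (hT : T.IsTree) {x y z : V} (hxy : treeLE T r x y)
    (hyz : treeLE T r y z) : treeLE T r x z := by
  classical
  intro p hp
  have hy : y ∈ p.support := hyz p hp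
  have hq : (p.takeUntil y hy).IsPath := hp.takeUntil hy
  have hx : x ∈ (p.takeUntil y hy).support := hxy _ hq
  exact SimpleGraph.Walk.support_takeUntil_subset _ _ hx

theorem treeLE_antisymm (hT : T.IsTree) {x y : V} (hxy : treeLE T r x y)
    (hyx : treeLE T r y x) : x = y := by
  classical
  obtain ⟨p, hp⟩ := treeLE_exists_path hT (r := r) y
  have hx : x ∈ p.support := hxy p hp
  set q := p.takeUntil x hx with hqdef
  have hq : q.IsPath := hp.takeUntil hx
  have hyq : y ∈ q.support := hyx q hq
  by_contra hne
  have hspec := p.take_spec hx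
  have hnd : p.support.Nodup := hp.support_nodup
  rw [← hspec, SimpleGraph.Walk.support_append] at hnd
  have hdisj := List.disjoint_of_nodup_append hnd
  have hyd : y ∈ (p.dropUntil x hx).support := (p.dropUntil x hx).end_mem_support
  rw [SimpleGraph.Walk.support_eq_cons, List.mem_cons] at hyd
  rcases hyd with rfl | hyd
  · exact hne rfl
  · exact hdisj hyq hyd

theorem treeLE_chain (hT : T.IsTree) {x y z : V} (hxz : treeLE T r x z)
    (hyz : treeLE T r y z) : treeLE T r x y ∨ treeLE T r y x := by
  classical
  obtain ⟨p, hp⟩ := treeLE_exists_path hT (r := r) z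
  have hx : x ∈ p.support := hxz p hp
  have hy : y ∈ p.support := hyz p hp
  set q := p.takeUntil y hy with hqdef
  have hq : q.IsPath := hp.takeUntil hy
  by_cases hxq : x ∈ q.support
  · exact Or.inl (treeLE_of_path_mem hT q hq hxq)
  · have hspec := p.take_spec hy
    have hxd : x ∈ (p.dropUntil y hy).support := by
      have := hx
      rw [← hspec, SimpleGraph.Walk.mem_support_append_iff] at this
      rcases this with h | h
      · exact absurd h hxq
      · exact h
    set d := p.dropUntil y hy with hddef
    have hd : d.IsPath := hp.dropUntil hy
    set dtu := d.takeUntil x hxd with hdtudef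
    have hdtu : dtu.IsPath := hd.takeUntil hxd
    -- the walk q.append dtu : r → x is a path containing y
    have hnd : p.support.Nodup := hp.support_nodup
    rw [← hspec, SimpleGraph.Walk.support_append] at hnd
    have hdisj := List.disjoint_of_nodup_append hnd
    have hndq : q.support.Nodup := hq.support_nodup
    have hsub : ∀ z', z' ∈ dtu.support.tail → z' ∈ d.support.tail := by
      intro z' hz'
      have h1 : z' ∈ dtu.support := List.mem_of_mem_tail hz'
      have h2 : z' ∈ d.support := SimpleGraph.Walk.support_takeUntil_subset _ _ h1
      rw [SimpleGraph.Walk.support_eq_cons, List.mem_cons] at h2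
      rcases h2 with rfl | h2
      · exfalso
        have hndtu : dtu.support.Nodup := hdtu.support_nodup
        rw [SimpleGraph.Walk.support_eq_cons] at hndtu
        exact (List.nodup_cons.mp hndtu).1 hz'
      · exact h2
    have hpath : (q.append dtu).IsPath := by
      rw [SimpleGraph.Walk.isPath_def, SimpleGraph.Walk.support_append, List.nodup_append]
      refine ⟨hndq, ?_, ?_⟩
      · have := hdtu.support_nodup
        rw [SimpleGraph.Walk.support_eq_cons] at this
        exact (List.nodup_cons.mp this).2
      · intro z' hz' z'' hz'' heq
        subst heq
        exact hdisj hz' (hsub z' hz'')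
    have hymem : y ∈ (q.append dtu).support := by
      rw [SimpleGraph.Walk.mem_support_append_iff]
      exact Or.inl q.end_mem_support
    exact Or.inr (treeLE_of_path_mem hT (q.append dtu) hpath hymem)

theorem treeLE_finite (hT : T.IsTree) (y : V) : {x | treeLE T r x y}.Finite := by
  obtain ⟨p, hp⟩ := treeLE_exists_path hT (r := r) y
  apply Set.Finite.subset (List.finite_toSet p.support)
  intro x hx
  exact hx p hp

end TreeOrder
section Final

open SimpleGraph

theorem good_to_NST {W : Type u} {H : SimpleGraph W} {le' : W → W → Prop}
    (go : GoodOrder H le') (hH : H.Connected) : HasNormalSpanningTree H := by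
  classical
  obtain ⟨v⟩ := hH.nonempty
  have hS : ∀ a ∈ (Set.univ : Set W), ∀ b ∈ (Set.univ : Set W),
      ∃ p : H.Walk a b, ∀ z ∈ p.support, z ∈ (Set.univ : Set W) := by
    intro a _ b _
    obtain ⟨p⟩ := hH.preconnected a b
    exact ⟨p, fun z _ => Set.mem_univ z⟩
  obtain ⟨r0, _, hr0min⟩ := conn_min go hS (Set.mem_univ v)
  obtain ⟨par, dep, hpr, hd0, hstep, hvert⟩ :=
    core_construction (r0 := r0) go hH (fun x => hr0min x (Set.mem_univ x))
  exact assemble hpr hstep hvert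

theorem stmt3' {V : Type v} {W : Type w} (G : SimpleGraph V) (H : SimpleGraph W)
    (hG : HasNormalSpanningTree G) (hH : H.Connected) (hm : IsMinor H G) :
    HasNormalSpanningTree H := by
  classical
  obtain ⟨T, r, hle, hT, hnorm⟩ := hG
  obtain ⟨M⟩ := hm
  have goG : GoodOrder G (treeLE T r) :=
    { refl := fun x => treeLE_refl x
      trans := fun h1 h2 => treeLE_trans hT h1 h2
      antisymm := fun h1 h2 => treeLE_antisymm hT h1 h2
      chain := fun h1 h2 => treeLE_chain hT h1 h2
      finite := fun y => treeLE_finite hT y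
      vert := fun h => hnorm h }
  have hbm : ∀ x : W, ∃ m, m ∈ M.branch x ∧ ∀ s ∈ M.branch x, treeLE T r m s := by
    intro x
    obtain ⟨v0, hv0⟩ := M.branch_nonempty x
    apply conn_min goG ?_ hv0
    intro a ha b hb
    obtain ⟨pw⟩ := (M.branch_connected x).preconnected ⟨a, ha⟩ ⟨b, hb⟩
    refine ⟨pw.map (SimpleGraph.Embedding.induce (M.branch x)).toHom, ?_⟩
    intro z hz
    replace hz : z ∈ (pw.map (SimpleGraph.Embedding.induce (M.branch x)).toHom).support := hz
    rw [SimpleGraph.Walk.support_map, List.mem_map] at hz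
    obtain ⟨z', _, rfl⟩ := hz
    exact z'.2
  choose mfun hm1 hm2 using hbm
  have minj : Function.Injective mfun := by
    intro x y h
    by_contra hne
    have hdisj := M.branch_disjoint hne
    exact (Set.disjoint_left.mp hdisj) (hm1 x) (h ▸ hm1 y)
  have goW : GoodOrder H (fun x y => treeLE T r (mfun x) (mfun y)) :=
    { refl := fun x => treeLE_refl _
      trans := fun h1 h2 => treeLE_trans hT h1 h2
      antisymm := fun h1 h2 => minj (treeLE_antisymm hT h1 h2)
      chain := fun h1 h2 => treeLE_chain hT h1 h2
      finite := by
        intro x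
        have : {y | treeLE T r (mfun y) (mfun x)} =
            mfun ⁻¹' {v' | treeLE T r v' (mfun x)} := rfl
        rw [this]
        exact Set.Finite.preimage minj.injOn (treeLE_finite hT (mfun x))
      vert := by
        intro x y hadj
        obtain ⟨u, hu, v', hv', hGadj⟩ := M.branch_adj hadj
        rcases goG.vert hGadj with h | h
        · have h1 : treeLE T r (mfun x) v' := treeLE_trans hT (hm2 x u hu) h
          exact treeLE_chain hT h1 (hm2 y v' hv')
        · have h2 : treeLE T r (mfun y) u := treeLE_trans hT (hm2 y v' hv') h
          exact treeLE_chain hT (hm2 x u hu) h2 }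
  exact good_to_NST goW hH

end Final

/-- Having a normal spanning tree is closed under taking connected minors. -/
theorem stmt3 {V : Type v} {W : Type w} (G : SimpleGraph V) (H : SimpleGraph W)
    (hG : HasNormalSpanningTree G) (hH : H.Connected) (hm : IsMinor H G) :
    HasNormalSpanningTree H := by
  exact stmt3' G H hG hH hm
end

section
/- Let (T,≤) be an order tree and G a T-graph. For any two vertices t, t' that are incomparable in T, the set ⌈t⌉ ∩ ⌈t'⌉ (the intersection of their down-closures) separates t from t' in G. -/
open SimpleGraph

universe u

/-- `(T,≤)` is an order tree: it has a unique minimal element (the root, which then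
lies below every element) and every down-set `⌈t⌉ = Iic t` is well-ordered. -/
def IsOrderTree (T : Type u) [PartialOrder T] : Prop :=
  (∃ r : T, ∀ t, r ≤ t) ∧
  ∀ t : T, IsChain (· ≤ ·) (Set.Iic t) ∧ (Set.Iic t).WellFoundedOn (· < ·)

/-- `G` is a `T`-graph: `V(G) = T`, the endvertices of every edge are comparable,
and the set of lower neighbours of each `t` is cofinal in `⌈t⌉ \ {t}`. -/
def IsTGraph {T : Type u} [PartialOrder T] (G : SimpleGraph T) : Prop :=
  (∀ ⦃x y : T⦄, G.Adj x y → x ≤ y ∨ y ≤ x) ∧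
  ∀ t s : T, s < t → ∃ u : T, G.Adj u t ∧ u < t ∧ s ≤ u

lemma aux5 {T : Type u} [PartialOrder T] (hT : IsOrderTree T) (G : SimpleGraph T)
    (hG : IsTGraph G) : ∀ {a b : T} (p : G.Walk a b), ∃ v ∈ p.support, v ≤ a ∧ v ≤ b := by
  intro a b p
  induction p with
  | nil => exact ⟨_, by simp, le_refl _, le_refl _⟩
  | @cons a u b hadj q ih =>
    obtain ⟨v, hv, hva, hvb⟩ := ih
    rcases hG.1 hadj with hau | hua
    · -- a ≤ u; v ≤ u and a ≤ u, both in Iic u, chain: compare v and a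
      rcases eq_or_ne v a with rfl | hne
      · exact ⟨v, by simp [hv], le_refl v, hvb⟩
      · rcases (hT.2 u).1 (Set.mem_Iic.2 hva) (Set.mem_Iic.2 hau) hne with h | h
        · exact ⟨v, by simp [hv], h, hvb⟩
        · exact ⟨a, by simp, le_refl a, le_trans h hvb⟩
    · exact ⟨v, by simp [hv], le_trans hva hua, hvb⟩

/-- For incomparable `t, t'` the set `⌈t⌉ ∩ ⌈t'⌉` separates `t` from `t'` in `G`. -/
theorem stmt5 {T : Type u} [PartialOrder T] (hT : IsOrderTree T) (G : SimpleGraph T)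
    (hG : IsTGraph G) (t t' : T) (h1 : ¬ t ≤ t') (h2 : ¬ t' ≤ t) :
    ∀ p : G.Walk t t', ∃ v ∈ p.support, v ∈ Set.Iic t ∩ Set.Iic t' := by
  intro p
  obtain ⟨v, hv, h3, h4⟩ := aux5 hT G hG p
  exact ⟨v, hv, h3, h4⟩
end

section
/- Let (T,≤) be an order tree and G a T-graph. Every nonempty connected subgraph of G has a unique T-minimal element. -/
open SimpleGraph

universe u

/-- Along a walk in `H.coe`, a minimal element of `H.verts` lying below the start
also lies below the end. -/
lemma min_le_of_walk {T : Type u} [PartialOrder T] (hT : IsOrderTree T) (G : SimpleGraph T)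
    (hG : IsTGraph G) (H : G.Subgraph) (m : T) (hmV : m ∈ H.verts)
    (hmin : ∀ c ∈ H.verts, c ≤ m → c = m) :
    ∀ {a b : H.verts} (_ : H.coe.Walk a b), m ≤ a.1 → m ≤ b.1 := by
  intro a b w
  induction w with
  | nil => exact id
  | cons h p ih =>
    rename_i x y z
    intro hma
    apply ih
    have hadj : G.Adj x.1 y.1 := H.adj_sub h
    rcases hG.1 hadj with hxy | hyx
    · exact hma.trans hxy
    · -- y ≤ x, so m and y both lie in Iic x, a chain
      by_cases hmy : m = y.1
      · exact le_of_eq hmy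
      · rcases (hT.2 x.1).1 (Set.mem_Iic.2 hma) (Set.mem_Iic.2 hyx) hmy with h1 | h2
        · exact h1
        · exact le_of_eq (hmin y.1 y.2 h2).symm

/-- Every nonempty connected subgraph of a `T`-graph has a unique `T`-minimal element. -/
theorem stmt6 {T : Type u} [PartialOrder T] (hT : IsOrderTree T) (G : SimpleGraph T)
    (hG : IsTGraph G) (H : G.Subgraph) (hH : H.coe.Connected) :
    ∃! m : T, m ∈ H.verts ∧ ∀ c ∈ H.verts, c ≤ m → c = m := by
  obtain ⟨t⟩ := hH.nonempty
  -- existence: minimal element of Iic t ∩ H.verts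
  have hwf := (hT.2 t.1).2
  have hsub : Set.Iic t.1 ∩ H.verts ⊆ Set.Iic t.1 := Set.inter_subset_left
  have hne : (Set.Iic t.1 ∩ H.verts).Nonempty := ⟨t.1, Set.mem_Iic.2 le_rfl, t.2⟩
  have hwf' : (Set.Iic t.1 ∩ H.verts).IsWF := hwf.subset hsub
  set m := hwf'.min hne with hmdef
  have hm := hwf'.min_mem hne
  have hmV : m ∈ H.verts := hm.2
  have hmle : m ≤ t.1 := hm.1
  have hmin : ∀ c ∈ H.verts, c ≤ m → c = m := by
    intro c hc hcm
    by_contra hne'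
    exact hwf'.not_lt_min hne ⟨Set.mem_Iic.2 (hcm.trans hmle), hc⟩ (lt_of_le_of_ne hcm hne')
  refine ⟨m, ⟨hmV, hmin⟩, ?_⟩
  rintro m' ⟨hm'V, hmin'⟩
  obtain ⟨w⟩ := hH ⟨m', hm'V⟩ ⟨m, hmV⟩
  obtain ⟨w'⟩ := hH ⟨m, hmV⟩ ⟨m', hm'V⟩
  have h1 : m' ≤ m := min_le_of_walk hT G hG H m' hm'V hmin' w le_rfl
  have h2 : m ≤ m' := min_le_of_walk hT G hG H m hmV hmin w' le_rfl
  exact le_antisymm h1 h2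
end

section
/- Let G be a graph and let (H_i)_{i<ω₁} be an increasing ω₁-chain of subgraphs of G, each of which has finite adhesion in G. Then the union ⋃_{i<ω₁} H_i has finite adhesion in G. -/
open SimpleGraph

universe u v w

/-- `D` is (the vertex set of) a connected component of the induced subgraph of `G` on `A`. -/
def IsCompOf {V : Type u} (G : SimpleGraph V) (A D : Set V) : Prop :=
  D ⊆ A ∧ (G.induce D).Connected ∧
  ∀ D' : Set V, D ⊆ D' → D' ⊆ A → (G.induce D').Connected → D' = D

/-- The neighbourhood `N(D)` of a set `D`: all vertices outside `D` with a neighbour in `D`. -/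
def nbrSet {V : Type u} (G : SimpleGraph V) (D : Set V) : Set V :=
  {v : V | v ∉ D ∧ ∃ d ∈ D, G.Adj v d}

/-- The (induced) subgraph of `G` on the vertex set `S` has finite adhesion in `G`:
all components `D` of `G − S` have finite neighbourhood `N(D)`. -/
def FiniteAdhesion {V : Type u} (G : SimpleGraph V) (S : Set V) : Prop :=
  ∀ D : Set V, IsCompOf G Sᶜ D → (nbrSet G D).Finite

def induceHomOfSubset {V : Type u} (G : SimpleGraph V) {S T : Set V} (h : S ⊆ T) :
    G.induce S →g G.induce T :=
  ⟨Set.inclusion h, fun {_ _} hab => hab⟩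

lemma reachable_induce_mono {V : Type u} (G : SimpleGraph V) {S T : Set V} (h : S ⊆ T)
    {a b : S} (hr : (G.induce S).Reachable a b) :
    (G.induce T).Reachable ⟨a.1, h a.2⟩ ⟨b.1, h b.2⟩ :=
  hr.map (induceHomOfSubset G h)

lemma connected_insert {V : Type u} (G : SimpleGraph V) {D : Set V} {v d : V}
    (hconn : (G.induce D).Connected) (hd : d ∈ D) (hadj : G.Adj v d) :
    (G.induce (insert v D)).Connected := by
  have hsub : D ⊆ insert v D := Set.subset_insert _ _
  have hkey : ∀ x : (insert v D : Set V),
      (G.induce (insert v D)).Reachable x ⟨d, hsub hd⟩ := by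
    rintro ⟨x, hx⟩
    rcases hx with rfl | hx
    · exact SimpleGraph.Adj.reachable (by exact hadj)
    · exact reachable_induce_mono G hsub (hconn.preconnected ⟨x, hx⟩ ⟨d, hd⟩)
  constructor
  intro x y
  exact (hkey x).trans (hkey y).symm

lemma exists_isCompOf {V : Type u} (G : SimpleGraph V) {A D : Set V} (hDA : D ⊆ A)
    (hconn : (G.induce D).Connected) :
    ∃ M, D ⊆ M ∧ (M ⊆ A ∧ (G.induce M).Connected ∧
      ∀ D' : Set V, M ⊆ D' → D' ⊆ A → (G.induce D').Connected → D' = M) := by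
  have hzorn : ∀ c ⊆ {E | E ⊆ A ∧ D ⊆ E ∧ (G.induce E).Connected},
      IsChain (· ⊆ ·) c → c.Nonempty →
      ∃ ub ∈ {E | E ⊆ A ∧ D ⊆ E ∧ (G.induce E).Connected}, ∀ s ∈ c, s ⊆ ub := by
    rintro c hcS hchain ⟨E₀, hE₀⟩
    refine ⟨⋃₀ c, ⟨?_, ?_, ?_⟩, fun s hs => Set.subset_sUnion_of_mem hs⟩
    · exact Set.sUnion_subset fun E hE => (hcS hE).1
    · exact (hcS hE₀).2.1.trans (Set.subset_sUnion_of_mem hE₀)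
    · obtain ⟨d₀, hd₀⟩ := hconn.nonempty
      have : Nonempty ↥(⋃₀ c) :=
        ⟨⟨d₀, Set.mem_sUnion.2 ⟨E₀, hE₀, (hcS hE₀).2.1 hd₀⟩⟩⟩
      constructor
      rintro ⟨x, hx⟩ ⟨y, hy⟩
      obtain ⟨E₁, hE₁c, hxE₁⟩ := hx
      obtain ⟨E₂, hE₂c, hyE₂⟩ := hy
      rcases hchain.total hE₁c hE₂c with h12 | h21
      · have hr := (hcS hE₂c).2.2.preconnected ⟨x, h12 hxE₁⟩ ⟨y, hyE₂⟩
        exact reachable_induce_mono G (Set.subset_sUnion_of_mem hE₂c) hr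
      · have hr := (hcS hE₁c).2.2.preconnected ⟨x, hxE₁⟩ ⟨y, h21 hyE₂⟩
        exact reachable_induce_mono G (Set.subset_sUnion_of_mem hE₁c) hr
  obtain ⟨M, hDM, hM, hmax⟩ := zorn_subset_nonempty
      {E | E ⊆ A ∧ D ⊆ E ∧ (G.induce E).Connected} hzorn D ⟨hDA, subset_rfl, hconn⟩
  refine ⟨M, hM.2.1, hM.1, hM.2.2, fun D' hMD' hD'A hD'conn => ?_⟩
  exact subset_antisymm (hmax ⟨hD'A, hM.2.1.trans hMD', hD'conn⟩ hMD') hMD'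

/-- An increasing `ω₁`-chain of subgraphs of finite adhesion has union of finite adhesion. -/
theorem stmt7 {V : Type u} (G : SimpleGraph V)
    (H : (Cardinal.aleph 1 : Cardinal.{u}).ord.ToType → G.Subgraph)
    (hmono : Monotone H)
    (hfin : ∀ i, FiniteAdhesion G (H i).verts) :
    FiniteAdhesion G (⨆ i, H i).verts := by
  intro D hD
  set S := (⨆ i, H i).verts with hS
  by_contra hfinD
  rw [← Set.not_infinite, not_not] at hfinD
  -- Step 1: N(D) ⊆ S
  have hNS : nbrSet G D ⊆ S := by
    rintro v ⟨hvD, d, hd, hadj⟩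
    by_contra hvS
    have hins : insert v D = D := by
      refine hD.2.2 (insert v D) (Set.subset_insert _ _) ?_
        (connected_insert G hD.2.1 hd hadj)
      rintro x (rfl | hx)
      · exact hvS
      · exact hD.1 hx
    exact hvD (hins ▸ Set.mem_insert v D)
  -- Step 2: pick countably many vertices of N(D)
  let f := hfinD.natEmbedding
  have hfS : ∀ n, (f n : V) ∈ ⋃ i, (H i).verts := by
    intro n
    have := hNS (f n).2
    rwa [hS, SimpleGraph.Subgraph.verts_iSup] at this
  choose i hi using fun n => Set.mem_iUnion.1 (hfS n)
  -- Step 3: bound the indices using regularity of ℵ₁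
  have hbdd : Set.Bounded (· < ·) (Set.range i) := by
    have hnc : ¬ IsCofinal (Set.range i) := by
      intro hc
      have h1 := Order.cof_le hc
      rw [Ordinal.cof_toType, Cardinal.isRegular_aleph_one.cof_ord] at h1
      exact absurd (lt_of_le_of_lt (Set.countable_range i).le_aleph0
        Cardinal.aleph0_lt_aleph_one) (not_lt.2 h1)
    simp only [IsCofinal, not_forall, not_exists, not_and, not_le] at hnc
    obtain ⟨x, hx⟩ := hnc
    exact ⟨x, fun y hy => hx y hy⟩
  obtain ⟨j, hj⟩ := hbdd
  have hfj : ∀ n, (f n : V) ∈ (H j).verts := fun n =>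
    (hmono (le_of_lt (hj _ (Set.mem_range_self n)))).1 (hi n)
  -- Step 4: extend D to a component M of the complement of (H j).verts
  have hDj : D ⊆ ((H j).verts)ᶜ := by
    intro x hx hxj
    exact (hD.1 hx) ((SimpleGraph.Subgraph.verts_mono (le_iSup H j)) hxj)
  obtain ⟨M, hDM, hMA, hMconn, hMmax⟩ := exists_isCompOf G hDj hD.2.1
  have hMfin : (nbrSet G M).Finite := hfin j M ⟨hMA, hMconn, hMmax⟩
  refine hMfin.not_infinite ?_
  apply Set.infinite_of_injective_forall_mem
    (f := fun n => (f n : V)) (fun a b h => f.injective (Subtype.val_injective h))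
  intro n
  obtain ⟨hvD, d, hd, hadj⟩ := (f n).2
  exact ⟨fun hM => hMA hM (hfj n), d, hDM hd, hadj⟩
end

section
/- Let G be a connected graph that contains no uncountable clique K^{ω₁} as a minor. Then every branch of any normal partition tree T for G is at most countable; in particular, every partition class V_t is at most countable. -/
open SimpleGraph

universe u v w

/-- The contraction `Ġ = G/T` of `G` determined by the partition `P` of its vertex set:
two partition classes are adjacent iff `G` has an edge between them. -/
def quotientGraph {V : Type u} {T : Type v} (G : SimpleGraph V) (P : T → Set V) :
    SimpleGraph T where
  Adj t t' := t ≠ t' ∧ ∃ u ∈ P t, ∃ v ∈ P t', G.Adj u v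
  symm := by
    constructor
    rintro t t' ⟨hne, u, hu, v, hv, huv⟩
    exact ⟨hne.symm, v, hv, u, hu, huv.symm⟩
  loopless := by
    constructor
    rintro t ⟨hne, -⟩
    exact hne rfl

/-- The cofinality of the height of `t`, i.e. of the order type of `⌈t⌉ \ {t}`:
the least cardinality of a cofinal subset of the set of points strictly below `t`. -/
noncomputable def cofBelow {T : Type u} [PartialOrder T] (t : T) : Cardinal.{u} :=
  sInf {c : Cardinal.{u} | ∃ s : Set T, s ⊆ Set.Iio t ∧ (∀ x < t, ∃ y ∈ s, x ≤ y) ∧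
    Cardinal.mk s = c}

/-- `P` is a normal partition tree for `G`, indexed by the order tree `T`:
the partition classes are nonempty, pairwise disjoint and cover `V(G)`;
the contraction `G/T` is a `T`-graph; each class is connected in `G`; and each class
has exactly one element or exactly `cf(height t)` many. -/
structure IsNormalPartitionTree {V : Type u} {T : Type u} [PartialOrder T]
    (G : SimpleGraph V) (P : T → Set V) : Prop where
  orderTree : IsOrderTree T
  nonempty : ∀ t, (P t).Nonempty
  disjoint : ∀ ⦃t t'⦄, t ≠ t' → Disjoint (P t) (P t')
  cover : (⋃ t, P t) = Set.univ
  tgraph : IsTGraph (quotientGraph G P)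
  connected : ∀ t, (G.induce (P t)).Connected
  size : ∀ t, Cardinal.mk (P t) = cofBelow t ∨ Cardinal.mk (P t) = 1

section StmtNineAux

variable {Ω : Type*} [LinearOrder Ω]

/-- A vertex whose up-neighbourhood is unbounded. -/
def GoodVtx (H : SimpleGraph Ω) (c : Ω) : Prop := ∀ b : Ω, ∃ y, b < y ∧ H.Adj c y

lemma icc_connected [WellFoundedLT Ω] (H : SimpleGraph Ω)
    (hH : ∀ t s : Ω, s < t → ∃ u, H.Adj u t ∧ u < t ∧ s ≤ u)
    {a b : Ω} (hab : a ≤ b) : (H.induce (Set.Icc a b)).Connected := by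
  have ha : a ∈ Set.Icc a b := ⟨le_rfl, hab⟩
  rw [SimpleGraph.connected_iff]
  constructor
  · have key : ∀ x : Ω, ∀ hx : x ∈ Set.Icc a b,
        (H.induce (Set.Icc a b)).Reachable ⟨x, hx⟩ ⟨a, ha⟩ := by
      intro x
      induction x using WellFoundedLT.induction with
      | ind x IH =>
        intro hx
        rcases eq_or_lt_of_le hx.1 with heq | hlt
        · have h2 : (⟨x, hx⟩ : Set.Icc a b) = ⟨a, ha⟩ := Subtype.ext heq.symm
          rw [h2]
        · obtain ⟨u, hadj, hux, hau⟩ := hH x a hlt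
          have hu : u ∈ Set.Icc a b := ⟨hau, hux.le.trans hx.2⟩
          have e : (H.induce (Set.Icc a b)).Adj ⟨u, hu⟩ ⟨x, hx⟩ := by
            simpa using hadj
          exact e.symm.reachable.trans (IH u hux hu)
    intro u v
    exact (key u.1 u.2).trans (key v.1 v.2).symm
  · exact ⟨⟨a, ha⟩⟩

lemma exists_goodVtx [WellFoundedLT Ω]
    (hIio : ∀ x : Ω, (Set.Iio x).Countable)
    (hbd : ∀ s : Set Ω, s.Countable → ∃ z, ∀ x ∈ s, x < z)
    (H : SimpleGraph Ω)
    (hH : ∀ t s : Ω, s < t → ∃ u, H.Adj u t ∧ u < t ∧ s ≤ u)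
    (δ : Ω) : ∃ c, δ < c ∧ GoodVtx H c := by
  by_contra hcon
  push_neg at hcon
  have hcon' : ∀ c, δ < c → ∃ b, ∀ y, H.Adj c y → y ≤ b := by
    intro c hc
    have h1 := hcon c hc
    unfold GoodVtx at h1
    push_neg at h1
    obtain ⟨b, hb⟩ := h1
    exact ⟨b, fun y hy => not_lt.1 fun h => (hb y h) hy⟩
  choose! g hg using hcon'
  have hIic : ∀ x : Ω, (Set.Iic x).Countable := fun x => by
    rw [← Set.Iio_insert]; exact (hIio x).insert x
  have hcnt : ∀ p : Ω, (insert p (g '' Set.Iic p)).Countable :=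
    fun p => ((hIic p).image g).insert p
  let nxt : Ω → Ω := fun p => (hbd _ (hcnt p)).choose
  have hnxt : ∀ p, ∀ x ∈ insert p (g '' Set.Iic p), x < nxt p :=
    fun p => (hbd _ (hcnt p)).choose_spec
  let lam : ℕ → Ω := fun n => nxt^[n] ((hbd {δ} (Set.countable_singleton δ)).choose)
  have hδ : δ < lam 0 := (hbd {δ} (Set.countable_singleton δ)).choose_spec δ rfl
  have hsucc : ∀ n, lam (n + 1) = nxt (lam n) := fun n =>
    Function.iterate_succ_apply' nxt n _
  have hWne : Set.Nonempty {z : Ω | ∀ n, lam n < z} := by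
    obtain ⟨z, hz⟩ := hbd (Set.range lam) (Set.countable_range lam)
    exact ⟨z, fun n => hz _ ⟨n, rfl⟩⟩
  set W : Set Ω := {z | ∀ n, lam n < z} with hWdef
  let wf := (IsWellFounded.wf (α := Ω) (r := ((· < ·) : Ω → Ω → Prop)))
  let m : Ω := wf.min W hWne
  have hm : ∀ n, lam n < m := wf.min_mem W hWne
  have hmin : ∀ y, y < m → ∃ n, y ≤ lam n := by
    intro y hy
    by_contra hno
    push_neg at hno
    exact wf.not_lt_min W (x := y) (fun n => hno n) hy
  obtain ⟨u, huadj, hum, h0u⟩ := hH m (lam 0) (hm 0)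
  obtain ⟨n, hun⟩ := hmin u hum
  have hδu : δ < u := hδ.trans_le h0u
  have h1 : m ≤ g u := hg u hδu m huadj
  have h2 : g u < lam (n + 1) := by
    rw [hsucc n]
    exact hnxt (lam n) _ (Set.mem_insert_of_mem _ ⟨u, hun, rfl⟩)
  exact absurd (h1.trans_lt (h2.trans (hm (n + 1)))) (lt_irrefl m)

end StmtNineAux

section StmtNineRec

variable {Ω : Type*} [LinearOrder Ω] [WellFoundedLT Ω]
  (hIio : ∀ x : Ω, (Set.Iio x).Countable)
  (hbd : ∀ s : Set Ω, s.Countable → ∃ z, ∀ x ∈ s, x < z)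
  (H : SimpleGraph Ω)
  (hH : ∀ t s : Ω, s < t → ∃ u, H.Adj u t ∧ u < t ∧ s ≤ u)

open Classical in
noncomputable def ubnd (s : Set Ω) : Ω :=
  if h : ∃ z, ∀ x ∈ s, x < z then h.choose else (hbd ∅ Set.countable_empty).choose

lemma lt_ubnd {s : Set Ω} (hs : s.Countable) : ∀ x ∈ s, x < ubnd hbd s := by
  rw [ubnd, dif_pos (hbd s hs)]
  exact (hbd s hs).choose_spec

noncomputable def FF : Ω → {p : Ω × Ω // GoodVtx H p.2} :=
  (IsWellFounded.wf (α := Ω) (r := ((· < ·) : Ω → Ω → Prop))).fix fun α prev =>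
    ⟨(ubnd hbd {x | ∃ β, ∃ h : β < α, x = (prev β h).1.2},
      (exists_goodVtx hIio hbd H hH (ubnd hbd
        (insert (ubnd hbd {x | ∃ β, ∃ h : β < α, x = (prev β h).1.2})
          {y | ∃ β, ∃ h : β < α,
            y = ((prev β h).2 (ubnd hbd {x | ∃ β, ∃ h : β < α, x = (prev β h).1.2})).choose}))).choose),
     (exists_goodVtx hIio hbd H hH _).choose_spec.2⟩

noncomputable def aOf (α : Ω) : Ω := (FF hIio hbd H hH α).1.1

noncomputable def cOf (α : Ω) : Ω := (FF hIio hbd H hH α).1.2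

lemma good_cOf (α : Ω) : GoodVtx H (cOf hIio hbd H hH α) := (FF hIio hbd H hH α).2

lemma FF_val (α : Ω) : (FF hIio hbd H hH α).1 =
    (ubnd hbd {x | ∃ β, ∃ h : β < α, x = (FF hIio hbd H hH β).1.2},
     (exists_goodVtx hIio hbd H hH (ubnd hbd
        (insert (ubnd hbd {x | ∃ β, ∃ h : β < α, x = (FF hIio hbd H hH β).1.2})
          {y | ∃ β, ∃ h : β < α,
            y = ((FF hIio hbd H hH β).2 (ubnd hbd
              {x | ∃ β, ∃ h : β < α, x = (FF hIio hbd H hH β).1.2})).choose}))).choose) := by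
  conv_lhs => rw [FF, WellFounded.fix_eq]
  rfl

/-- The master lemma about the recursion. -/
lemma FF_master (α : Ω) :
    aOf hIio hbd H hH α < cOf hIio hbd H hH α ∧
    ∀ β, β < α → (cOf hIio hbd H hH β < aOf hIio hbd H hH α ∧
      ∃ y, aOf hIio hbd H hH α < y ∧ y < cOf hIio hbd H hH α ∧
        H.Adj (cOf hIio hbd H hH β) y) := by
  have hval := FF_val hIio hbd H hH α
  have hA : aOf hIio hbd H hH α =
      ubnd hbd {x | ∃ β, ∃ h : β < α, x = (FF hIio hbd H hH β).1.2} :=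
    congrArg Prod.fst hval
  set a := ubnd hbd {x | ∃ β, ∃ h : β < α, x = (FF hIio hbd H hH β).1.2} with haset
  set S : Set Ω := {y | ∃ β, ∃ h : β < α,
      y = ((FF hIio hbd H hH β).2 a).choose} with hSset
  have hC : cOf hIio hbd H hH α =
      (exists_goodVtx hIio hbd H hH (ubnd hbd (insert a S))).choose :=
    congrArg Prod.snd hval
  have hacnt : ({x | ∃ β, ∃ h : β < α, x = (FF hIio hbd H hH β).1.2} : Set Ω).Countable := by
    have : {x | ∃ β, ∃ h : β < α, x = (FF hIio hbd H hH β).1.2} =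
        (fun β => (FF hIio hbd H hH β).1.2) '' Set.Iio α := by
      ext x
      exact ⟨fun ⟨β, h, e⟩ => ⟨β, h, e.symm⟩, fun ⟨β, h, e⟩ => ⟨β, h, e.symm⟩⟩
    rw [this]; exact (hIio α).image _
  have hScnt : (insert a S).Countable := by
    have : S = (fun β => ((FF hIio hbd H hH β).2 a).choose) '' Set.Iio α := by
      ext y
      exact ⟨fun ⟨β, h, e⟩ => ⟨β, h, e.symm⟩, fun ⟨β, h, e⟩ => ⟨β, h, e.symm⟩⟩
    rw [this]; exact ((hIio α).image _).insert a
  have hc' : ubnd hbd (insert a S) < cOf hIio hbd H hH α := by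
    rw [hC]
    exact (exists_goodVtx hIio hbd H hH (ubnd hbd (insert a S))).choose_spec.1
  have haC : a < cOf hIio hbd H hH α :=
    (lt_ubnd hbd hScnt a (Set.mem_insert a S)).trans hc'
  refine ⟨by rw [hA]; exact haC, ?_⟩
  intro β hβ
  constructor
  · rw [hA]
    exact lt_ubnd hbd hacnt _ ⟨β, hβ, rfl⟩
  · refine ⟨((FF hIio hbd H hH β).2 (aOf hIio hbd H hH α)).choose,
      ((FF hIio hbd H hH β).2 (aOf hIio hbd H hH α)).choose_spec.1, ?_,
      ((FF hIio hbd H hH β).2 (aOf hIio hbd H hH α)).choose_spec.2⟩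
    have hmem : ((FF hIio hbd H hH β).2 (aOf hIio hbd H hH α)).choose ∈ insert a S := by
      refine Set.mem_insert_of_mem _ ⟨β, hβ, ?_⟩
      rw [hA]
    exact (lt_ubnd hbd hScnt _ hmem).trans hc'

include hIio hbd hH in
lemma minor_of_tgraphLike : Nonempty (MinorMap (⊤ : SimpleGraph Ω) H) := by
  refine ⟨⟨fun α => Set.Icc (aOf hIio hbd H hH α) (cOf hIio hbd H hH α), ?_, ?_, ?_, ?_⟩⟩
  · intro α
    exact Set.nonempty_Icc.2 (FF_master hIio hbd H hH α).1.le
  · intro α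
    exact icc_connected H hH (FF_master hIio hbd H hH α).1.le
  · intro x y hxy
    rcases hxy.lt_or_gt with h | h
    · rw [Set.disjoint_left]
      intro z hz hz'
      exact absurd (hz.2.trans_lt (((FF_master hIio hbd H hH y).2 x h).1.trans_le hz'.1))
        (lt_irrefl z)
    · rw [Set.disjoint_left]
      intro z hz hz'
      exact absurd (hz'.2.trans_lt (((FF_master hIio hbd H hH x).2 y h).1.trans_le hz.1))
        (lt_irrefl z)
  · intro x y hxy
    rw [SimpleGraph.top_adj] at hxy
    rcases hxy.lt_or_gt with h | h
    · obtain ⟨y0, h1, h2, h3⟩ := ((FF_master hIio hbd H hH y).2 x h).2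
      exact ⟨cOf hIio hbd H hH x, ⟨(FF_master hIio hbd H hH x).1.le, le_rfl⟩,
        y0, ⟨h1.le, h2.le⟩, h3⟩
    · obtain ⟨x0, h1, h2, h3⟩ := ((FF_master hIio hbd H hH x).2 y h).2
      exact ⟨x0, ⟨h1.le, h2.le⟩, cOf hIio hbd H hH y,
        ⟨(FF_master hIio hbd H hH y).1.le, le_rfl⟩, h3.symm⟩

end StmtNineRec

section StmtNineTransfer

private noncomputable def minorMap_map {A B C : Type*} {K : SimpleGraph A} {H1 : SimpleGraph B}
    {H2 : SimpleGraph C} (f : B → C) (hinj : Function.Injective f)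
    (hadj : ∀ x y, H1.Adj x y → H2.Adj (f x) (f y))
    (M : MinorMap K H1) : MinorMap K H2 where
  branch x := f '' M.branch x
  branch_nonempty x := (M.branch_nonempty x).image f
  branch_connected x := by
    let φ : H1.induce (M.branch x) →g H2.induce (f '' M.branch x) :=
      ⟨fun a => ⟨f a.1, a.1, a.2, rfl⟩, by
        intro a b hab
        simp only [SimpleGraph.comap_adj, Function.Embedding.coe_subtype] at hab ⊢
        exact hadj _ _ hab⟩
    have hsurj : Function.Surjective φ := by
      rintro ⟨c, a, ha, rfl⟩
      exact ⟨⟨a, ha⟩, Subtype.ext rfl⟩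
    exact (M.branch_connected x).map φ hsurj
  branch_disjoint x y hxy := by
    rw [Set.disjoint_left]
    rintro z ⟨a, ha, rfl⟩ ⟨b, hb, hfe⟩
    rw [hinj hfe] at hb
    exact (Set.disjoint_left.1 (M.branch_disjoint hxy) ha) hb
  branch_adj x y hxy := by
    obtain ⟨u, hu, v, hv, huv⟩ := M.branch_adj hxy
    exact ⟨f u, ⟨u, hu, rfl⟩, f v, ⟨v, hv, rfl⟩, hadj _ _ huv⟩

private lemma union_connected {V T : Type*} (G : SimpleGraph V) (P : T → Set V)
    (hne : ∀ t, (P t).Nonempty) (hconn : ∀ t, (G.induce (P t)).Connected)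
    (D : Set T) (hD : ((quotientGraph G P).induce D).Connected) :
    (G.induce (⋃ t ∈ D, P t)).Connected := by
  set U := ⋃ t ∈ D, P t with hU
  have hsub : ∀ t ∈ D, P t ⊆ U := fun t ht => Set.subset_biUnion_of_mem ht
  have hclass : ∀ t (ht : t ∈ D), ∀ u v (hu : u ∈ P t) (hv : v ∈ P t),
      (G.induce U).Reachable ⟨u, hsub t ht hu⟩ ⟨v, hsub t ht hv⟩ := by
    intro t ht u v hu hv
    have h1 : (G.induce (P t)).Reachable ⟨u, hu⟩ ⟨v, hv⟩ := (hconn t).preconnected _ _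
    have h2 := h1.map (G.induceHomOfLE (hsub t ht)).toHom
    exact h2
  have hwalk : ∀ (x y : ↥D) (w : ((quotientGraph G P).induce D).Walk x y),
      ∀ u (hu : u ∈ P x.1), ∀ v (hv : v ∈ P y.1),
      (G.induce U).Reachable ⟨u, hsub _ x.2 hu⟩ ⟨v, hsub _ y.2 hv⟩ := by
    intro x y w
    induction w with
    | nil =>
      intro u hu v hv
      exact hclass _ (Subtype.coe_prop _) u v hu hv
    | @cons p q r hadj w IH =>
      have hq : (quotientGraph G P).Adj p.1 q.1 := hadj
      obtain ⟨hne', a, ha, b, hb, hab⟩ := hq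
      intro u hu v hv
      have e : (G.induce U).Adj ⟨a, hsub _ p.2 ha⟩ ⟨b, hsub _ q.2 hb⟩ := hab
      exact ((hclass p.1 p.2 u a hu ha).trans e.reachable).trans (IH b hb v hv)
  rw [SimpleGraph.connected_iff]
  constructor
  · rintro ⟨u, hu⟩ ⟨v, hv⟩
    rw [hU, Set.mem_iUnion₂] at hu hv
    obtain ⟨t, ht, hut⟩ := hu
    obtain ⟨t', ht', hvt⟩ := hv
    obtain ⟨w⟩ := hD.preconnected ⟨t, ht⟩ ⟨t', ht'⟩
    exact hwalk ⟨t, ht⟩ ⟨t', ht'⟩ w u hut v hvt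
  · obtain ⟨⟨t, ht⟩⟩ := hD.nonempty
    obtain ⟨u, hu⟩ := hne t
    exact ⟨⟨u, hsub t ht hu⟩⟩

private noncomputable def minorMap_quotient {V T A : Type*} {K : SimpleGraph A}
    (G : SimpleGraph V) (P : T → Set V)
    (hne : ∀ t, (P t).Nonempty) (hdisj : ∀ ⦃t t'⦄, t ≠ t' → Disjoint (P t) (P t'))
    (hconn : ∀ t, (G.induce (P t)).Connected)
    (M : MinorMap K (quotientGraph G P)) : MinorMap K G where
  branch x := ⋃ t ∈ M.branch x, P t
  branch_nonempty x := by
    obtain ⟨t, ht⟩ := M.branch_nonempty x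
    obtain ⟨u, hu⟩ := hne t
    exact ⟨u, Set.mem_biUnion ht hu⟩
  branch_connected x := union_connected G P hne hconn _ (M.branch_connected x)
  branch_disjoint x y hxy := by
    rw [Set.disjoint_left]
    rintro z hz hz'
    rw [Set.mem_iUnion₂] at hz hz'
    obtain ⟨t, ht, hzt⟩ := hz
    obtain ⟨t', ht', hzt'⟩ := hz'
    rcases eq_or_ne t t' with rfl | hne'
    · exact (Set.disjoint_left.1 (M.branch_disjoint hxy) ht) ht'
    · exact (Set.disjoint_left.1 (hdisj hne') hzt) hzt'
  branch_adj x y hxy := by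
    obtain ⟨t, ht, t', ht', htt'⟩ := M.branch_adj hxy
    obtain ⟨-, u, hu, v, hv, huv⟩ := htt'
    exact ⟨u, Set.mem_biUnion ht hu, v, Set.mem_biUnion ht' hv, huv⟩

end StmtNineTransfer

/-- In a graph with no `K^{ω₁}` minor, every branch (maximal chain) of a normal partition
tree is countable; in particular every partition class is countable. -/
theorem stmt9 {V : Type u} {T : Type u} [PartialOrder T] (G : SimpleGraph V)
    (hG : G.Connected)
    (hK : ¬ IsMinor (⊤ : SimpleGraph (Cardinal.aleph 1 : Cardinal.{u}).ord.ToType) G)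
    (P : T → Set V) (hP : IsNormalPartitionTree G P) :
    (∀ B : Set T, IsMaxChain (· ≤ ·) B → B.Countable) ∧ (∀ t, (P t).Countable) := by
  classical
  have key : ∀ B : Set T, IsMaxChain (· ≤ ·) B → B.Countable := by
    intro B hB
    by_contra hBu
    apply hK
    -- Elements below an element of `B` are comparable with everything in `B`,
    -- hence belong to `B` by maximality.
    have hcomp : ∀ t ∈ B, ∀ x, x ≤ t → ∀ q ∈ B, x ≤ q ∨ q ≤ x := by
      intro t ht x hx q hq
      by_cases hqt : q ≤ t
      · rcases eq_or_ne x q with rfl | hne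
        · exact Or.inl le_rfl
        · exact (hP.orderTree.2 t).1 (Set.mem_Iic.2 hx) (Set.mem_Iic.2 hqt) hne
      · rcases eq_or_ne q t with rfl | hne
        · exact absurd le_rfl hqt
        · rcases hB.1 hq ht hne with h | h
          · exact absurd h hqt
          · exact Or.inl (hx.trans h)
    have hIicB : ∀ t ∈ B, ∀ x, x ≤ t → x ∈ B := by
      intro t ht x hx
      by_contra hxB
      have hch : IsChain (· ≤ ·) (insert x B) := by
        intro p hp q hq hpq
        rcases hp with rfl | hp
        · rcases hq with rfl | hq
          · exact absurd rfl hpq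
          · exact hcomp t ht p hx q hq
        · rcases hq with rfl | hq
          · exact (hcomp t ht q hx p hp).symm
          · exact hB.1 hp hq hpq
      have heq := hB.2 hch (Set.subset_insert x B)
      exact hxB (heq ▸ Set.mem_insert x B)
    -- `B` is well-ordered by `<`
    have hwf : WellFounded (fun a b : ↥B => (a : T) < (b : T)) := by
      rw [WellFounded.wellFounded_iff_has_min]
      intro s hs
      obtain ⟨⟨t, htB⟩, hts⟩ := hs
      have hwo := (hP.orderTree.2 t).2
      -- minimal element of the trace of `s` on `Iic t`
      have hsne : Set.Nonempty {a : ↥(Set.Iic t) | ∃ h : (a : T) ∈ B, (⟨a, h⟩ : ↥B) ∈ s} :=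
        ⟨⟨t, Set.mem_Iic.2 le_rfl⟩, htB, hts⟩
      obtain ⟨m, hm, hmmin⟩ := (WellFounded.wellFounded_iff_has_min.1 hwo) _ hsne
      obtain ⟨hmB, hms⟩ := hm
      refine ⟨⟨m, hmB⟩, hms, ?_⟩
      rintro ⟨a, haB⟩ has hlt
      have hat : a ≤ t := (le_of_lt hlt).trans m.2
      exact hmmin ⟨a, Set.mem_Iic.2 hat⟩ ⟨haB, has⟩ hlt
    letI rB : ↥B → ↥B → Prop := fun a b => (a : T) < (b : T)
    haveI : IsTrans ↥B rB := ⟨fun _ _ _ h1 h2 => h1.trans h2⟩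
    haveI : IsTrichotomous ↥B rB := ⟨fun a b hab hba => by
      by_contra hne
      have hne' : (a : T) ≠ (b : T) := fun h => hne (Subtype.ext h)
      rcases hB.1 a.2 b.2 hne' with h | h
      · exact hab (h.lt_of_ne hne')
      · exact hba (h.lt_of_ne hne'.symm)⟩
    haveI : IsWellFounded ↥B rB := ⟨hwf⟩
    haveI : IsWellOrder ↥B rB := {}
    have hcard : Cardinal.aleph 1 ≤ Cardinal.mk ↥B :=
      le_of_not_gt fun h => hBu ((Cardinal.countable_iff_lt_aleph_one B).2 h)
    have htype : (Cardinal.aleph 1).ord ≤ Ordinal.type rB := by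
      rw [Cardinal.ord_le, Ordinal.card_type]
      exact hcard
    set Om := (Cardinal.aleph 1 : Cardinal.{u}).ord.ToType with hOm
    haveI : IsWellOrder Om ((· < ·) : Om → Om → Prop) := isWellOrder_lt
    have htypeOm : Ordinal.type ((· < ·) : Om → Om → Prop) = (Cardinal.aleph 1).ord :=
      Ordinal.type_toType _
    have hseg : Nonempty (InitialSeg ((· < ·) : Om → Om → Prop) rB) := by
      rw [← Ordinal.type_le_iff, htypeOm]
      exact htype
    obtain ⟨g⟩ := hseg
    set Gq := quotientGraph G P with hGq
    let f : Om → T := fun x => ((g x : ↥B) : T)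
    have hfmono : ∀ {x y : Om}, x < y → f x < f y := fun h => g.map_rel_iff.2 h
    have hfinj : Function.Injective f := fun x y h =>
      g.injective (Subtype.ext h)
    let HΩ : SimpleGraph Om :=
      { Adj := fun x y => Gq.Adj (f x) (f y)
        symm := ⟨fun x y h => h.symm⟩
        loopless := ⟨fun x h => Gq.irrefl h⟩ }
    have hHΩ : ∀ t s : Om, s < t → ∃ u, HΩ.Adj u t ∧ u < t ∧ s ≤ u := by
      intro t s hst
      obtain ⟨u', hadj, hu't, hsu'⟩ := hP.tgraph.2 (f t) (f s) (hfmono hst)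
      have hu'B : u' ∈ B := hIicB (f t) (g t).2 u' hu't.le
      have hrange : (⟨u', hu'B⟩ : ↥B) ∈ Set.range g :=
        g.mem_range_of_rel (a := t) hu't
      obtain ⟨u, hu⟩ := hrange
      have hfu : f u = u' := congrArg Subtype.val hu
      refine ⟨u, ?_, ?_, ?_⟩
      · show Gq.Adj (f u) (f t)
        rw [hfu]; exact hadj
      · exact g.map_rel_iff.1 (show rB (g u) (g t) by rw [hu]; exact hu't)
      · by_contra hsu
        have h1 : f u < f s := hfmono (lt_of_not_ge hsu)
        rw [hfu] at h1
        exact absurd (hsu'.trans_lt h1) (lt_irrefl _)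
    have hIio : ∀ x : Om, (Set.Iio x).Countable := fun x =>
      (Cardinal.countable_iff_lt_aleph_one _).2 (Cardinal.mk_Iio_ord_toType x)
    have hbd : ∀ s : Set Om, s.Countable → ∃ z, ∀ x ∈ s, x < z := by
      intro s hs
      have h1 : Cardinal.mk s < Ordinal.cof (Ordinal.type ((· < ·) : Om → Om → Prop)) := by
        rw [htypeOm, Cardinal.isRegular_aleph_one.cof_eq]
        exact (Cardinal.countable_iff_lt_aleph_one s).1 hs
      by_contra hno
      push_neg at hno
      rw [Ordinal.cof_type] at h1
      exact absurd (Order.cof_le hno) (not_le.2 h1)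
    obtain ⟨M0⟩ := minor_of_tgraphLike hIio hbd HΩ hHΩ
    have M1 : MinorMap (⊤ : SimpleGraph Om) Gq :=
      minorMap_map f hfinj (fun x y h => h) M0
    exact ⟨minorMap_quotient G P hP.nonempty hP.disjoint hP.connected M1⟩
  refine ⟨key, fun t => ?_⟩
  obtain ⟨B, hB, hsub⟩ := ((hP.orderTree.2 t).1).exists_maxChain
  have hBc := key B hB
  have hIioc : (Set.Iio t).Countable := hBc.mono fun x hx => hsub (le_of_lt hx)
  have hcof : cofBelow t ≤ Cardinal.mk (Set.Iio t) :=
    csInf_le' ⟨Set.Iio t, subset_rfl, fun x hx => ⟨x, hx, le_rfl⟩, rfl⟩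
  have hlt : cofBelow t < Cardinal.aleph 1 :=
    hcof.trans_lt ((Cardinal.countable_iff_lt_aleph_one _).1 hIioc)
  rcases hP.size t with h | h
  · exact (Cardinal.countable_iff_lt_aleph_one _).2 (h ▸ hlt)
  · refine (Cardinal.countable_iff_lt_aleph_one _).2 ?_
    rw [h]
    exact lt_of_le_of_lt Cardinal.one_le_aleph0 Cardinal.aleph0_lt_aleph_one
end

section
/- Let G be a graph and H ⊆ G a subgraph of finite adhesion. Then every rooted tree T ⊆ G that contains V(H) cofinally has finite adhesion in G. -/
open SimpleGraph

universe u v w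

/-- A rooted tree inside the graph `G`. -/
structure RootedTreeIn {V : Type u} (G : SimpleGraph V) where
  sub : G.Subgraph
  root : V
  root_mem : root ∈ sub.verts
  isTree : sub.coe.IsTree

/-- The tree-order of a rooted tree in `G`: `x ≤ y` iff both lie in the tree and
`x` lies on every path of the tree from the root to `y`. -/
def RootedTreeIn.le {V : Type u} {G : SimpleGraph V} (R : RootedTreeIn G) (x y : V) : Prop :=
  ∃ (hx : x ∈ R.sub.verts) (hy : y ∈ R.sub.verts),
    ∀ p : R.sub.coe.Walk ⟨R.root, R.root_mem⟩ ⟨y, hy⟩, p.IsPath →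
      (⟨x, hx⟩ : R.sub.verts) ∈ p.support

/-- A rooted tree in `G` is normal if the endvertices of every `T`-path of `G`
(a path with endvertices in the tree, but all edges and inner vertices outside it)
are comparable in its tree-order. -/
def RootedTreeIn.IsNormalIn {V : Type u} {G : SimpleGraph V} (R : RootedTreeIn G) : Prop :=
  ∀ ⦃x y : V⦄ (p : G.Walk x y), p.IsPath →
    x ∈ R.sub.verts → y ∈ R.sub.verts →
    (∀ v ∈ p.support, v ≠ x → v ≠ y → v ∉ R.sub.verts) →
    (∀ e ∈ p.edges, e ∉ R.sub.edgeSet) →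
    (R.le x y ∨ R.le y x)

/-- The rooted tree `R` contains the vertex set `U` cofinally. -/
def RootedTreeIn.ContainsCofinally {V : Type u} {G : SimpleGraph V} (R : RootedTreeIn G)
    (U : Set V) : Prop :=
  U ⊆ R.sub.verts ∧ ∀ x ∈ R.sub.verts, ∃ u ∈ U, R.le x u

/-- `X` separates `A` from `B` in `G`: every walk from `A` to `B` meets `X`. -/
def Separates {V : Type u} (G : SimpleGraph V) (X A B : Set V) : Prop :=
  ∀ ⦃a b : V⦄, a ∈ A → b ∈ B → ∀ p : G.Walk a b, ∃ v ∈ p.support, v ∈ X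

/-- `U` is dispersed in `G`: every ray of `G` can be separated from `U`
by a finite set of vertices. -/
def Dispersed {V : Type u} (G : SimpleGraph V) (U : Set V) : Prop :=
  ∀ f : ℕ → V, Function.Injective f → (∀ n, G.Adj (f n) (f (n + 1))) →
    ∃ X : Set V, X.Finite ∧ Separates G X U (Set.range f)



section AuxLemmas

open SimpleGraph Walk

variable {V' : Type*} {G' : SimpleGraph V'}

private lemma takeUntil_append' [DecidableEq V'] {a b c n : V'}
    (q : G'.Walk a b) (s : G'.Walk b c) (h1 : n ∉ q.support) (h2 : n ∈ s.support)
    (hn : n ∈ (q.append s).support) :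
    (q.append s).takeUntil n hn = q.append (s.takeUntil n h2) := by
  induction q with
  | nil => rfl
  | cons adj q' ih =>
    rw [support_cons, List.mem_cons, not_or] at h1
    show (Walk.cons adj (q'.append s)).takeUntil n hn = _
    simp only [Walk.takeUntil, dif_neg (fun h : _ = n => h1.1 h.symm), cons_append]
    congr 1
    exact ih s h1.2 h2 _

private lemma takeUntil_congr' [DecidableEq V'] {a b n : V'} (r r' : G'.Walk a b) (h : r = r')
    (hn : n ∈ r.support) : r.takeUntil n hn = r'.takeUntil n (h ▸ hn) := by subst h; rfl

/-- In a path `r`, if `n` appears after `t`, then `t` appears in `r.takeUntil n`. -/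
private lemma mem_takeUntil_of_mem_dropUntil [DecidableEq V'] {a b t n : V'} {r : G'.Walk a b}
    (hr : r.IsPath) (ht : t ∈ r.support) (hn : n ∈ r.support)
    (hd : n ∈ (r.dropUntil t ht).support) (hne : n ≠ t) :
    t ∈ (r.takeUntil n hn).support := by
  set q := r.takeUntil t ht with hq
  set s := r.dropUntil t ht with hs
  have hqs : q.append s = r := r.take_spec ht
  have hnodup : (q.append s).support.Nodup := by rw [hqs]; exact hr.support_nodup
  rw [support_append, List.nodup_append] at hnodup
  have hntail : n ∈ s.support.tail := by
    have hd' := hd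
    rw [s.support_eq_cons, List.mem_cons] at hd'
    exact hd'.resolve_left hne
  have hnq : n ∉ q.support := fun hmem => hnodup.2.2 n hmem n hntail rfl
  have key : r.takeUntil n hn = q.append (s.takeUntil n hd) := by
    rw [takeUntil_congr' r (q.append s) hqs.symm hn]
    exact takeUntil_append' q s hnq hd _
  rw [key, mem_support_append_iff]
  left
  exact q.end_mem_support

private lemma exists_exit {S : Set V'} :
    ∀ {a b : V'} (w : G'.Walk a b), a ∈ S → b ∉ S →
    ∃ x n, x ∈ S ∧ n ∉ S ∧ G'.Adj x n ∧ n ∈ w.support := by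
  intro a b w
  induction w with
  | nil => intro ha hb; exact absurd ha hb
  | @cons a c b h p ih =>
    intro ha hb
    by_cases hc : c ∈ S
    · obtain ⟨x, n, h1, h2, h3, h4⟩ := ih hc hb
      exact ⟨x, n, h1, h2, h3, by simp [h4]⟩
    · exact ⟨a, c, ha, hc, h, by simp⟩

private lemma exists_walk_of_induce' {S : Set V'} :
    ∀ {u v : S} (_ : (G'.induce S).Walk u v),
      ∃ w : G'.Walk ↑u ↑v, ∀ x ∈ w.support, x ∈ S := by
  intro u v p
  induction p with
  | @nil u => exact ⟨Walk.nil, by rintro x hx; simp at hx; subst hx; exact u.2⟩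
  | @cons u c v h p ih =>
    obtain ⟨w, hw⟩ := ih
    refine ⟨Walk.cons (show G'.Adj u c from h) w, ?_⟩
    intro x hx
    rw [support_cons, List.mem_cons] at hx
    rcases hx with rfl | hx
    · exact u.2
    · exact hw x hx

private lemma reachable_induce_of_walk' {S : Set V'} :
    ∀ {x y : V'} (p : G'.Walk x y), (∀ v ∈ p.support, v ∈ S) →
    ∀ (hx : x ∈ S) (hy : y ∈ S), (G'.induce S).Reachable ⟨x, hx⟩ ⟨y, hy⟩ := by
  intro x y p
  induction p with
  | nil => intro _ _ _; exact Reachable.refl _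
  | @cons x c y h p ih =>
    intro hs hx hy
    have hc : c ∈ S := hs c (by simp)
    have hadj : (G'.induce S).Adj ⟨x, hx⟩ ⟨c, hc⟩ := h
    exact hadj.reachable.trans (ih (fun v hv => hs v (by simp [hv])) hc hy)

/-- The set of vertices reachable from `d` by a walk staying inside `A`. -/
def walkSet (G' : SimpleGraph V') (A : Set V') (d : V') : Set V' :=
  {v | ∃ w : G'.Walk d v, ∀ x ∈ w.support, x ∈ A}

private lemma walkSet_subset {A : Set V'} {d : V'} : walkSet G' A d ⊆ A := by
  rintro v ⟨w, hw⟩; exact hw v w.end_mem_support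

private lemma mem_walkSet_self {A : Set V'} {d : V'} (hd : d ∈ A) : d ∈ walkSet G' A d :=
  ⟨Walk.nil, by intro x hx; simp at hx; subst hx; exact hd⟩

private lemma support_mem_walkSet {A : Set V'} {d v : V'} {w : G'.Walk d v}
    (hw : ∀ x ∈ w.support, x ∈ A) {x : V'} (hx : x ∈ w.support) : x ∈ walkSet G' A d := by
  classical
  exact ⟨w.takeUntil x hx, fun y hy => hw y (w.support_takeUntil_subset hx hy)⟩

private lemma isCompOf_walkSet {A : Set V'} {d : V'} (hd : d ∈ A) :
    IsCompOf G' A (walkSet G' A d) := by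
  refine ⟨walkSet_subset, ?_, ?_⟩
  · rw [connected_iff]
    refine ⟨?_, ⟨⟨d, mem_walkSet_self hd⟩⟩⟩
    rintro ⟨u, hu⟩ ⟨v, hv⟩
    obtain ⟨w, hw⟩ := hu
    obtain ⟨w', hw'⟩ := hv
    have r1 := reachable_induce_of_walk' w (fun x hx => support_mem_walkSet hw hx)
      (mem_walkSet_self hd) ⟨w, hw⟩
    have r2 := reachable_induce_of_walk' w' (fun x hx => support_mem_walkSet hw' hx)
      (mem_walkSet_self hd) ⟨w', hw'⟩
    exact r1.symm.trans r2
  · intro D' hsub hsubA hconn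
    refine Set.Subset.antisymm ?_ hsub
    intro v hv
    obtain ⟨p⟩ := hconn.preconnected ⟨d, hsub (mem_walkSet_self hd)⟩ ⟨v, hv⟩
    obtain ⟨w, hw⟩ := exists_walk_of_induce' p
    exact ⟨w, fun x hx => hsubA (hw x hx)⟩

private lemma IsCompOf.eq_walkSet {A D : Set V'} (h : IsCompOf G' A D) {d : V'} (hd : d ∈ D) :
    D = walkSet G' A d := by
  have hsub : D ⊆ walkSet G' A d := by
    intro v hv
    obtain ⟨p⟩ := h.2.1.preconnected ⟨d, hd⟩ ⟨v, hv⟩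
    obtain ⟨w, hw⟩ := exists_walk_of_induce' p
    exact ⟨w, fun x hx => h.1 (hw x hx)⟩
  exact (h.2.2 _ hsub walkSet_subset (isCompOf_walkSet (h.1 hd)).2.1).symm

end AuxLemmas

/-- Every rooted tree containing the vertex set of a subgraph of finite adhesion cofinally
has itself finite adhesion. -/
theorem stmt12 {V : Type u} (G : SimpleGraph V) (H : G.Subgraph)
    (hH : FiniteAdhesion G H.verts)
    (R : RootedTreeIn G) (hcof : R.ContainsCofinally H.verts) :
    FiniteAdhesion G R.sub.verts := by
  classical
  intro D hD
  have hHT : H.verts ⊆ R.sub.verts := hcof.1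
  obtain ⟨⟨d₀, hd₀⟩⟩ := hD.2.1.nonempty
  have hd₀T : d₀ ∈ (R.sub.verts)ᶜ := hD.1 hd₀
  have hTcsub : ((R.sub.verts)ᶜ : Set V) ⊆ (H.verts)ᶜ := fun x hx hxH => hx (hHT hxH)
  have hd₀H : d₀ ∈ (H.verts)ᶜ := hTcsub hd₀T
  have hDeq : D = walkSet G (R.sub.verts)ᶜ d₀ := IsCompOf.eq_walkSet hD hd₀
  set D' : Set V := walkSet G (H.verts)ᶜ d₀ with hD'def
  have hD' : IsCompOf G (H.verts)ᶜ D' := isCompOf_walkSet hd₀H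
  have hDD' : D ⊆ D' := by
    intro v hv
    rw [hDeq] at hv
    obtain ⟨w, hw⟩ := hv
    exact ⟨w, fun x hx => hTcsub (hw x hx)⟩
  have hND' : (nbrSet G D').Finite := hH D' hD'
  have hNDT : nbrSet G D ⊆ R.sub.verts := by
    intro v hv
    obtain ⟨hvD, d, hd, hadj⟩ := hv
    by_contra hvT
    apply hvD
    rw [hDeq] at hd ⊢
    obtain ⟨w, hw⟩ := hd
    refine ⟨w.append (Walk.cons hadj.symm Walk.nil), ?_⟩
    intro x hx
    rw [Walk.mem_support_append_iff] at hx
    rcases hx with hx | hx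
    · exact hw x hx
    · simp only [Walk.support_cons, Walk.support_nil, List.mem_cons] at hx
      rcases hx with rfl | hx
      · exact hw x w.end_mem_support
      · simp only [List.mem_singleton, List.not_mem_nil] at hx
        rcases hx with rfl | hx
        · exact hvT
        · exact hx.elim
  have hfin2 : ∀ m ∈ nbrSet G D', ({t : V | R.le t m} : Set V).Finite := by
    intro m _
    by_cases hm : m ∈ R.sub.verts
    · obtain ⟨P, hP, -⟩ := R.isTree.existsUnique_path ⟨R.root, R.root_mem⟩ ⟨m, hm⟩
      apply Set.Finite.subset ((P.support.map Subtype.val).toFinset : Finset V).finite_toSet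
      rintro t ⟨hx, hy, hall⟩
      have hts : (⟨t, hx⟩ : R.sub.verts) ∈ P.support := hall P hP
      simp only [Finset.coe_sort_coe, List.coe_toFinset, Set.mem_setOf_eq, List.mem_map]
      exact ⟨⟨t, hx⟩, hts, rfl⟩
    · refine Set.Finite.subset Set.finite_empty ?_
      rintro t ⟨_, hy, -⟩
      exact absurd hy hm
  have hincl : nbrSet G D ⊆ nbrSet G D' ∪ ⋃ m ∈ nbrSet G D', {t : V | R.le t m} := by
    intro t htD
    by_cases htD' : t ∈ D'
    · right
      have htT : t ∈ R.sub.verts := hNDT htD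
      obtain ⟨u, huH, hle⟩ := hcof.2 t htT
      obtain ⟨hxt, hyu, hall⟩ := hle
      obtain ⟨r, hr, hru⟩ := R.isTree.existsUnique_path ⟨R.root, R.root_mem⟩ ⟨u, hyu⟩
      have htr : (⟨t, hxt⟩ : R.sub.verts) ∈ r.support := hall r hr
      have hts : (⟨t, hxt⟩ : R.sub.verts) ∈ {x : R.sub.verts | ↑x ∈ D'} := htD'
      have hus : (⟨u, hyu⟩ : R.sub.verts) ∉ {x : R.sub.verts | ↑x ∈ D'} :=
        fun h => (hD'.1 h) huH
      obtain ⟨x, n, hxS, hnS, hadj, hns⟩ := exists_exit (r.dropUntil ⟨t, hxt⟩ htr) hts hus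
      have hnr : n ∈ r.support := r.support_dropUntil_subset htr hns
      have hnN : (↑n : V) ∈ nbrSet G D' :=
        ⟨hnS, ↑x, hxS, ((Subgraph.coe_adj _ _ _).mp hadj).adj_sub.symm⟩
      refine Set.mem_biUnion hnN ?_
      refine ⟨hxt, n.2, ?_⟩
      intro p hp
      have htk : (r.takeUntil n hnr).IsPath := hr.takeUntil hnr
      obtain ⟨P₀, hP₀, hP₀u⟩ := R.isTree.existsUnique_path ⟨R.root, R.root_mem⟩ n
      have hpe : p = r.takeUntil n hnr := by rw [hP₀u p hp, hP₀u _ htk]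
      rw [hpe]
      exact mem_takeUntil_of_mem_dropUntil hr htr hnr hns (fun h => hnS (h ▸ hts))
    · left
      obtain ⟨hvD, d, hd, hadj⟩ := htD
      exact ⟨htD', d, hDD' hd, hadj⟩
  exact (hND'.union (Set.Finite.biUnion hND' hfin2)).subset hincl
end

section
/- Let H ⊆ G be a subgraph of finite adhesion. If T ⊆ G is a rooted tree containing V(H) cofinally, then every component D of G − H satisfies |V(D) ∩ V(T)| < ∞. -/
open SimpleGraph

universe u v w

lemma cross_aux {α : Type*} {Γ : SimpleGraph α} {S : Set α} :
    ∀ {a b : α} (w : Γ.Walk a b), a ∈ S → b ∉ S →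
      ∃ (c d : α) (h : Γ.Adj c d) (w₁ : Γ.Walk a c) (w₂ : Γ.Walk d b),
        c ∈ S ∧ d ∉ S ∧ w = w₁.append (SimpleGraph.Walk.cons h w₂) := by
  intro a b w
  induction w with
  | nil => intro ha hb; exact absurd ha hb
  | @cons a x b h' w' ih =>
    intro ha hb
    by_cases hx : x ∈ S
    · obtain ⟨c, d, h, w₁, w₂, hc, hd, heq⟩ := ih hx hb
      exact ⟨c, d, h, SimpleGraph.Walk.cons h' w₁, w₂, hc, hd,
        by rw [SimpleGraph.Walk.cons_append, heq]⟩
    · exact ⟨a, x, h', SimpleGraph.Walk.nil, w', ha, hx,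
        by rw [SimpleGraph.Walk.nil_append]⟩

/-- If `T` is a rooted tree containing the vertex set of a subgraph `H` of finite adhesion
cofinally, then every component `D` of `G − H` meets `T` in only finitely many vertices. -/
theorem stmt13 {V : Type u} (G : SimpleGraph V) (H : G.Subgraph)
    (hH : FiniteAdhesion G H.verts)
    (R : RootedTreeIn G) (hcof : R.ContainsCofinally H.verts) :
    ∀ D : Set V, IsCompOf G H.vertsᶜ D → (D ∩ R.sub.verts).Finite := by
  classical
  intro D hD
  have hDsub : D ⊆ H.vertsᶜ := hD.1
  have hN : (nbrSet G D).Finite := hH D hD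
  have key : D ∩ R.sub.verts ⊆ ⋃ n ∈ (nbrSet G D ∩ R.sub.verts), {x | R.le x n} := by
    rintro t ⟨htD, htT⟩
    obtain ⟨u, huH, hx, hy, hall⟩ := hcof.2 t htT
    obtain ⟨p, hp, -⟩ := R.isTree.existsUnique_path ⟨R.root, R.root_mem⟩ ⟨u, hy⟩
    have htp : (⟨t, hx⟩ : R.sub.verts) ∈ p.support := hall p hp
    obtain ⟨c, d, hadj, w₁, w₂, hcS, hdS, heq⟩ :=
      cross_aux (S := {x : R.sub.verts | (x : V) ∈ D}) (p.dropUntil _ htp) htD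
        (fun huD => hDsub huD huH)
    have hdadj : G.Adj (d : V) (c : V) :=
      (R.sub.adj_sub ((SimpleGraph.Subgraph.coe_adj _ _ _).mp hadj)).symm
    have hnbr : (d : V) ∈ nbrSet G D := ⟨hdS, c, hcS, hdadj⟩
    refine Set.mem_biUnion (⟨hnbr, d.2⟩ : (d : V) ∈ nbrSet G D ∩ R.sub.verts) ?_
    refine ⟨hx, d.2, ?_⟩
    intro p' hp'
    set P : R.sub.coe.Walk ⟨R.root, R.root_mem⟩ d :=
      (p.takeUntil _ htp).append (w₁.concat hadj) with hP
    have hPp : P.append w₂ = p := by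
      rw [hP, ← SimpleGraph.Walk.append_assoc, SimpleGraph.Walk.concat_append,
        ← heq, SimpleGraph.Walk.take_spec]
    have hPpath : P.IsPath := by
      apply SimpleGraph.Walk.IsPath.of_append_left (q := w₂)
      rw [hPp]; exact hp
    have hpP : p' = P := by
      have := R.isTree.2.path_unique ⟨p', hp'⟩ ⟨P, hPpath⟩
      exact congrArg Subtype.val this
    rw [hpP, hP, SimpleGraph.Walk.mem_support_append_iff]
    exact Or.inl (SimpleGraph.Walk.end_mem_support _)
  refine Set.Finite.subset ?_ key
  refine Set.Finite.biUnion (hN.inter_of_left _) ?_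
  intro n hn
  obtain ⟨p, hp, -⟩ := R.isTree.existsUnique_path ⟨R.root, R.root_mem⟩ ⟨n, hn.2⟩
  apply Set.Finite.subset (List.finite_toSet (p.support.map Subtype.val))
  rintro x ⟨hx, hy, hall⟩
  exact List.mem_map.mpr ⟨⟨x, hx⟩, hall p hp, rfl⟩
end

section
/- Let λ be an infinite cardinal and let X be a (λ,λ⁺)-graph. Then every countably inflated IX graph H contains a fat TK^{ℵ₀} as a subgraph. -/
open SimpleGraph

universe u v w

/-- A `(λ,λ⁺)`-graph: a bipartite graph `(A,B)` with `|A| = λ`, `|B| = λ⁺`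
(for some infinite cardinal `λ`) in which every vertex of `B` has infinite degree. -/
def IsLambdaLambdaPlusGraph {W : Type u} (H : SimpleGraph W) : Prop :=
  ∃ (lam : Cardinal.{u}) (A B : Set W),
    Cardinal.aleph0 ≤ lam ∧
    A ∪ B = Set.univ ∧ Disjoint A B ∧
    (∀ ⦃x y⦄, H.Adj x y → (x ∈ A ∧ y ∈ B) ∨ (x ∈ B ∧ y ∈ A)) ∧
    Cardinal.mk A = lam ∧ Cardinal.mk B = Order.succ lam ∧
    ∀ b ∈ B, (H.neighborSet b).Infinite

/-- A fat `TK^{ℵ₀}` in `G`: infinitely many branch vertices `h 0, h 1, h 2, …` together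
with, for every pair of branch vertices, uncountably many paths between them which are
internally disjoint from each other and from all other such paths and branch vertices. -/
structure FatTK {V : Type u} (G : SimpleGraph V) where
  h : ℕ → V
  inj : Function.Injective h
  ι : Type u
  unc : ¬ Countable ι
  P : ∀ i j : ℕ, i < j → ι → G.Walk (h i) (h j)
  isPath : ∀ i j (hij : i < j) (k : ι), (P i j hij k).IsPath
  pinj : ∀ i j (hij : i < j), Function.Injective (P i j hij)
  internal : ∀ i j (hij : i < j) (k : ι), ∀ v ∈ (P i j hij k).support,
      (∃ n, v = h n) → v = h i ∨ v = h j
  disj : ∀ i j (hij : i < j) (k : ι) i' j' (hij' : i' < j') (k' : ι),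
      (i ≠ i' ∨ j ≠ j' ∨ k ≠ k') →
      ∀ v, v ∈ (P i j hij k).support → v ∈ (P i' j' hij' k').support → ∃ n, v = h n

/-- `G` contains a fat `TK^{ℵ₀}` (as a subgraph). -/
def HasFatTK {V : Type u} (G : SimpleGraph V) : Prop :=
  Nonempty (FatTK G)


lemma aux_fiber_big {α : Type u} {β : Type v} (f : α → β) {c : Cardinal.{u}}
    (hc : Cardinal.aleph0 ≤ c) (hα : Order.succ c ≤ Cardinal.mk α)
    (hβ : Cardinal.lift.{u} (Cardinal.mk β) ≤ Cardinal.lift.{v} c) :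
    ∃ y : β, Order.succ c ≤ Cardinal.mk {x // f x = y} := by
  by_contra hcon
  push_neg at hcon
  have hfib : ∀ y : β, Cardinal.mk {x : α // f x = y} ≤ c :=
    fun y => Order.lt_succ_iff.mp (hcon y)
  have hne : Nonempty α := by
    rw [← Cardinal.mk_ne_zero_iff]
    intro h0
    rw [h0] at hα
    exact absurd hα (not_le.mpr (Order.lt_succ_of_le (zero_le : (0 : Cardinal) ≤ c)))
  have hneβ : Nonempty β := ⟨f hne.some⟩
  have hcover : (⋃ y : β, f ⁻¹' {y}) = Set.univ := by ext x; simp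
  have h1 : Cardinal.lift.{v} (Cardinal.mk α) ≤
      Cardinal.lift.{u} (Cardinal.mk β) * ⨆ y : β, Cardinal.lift.{v} (Cardinal.mk (f ⁻¹' {y})) := by
    have := Cardinal.mk_iUnion_le_lift (fun y : β => f ⁻¹' {y})
    rwa [hcover, Cardinal.mk_univ] at this
  have h2 : (⨆ y : β, Cardinal.lift.{v} (Cardinal.mk (f ⁻¹' {y}))) ≤ Cardinal.lift.{v} c := by
    refine ciSup_le' fun y => Cardinal.lift_le.mpr ?_
    refine le_trans (le_of_eq (Cardinal.mk_congr (Equiv.subtypeEquivRight fun x => ?_))) (hfib y)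
    simp [Set.mem_preimage]
  have h3 : Cardinal.lift.{v} (Cardinal.mk α) ≤ Cardinal.lift.{v} c := by
    calc Cardinal.lift.{v} (Cardinal.mk α)
        ≤ Cardinal.lift.{u} (Cardinal.mk β) * Cardinal.lift.{v} c :=
          h1.trans (mul_le_mul_right h2 _)
      _ ≤ Cardinal.lift.{v} c * Cardinal.lift.{v} c := mul_le_mul_left hβ _
      _ = Cardinal.lift.{v} c := Cardinal.mul_eq_self (by rwa [Cardinal.aleph0_le_lift])
  have := le_trans (Cardinal.lift_le.mpr hα) h3
  rw [Cardinal.lift_succ] at this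
  exact absurd this (not_le.mpr (Order.lt_succ _))


lemma aux_split {α : Type u} {F : Set α} {κ : Cardinal.{u}} (hκ : Cardinal.aleph0 ≤ κ)
    (hF : κ ≤ Cardinal.mk F) :
    ∃ T B' : Set α, T ⊆ F ∧ B' ⊆ F ∧ Disjoint T B' ∧ κ ≤ Cardinal.mk T ∧ κ ≤ Cardinal.mk B' := by
  have h2 : κ + κ ≤ Cardinal.mk F := by rwa [Cardinal.add_eq_self hκ]
  obtain ⟨s, hsF, hs⟩ := Cardinal.le_mk_iff_exists_subset.mp h2
  have hmk : Cardinal.mk s = Cardinal.mk (κ.out ⊕ κ.out) := by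
    rw [hs, Cardinal.mk_sum, Cardinal.mk_out, Cardinal.lift_id]
  obtain ⟨e⟩ := Cardinal.eq.mp hmk
  refine ⟨Set.range (fun y : κ.out => ((e.symm (Sum.inl y) : s) : α)),
          Set.range (fun y : κ.out => ((e.symm (Sum.inr y) : s) : α)), ?_, ?_, ?_, ?_, ?_⟩
  · rintro _ ⟨y, rfl⟩; exact hsF (e.symm (Sum.inl y)).2
  · rintro _ ⟨y, rfl⟩; exact hsF (e.symm (Sum.inr y)).2
  · rw [Set.disjoint_left]
    rintro _ ⟨y, rfl⟩ ⟨y', hy'⟩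
    have := Subtype.val_injective hy'
    have := e.symm.injective this
    simp at this
  · have := Cardinal.mk_range_eq (fun y : κ.out => ((e.symm (Sum.inl y) : s) : α))
      (fun a b h => Sum.inl_injective (e.symm.injective (Subtype.val_injective h)))
    rw [this, Cardinal.mk_out]
  · have := Cardinal.mk_range_eq (fun y : κ.out => ((e.symm (Sum.inr y) : s) : α))
      (fun a b h => Sum.inr_injective (e.symm.injective (Subtype.val_injective h)))
    rw [this, Cardinal.mk_out]

lemma aux_path {V : Type v} (H : SimpleGraph V) {s : Set V} (hconn : (H.induce s).Connected)
    {x y vx vy : V} (hvx : vx ∈ s) (hvy : vy ∈ s) (hx : x ∉ s) (hy : y ∉ s) (hxy : x ≠ y)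
    (ex : H.Adj x vx) (ey : H.Adj vy y) :
    ∃ p : H.Walk x y, p.IsPath ∧ (∀ v ∈ p.support, v = x ∨ v = y ∨ v ∈ s) ∧
      ∃ v ∈ p.support, v ∈ s := by
  classical
  obtain ⟨q0⟩ := hconn.preconnected ⟨vx, hvx⟩ ⟨vy, hvy⟩
  let f : H.induce s ↪g H := SimpleGraph.Embedding.induce s
  let q : H.Walk vx vy :=
    ((q0.toPath : (H.induce s).Walk ⟨vx, hvx⟩ ⟨vy, hvy⟩).map f.toHom).copy rfl rfl
  have hfinj : Function.Injective (f.toHom : @Subtype V (· ∈ s) → V) := f.injective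
  have hq : q.IsPath := by
    simp only [q]
    exact SimpleGraph.Walk.map_isPath_of_injective hfinj (q0.toPath.2)
  have hqs : ∀ v ∈ q.support, v ∈ s := by
    intro v hv
    have hv : v ∈ ((q0.toPath : (H.induce s).Walk ⟨vx, hvx⟩ ⟨vy, hvy⟩).map f.toHom).support := hv
    rw [SimpleGraph.Walk.support_map] at hv
    obtain ⟨⟨v', hv'⟩, _, rfl⟩ := List.mem_map.mp hv
    exact hv'
  have hxq : x ∉ q.support := fun h => hx (hqs _ h)
  have hyq : y ∉ q.support := fun h => hy (hqs _ h)
  refine ⟨SimpleGraph.Walk.cons ex (q.concat ey), ?_, ?_, ?_⟩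
  · rw [SimpleGraph.Walk.isPath_def, SimpleGraph.Walk.support_cons,
      SimpleGraph.Walk.support_concat]
    have h1 : (q.support ++ [y]).Nodup := by
      rw [List.nodup_append]
      exact ⟨hq.support_nodup, List.nodup_singleton y,
        fun a ha b hb hab => hyq (by subst hab; rw [List.mem_singleton.mp hb] at ha; exact ha)⟩
    refine List.nodup_cons.mpr ⟨?_, h1⟩
    intro h
    rcases List.mem_append.mp h with h | h
    · exact hxq h
    · exact hxy (List.mem_singleton.mp h)
  · intro v hv
    rw [SimpleGraph.Walk.support_cons, SimpleGraph.Walk.support_concat] at hv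
    simp only [List.concat_eq_append, List.mem_cons, List.mem_append, List.mem_singleton] at hv
    rcases hv with rfl | h | rfl | h
    · exact Or.inl rfl
    · exact Or.inr (Or.inr (hqs _ h))
    · exact Or.inr (Or.inl rfl)
    · cases h
  · refine ⟨vx, ?_, hvx⟩
    rw [SimpleGraph.Walk.support_cons, SimpleGraph.Walk.support_concat]
    simp only [List.concat_eq_append, List.mem_cons, List.mem_append, List.mem_singleton]
    exact Or.inr (Or.inl q.start_mem_support)

lemma aux_core {W : Type u} {V : Type v} (X : SimpleGraph W) (H : SimpleGraph V)
    (m : MinorMap X H) {lam : Cardinal.{u}} {A B : Set W}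
    (hlam : Cardinal.aleph0 ≤ lam) (hdisjAB : Disjoint A B)
    (hbip : ∀ ⦃x y⦄, X.Adj x y → (x ∈ A ∧ y ∈ B) ∨ (x ∈ B ∧ y ∈ A))
    (hA : Cardinal.mk A = lam) (hB : Cardinal.mk B = Order.succ lam)
    (hdeg : ∀ b ∈ B, (X.neighborSet b).Infinite)
    (hcount : ∀ x, (m.branch x).Countable) :
    ∃ (ww : ℕ → V) (T : ℕ → Set W),
      Function.Injective ww ∧
      (∀ n n', n < n' → Disjoint (T n) (T n')) ∧
      (∀ n, Order.succ lam ≤ Cardinal.mk (T n)) ∧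
      (∀ i n, i ≤ n → ∀ b ∈ T n, ∃ v ∈ m.branch b, H.Adj (ww i) v) ∧
      (∀ (i n : ℕ), ∀ b ∈ T n, ww i ∉ m.branch b) := by
  classical
  have hκinf : Cardinal.aleph0 ≤ Order.succ lam := hlam.trans (Order.le_succ lam)
  have hBnotA : ∀ {b : W}, b ∈ B → b ∉ A := fun hb ha => Set.disjoint_left.mp hdisjAB ha hb
  have hbipA : ∀ {b a : W}, b ∈ B → X.Adj b a → a ∈ A := by
    intro b a hb hadj
    rcases hbip hadj with ⟨hbA, _⟩ | ⟨_, haA⟩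
    · exact absurd hbA (hBnotA hb)
    · exact haA
  -- the small side U
  have hUcard : Cardinal.lift.{u} (Cardinal.mk (⋃ a : A, m.branch (a : W)))
      ≤ Cardinal.lift.{v} lam := by
    calc Cardinal.lift.{u} (Cardinal.mk (⋃ a : A, m.branch (a : W)))
        ≤ Cardinal.lift.{v} (Cardinal.mk A) *
            ⨆ a : A, Cardinal.lift.{u} (Cardinal.mk (m.branch (a : W))) :=
          Cardinal.mk_iUnion_le_lift _
      _ ≤ Cardinal.lift.{v} lam * Cardinal.aleph0 := by
          have hAne : Nonempty A := by
            rw [← Cardinal.mk_ne_zero_iff, hA]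
            exact (lt_of_lt_of_le Cardinal.aleph0_pos hlam).ne'
          refine mul_le_mul' (by rw [hA]) (ciSup_le' fun a => ?_)
          have h1 : Cardinal.mk (m.branch (a : W)) ≤ Cardinal.aleph0 :=
            Cardinal.le_aleph0_iff_set_countable.mpr (hcount _)
          calc Cardinal.lift.{u} (Cardinal.mk (m.branch (a : W)))
              ≤ Cardinal.lift.{u} Cardinal.aleph0 := Cardinal.lift_le.mpr h1
            _ = Cardinal.aleph0 := Cardinal.lift_aleph0
      _ ≤ Cardinal.lift.{v} lam * Cardinal.lift.{v} lam :=
          mul_le_mul_right (by rw [Cardinal.aleph0_le_lift]; exact hlam) _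
      _ = Cardinal.lift.{v} lam := Cardinal.mul_eq_self (Cardinal.aleph0_le_lift.mpr hlam)
  -- one recursion step
  have key : ∀ (used Bn : Set W), used.Finite → Bn ⊆ B → Order.succ lam ≤ Cardinal.mk Bn →
      ∃ (Bn' T : Set W) (a : W) (w : V), a ∈ A ∧ a ∉ used ∧ w ∈ m.branch a ∧
        T ⊆ Bn ∧ Bn' ⊆ Bn ∧ Disjoint T Bn' ∧ Order.succ lam ≤ Cardinal.mk T ∧
        Order.succ lam ≤ Cardinal.mk Bn' ∧
        ∀ b ∈ T ∪ Bn', ∃ v ∈ m.branch b, H.Adj w v := by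
    intro used Bn hufin hBnB hBncard
    have hchoice : ∀ b : Bn, ∃ uu : (⋃ a : A, m.branch (a : W)), ∃ a : W,
        a ∈ A ∧ a ∉ used ∧ (uu : V) ∈ m.branch a ∧
        ∃ v ∈ m.branch (b : W), H.Adj (uu : V) v := by
      rintro ⟨b, hb⟩
      have hbB := hBnB hb
      obtain ⟨a, ha⟩ := ((hdeg b hbB).diff hufin).nonempty
      have haA : a ∈ A := hbipA hbB ha.1
      obtain ⟨uu, huu, v, hv, hadj⟩ := m.branch_adj (X.adj_symm ha.1)
      refine ⟨⟨uu, ?_⟩, a, haA, ha.2, huu, v, hv, hadj⟩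
      exact Set.mem_iUnion.mpr ⟨⟨a, haA⟩, huu⟩
    choose fu fa hfaA hfaused hfu hex using hchoice
    obtain ⟨u₀, hu₀⟩ := aux_fiber_big fu hlam hBncard hUcard
    have hFBn : {b : W | ∃ hb : b ∈ Bn, fu ⟨b, hb⟩ = u₀} ⊆ Bn := fun b hb => hb.1
    have hFcard : Order.succ lam ≤ Cardinal.mk {b : W | ∃ hb : b ∈ Bn, fu ⟨b, hb⟩ = u₀} := by
      refine le_trans hu₀ (Cardinal.mk_le_of_injective
        (f := fun x : {b : Bn // fu b = u₀} =>
          (⟨(x.1 : W), (x.1).2, x.2⟩ : {b : W | ∃ hb : b ∈ Bn, fu ⟨b, hb⟩ = u₀})) ?_)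
      intro x y hxy
      have h1 := congrArg
        (fun z : {b : W | ∃ hb : b ∈ Bn, fu ⟨b, hb⟩ = u₀} => (z : W)) hxy
      apply Subtype.ext
      apply Subtype.ext
      exact h1
    have hFne : Nonempty {b : W | ∃ hb : b ∈ Bn, fu ⟨b, hb⟩ = u₀} := by
      rw [← Cardinal.mk_ne_zero_iff]
      exact (lt_of_lt_of_le (lt_of_lt_of_le Cardinal.aleph0_pos hκinf) hFcard).ne'
    obtain ⟨⟨b₀, hb₀Bn, hb₀f⟩⟩ := hFne
    have hw₀ : (u₀ : V) ∈ m.branch (fa ⟨b₀, hb₀Bn⟩) := by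
      rw [← hb₀f]; exact hfu _
    have hFadj : ∀ b ∈ {b : W | ∃ hb : b ∈ Bn, fu ⟨b, hb⟩ = u₀},
        ∃ v ∈ m.branch b, H.Adj (u₀ : V) v := by
      rintro b ⟨hb, hfb⟩
      obtain ⟨v, hv, hadj⟩ := hex ⟨b, hb⟩
      rw [hfb] at hadj
      exact ⟨v, hv, hadj⟩
    obtain ⟨T, B', hTF, hB'F, hTB', hTc, hB'c⟩ := aux_split hκinf hFcard
    refine ⟨B', T, fa ⟨b₀, hb₀Bn⟩, (u₀ : V), hfaA _, hfaused _, hw₀,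
      hTF.trans hFBn, hB'F.trans hFBn, hTB', hTc, hB'c, fun b hb => hFadj b ?_⟩
    rcases hb with h | h
    exacts [hTF h, hB'F h]
  -- iterate
  let Stage := {p : Set W × Set W // p.1.Finite ∧ p.2 ⊆ B ∧ Order.succ lam ≤ Cardinal.mk p.2}
  have step_ex : ∀ s : Stage, ∃ t : Stage, ∃ (T : Set W) (a : W) (w : V),
      t.1.1 = insert a s.1.1 ∧ a ∈ A ∧ a ∉ s.1.1 ∧ w ∈ m.branch a ∧
      T ⊆ s.1.2 ∧ t.1.2 ⊆ s.1.2 ∧ Disjoint T t.1.2 ∧ Order.succ lam ≤ Cardinal.mk T ∧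
      ∀ b ∈ T ∪ t.1.2, ∃ v ∈ m.branch b, H.Adj w v := by
    intro s
    obtain ⟨Bn', T, a, w, haA, hau, hwbr, hTsub, hBsub, hdisj, hTc, hBc, hadj⟩ :=
      key s.1.1 s.1.2 s.2.1 s.2.2.1 s.2.2.2
    exact ⟨⟨(insert a s.1.1, Bn'), s.2.1.insert a, hBsub.trans s.2.2.1, hBc⟩, T, a, w, rfl,
      haA, hau, hwbr, hTsub, hBsub, hdisj, hTc, hadj⟩
  choose nxt Tf af wf hins hafA hafnew hwfbr hTfsub hBfsub hTfB hTfc hadjf using step_ex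
  let S0 : Stage := ⟨(∅, B), Set.finite_empty, subset_rfl, hB.ge⟩
  let st : ℕ → Stage := fun n => Nat.rec S0 (fun _ s => nxt s) n
  have hst : ∀ n, st (n + 1) = nxt (st n) := fun n => rfl
  have hchain1 : ∀ n, (st (n + 1)).1.2 ⊆ (st n).1.2 := fun n => by
    rw [hst n]; exact hBfsub (st n)
  have hchain : ∀ {n n'}, n ≤ n' → (st n').1.2 ⊆ (st n).1.2 := by
    intro n n' h
    induction n', h using Nat.le_induction with
    | base => exact subset_rfl
    | succ n' hm ih => exact (hchain1 n').trans ih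
  have huchain : ∀ {n n'}, n ≤ n' → (st n).1.1 ⊆ (st n').1.1 := by
    intro n n' h
    induction n', h using Nat.le_induction with
    | base => exact subset_rfl
    | succ n' hm ih =>
      intro x hx
      rw [hst n', hins (st n')]
      exact Set.mem_insert_of_mem _ (ih hx)
  have haan1 : ∀ n, af (st n) ∈ (st (n + 1)).1.1 := fun n => by
    rw [hst n, hins (st n)]; exact Set.mem_insert _ _
  have haalt : ∀ {n n'}, n < n' → af (st n) ≠ af (st n') := by
    intro n n' h hne
    exact hafnew (st n') (hne ▸ huchain h (haan1 n))
  have haainj : Function.Injective (fun n => af (st n)) := by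
    intro n n' h
    by_contra hne
    rcases Nat.lt_trichotomy n n' with hl | hl | hl
    · exact haalt hl h
    · exact hne hl
    · exact haalt hl h.symm
  have hTd : ∀ {n n'}, n < n' → Disjoint (Tf (st n)) (Tf (st n')) := by
    intro n n' h
    refine (hTfB (st n)).mono_right ?_
    have h1 : Tf (st n') ⊆ (st (n + 1)).1.2 := (hTfsub (st n')).trans (hchain h)
    rwa [hst n] at h1
  have hadjT : ∀ i n, i ≤ n → ∀ b ∈ Tf (st n), ∃ v ∈ m.branch b, H.Adj (wf (st i)) v := by
    intro i n hin b hb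
    rcases eq_or_lt_of_le hin with rfl | hlt
    · exact hadjf (st i) b (Or.inl hb)
    · refine hadjf (st i) b (Or.inr ?_)
      have h1 : b ∈ (st (i + 1)).1.2 := hchain hlt (hTfsub (st n) hb)
      rwa [hst i] at h1
  have hTB : ∀ n, Tf (st n) ⊆ B := fun n => (hTfsub (st n)).trans (st n).2.2.1
  have hwnot : ∀ (i n : ℕ), ∀ b ∈ Tf (st n), wf (st i) ∉ m.branch b := by
    intro i n b hb hmem
    have hbB : b ∈ B := hTB n hb
    have hne : af (st i) ≠ b := fun h => Set.disjoint_left.mp hdisjAB (hafA (st i)) (h ▸ hbB)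
    exact Set.disjoint_left.mp (m.branch_disjoint hne) (hwfbr (st i)) hmem
  have hwinj : Function.Injective (fun n => wf (st n)) := by
    intro n n' h
    by_contra hne
    have hane : af (st n) ≠ af (st n') := fun hh => hne (haainj hh)
    have h' : wf (st n) = wf (st n') := h
    have h2 : wf (st n) ∈ m.branch (af (st n')) := by
      rw [h']; exact hwfbr (st n')
    exact Set.disjoint_left.mp (m.branch_disjoint hane) (hwfbr (st n)) h2
  exact ⟨fun n => wf (st n), fun n => Tf (st n), hwinj, fun n n' h => hTd h,
    fun n => hTfc (st n), hadjT, hwnot⟩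


/-- Every countably inflated `IX` graph of a `(λ,λ⁺)`-graph `X` contains a fat `TK^{ℵ₀}`. -/
theorem stmt17 {W : Type u} {V : Type v} (X : SimpleGraph W)
    (hX : IsLambdaLambdaPlusGraph X)
    (H : SimpleGraph V) (m : MinorMap X H)
    (hcover : (⋃ x : W, m.branch x) = Set.univ)
    (hcount : ∀ x, (m.branch x).Countable) :
    HasFatTK H := by
  classical
  obtain ⟨lam, A, B, hlam, hcov, hdisjAB, hbip, hA, hB, hdeg⟩ := hX
  obtain ⟨ww, T, hwinj, hTd, hTc, hadjT, hwnot⟩ :=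
    aux_core X H m hlam hdisjAB hbip hA hB hdeg hcount
  have hιmk : Cardinal.mk (Cardinal.aleph 1 : Cardinal.{v}).out = Cardinal.aleph 1 :=
    Cardinal.mk_out _
  have hunc : ¬ Countable (Cardinal.aleph 1 : Cardinal.{v}).out := by
    intro hc
    have h1 := Cardinal.mk_le_aleph0_iff.mpr hc
    rw [hιmk] at h1
    exact absurd h1 (not_le.mpr Cardinal.aleph0_lt_aleph_one)
  have hemb : ∀ (N : ℕ), Nonempty ((Cardinal.aleph 1 : Cardinal.{v}).out ↪ (T N)) := by
    intro N
    rw [← Cardinal.lift_mk_le']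
    have h1 : Cardinal.lift.{u} (Cardinal.mk (Cardinal.aleph 1 : Cardinal.{v}).out)
        = Cardinal.aleph 1 := by
      rw [hιmk, Cardinal.lift_aleph, Ordinal.lift_one]
    rw [h1]
    have h2 : (Cardinal.aleph 1 : Cardinal.{max v u}) ≤
        Cardinal.lift.{v} (Order.succ lam) := by
      rw [← Cardinal.succ_aleph0, Cardinal.lift_succ]
      exact Order.succ_le_succ (Cardinal.aleph0_le_lift.mpr hlam)
    exact h2.trans (Cardinal.lift_le.mpr (hTc N))
  have Emb : ∀ (N : ℕ), (Cardinal.aleph 1 : Cardinal.{v}).out ↪ (T N) :=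
    fun N => (hemb N).some
  have hpath : ∀ (i j : ℕ) (hij : i < j) (k : (Cardinal.aleph 1 : Cardinal.{v}).out),
      ∃ p : H.Walk (ww i) (ww j), p.IsPath ∧
        (∀ x ∈ p.support,
          x = ww i ∨ x = ww j ∨ x ∈ m.branch ((Emb (Nat.pair i j) k : W))) ∧
        ∃ x ∈ p.support, x ∈ m.branch ((Emb (Nat.pair i j) k : W)) := by
    intro i j hij k
    have hbT : ((Emb (Nat.pair i j) k : W)) ∈ T (Nat.pair i j) := (Emb (Nat.pair i j) k).2
    have hji : j ≤ Nat.pair i j := Nat.right_le_pair i j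
    have hii : i ≤ Nat.pair i j := le_of_lt (lt_of_lt_of_le hij hji)
    obtain ⟨vi, hvi, hadji⟩ := hadjT i _ hii _ hbT
    obtain ⟨vj, hvj, hadjj⟩ := hadjT j _ hji _ hbT
    exact aux_path H (m.branch_connected _) hvi hvj (hwnot i _ _ hbT) (hwnot j _ _ hbT)
      (fun hh => absurd (hwinj hh) hij.ne) hadji hadjj.symm
  choose P hP1 hP2 hP3 using hpath
  refine ⟨⟨ww, hwinj, (Cardinal.aleph 1 : Cardinal.{v}).out, hunc, P, hP1, ?_, ?_, ?_⟩⟩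
  · -- pinj
    intro i j hij k k' heq
    by_contra hne
    have hbne : ((Emb (Nat.pair i j) k : W)) ≠ ((Emb (Nat.pair i j) k' : W)) := by
      intro hh
      exact hne ((Emb (Nat.pair i j)).injective (Subtype.coe_injective hh))
    obtain ⟨x, hx, hxbr⟩ := hP3 i j hij k
    have hx' : x ∈ (P i j hij k').support := by rw [← heq]; exact hx
    rcases hP2 i j hij k' x hx' with h | h | h
    · refine hwnot i _ _ (Emb (Nat.pair i j) k).2 ?_
      rw [← h]; exact hxbr
    · refine hwnot j _ _ (Emb (Nat.pair i j) k).2 ?_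
      rw [← h]; exact hxbr
    · exact Set.disjoint_left.mp (m.branch_disjoint hbne) hxbr h
  · -- internal
    intro i j hij k x hx hex
    rcases hP2 i j hij k x hx with h | h | h
    · exact Or.inl h
    · exact Or.inr h
    · obtain ⟨n, rfl⟩ := hex
      exact absurd h (hwnot n _ _ (Emb (Nat.pair i j) k).2)
  · -- disj
    intro i j hij k i' j' hij' k' hne x hx hx'
    rcases hP2 i j hij k x hx with h | h | h
    · exact ⟨i, h⟩
    · exact ⟨j, h⟩
    rcases hP2 i' j' hij' k' x hx' with h' | h' | h'
    · exact ⟨i', h'⟩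
    · exact ⟨j', h'⟩
    exfalso
    have hbne : ((Emb (Nat.pair i j) k : W)) ≠ ((Emb (Nat.pair i' j') k' : W)) := by
      by_cases hpq : i = i' ∧ j = j'
      · obtain ⟨rfl, rfl⟩ := hpq
        have hkk : k ≠ k' := by
          rcases hne with hc | hc | hc
          exacts [absurd rfl hc, absurd rfl hc, hc]
        intro hh
        exact hkk ((Emb (Nat.pair i j)).injective (Subtype.coe_injective hh))
      · have hNN : Nat.pair i j ≠ Nat.pair i' j' := by
          intro hh
          exact hpq (Nat.pair_eq_pair.mp hh)
        intro hh
        have h1 := (Emb (Nat.pair i j) k).2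
        have h2 := (Emb (Nat.pair i' j') k').2
        rw [hh] at h1
        rcases Nat.lt_trichotomy (Nat.pair i j) (Nat.pair i' j') with hl | hl | hl
        · exact Set.disjoint_left.mp (hTd _ _ hl) h1 h2
        · exact hNN hl
        · exact Set.disjoint_left.mp (hTd _ _ hl) h2 h1
    exact Set.disjoint_left.mp (m.branch_disjoint hbne) h h'
end

section
/- Let κ be a regular uncountable cardinal, S ⊆ κ a stationary set of ordinals of cofinality ω, and let X be a (κ,S)-graph. Then every countably inflated IX graph H contains a fat TK^{ℵ₀} as a subgraph. -/
open SimpleGraph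

universe u v w

/-- A club (closed unbounded) subset of a linear order. -/
def IsClubIn {α : Type*} [LinearOrder α] (C : Set α) : Prop :=
  (∀ a : α, ∃ b ∈ C, a < b) ∧
  ∀ a : α, (∃ b, b < a) → (∀ b < a, ∃ c ∈ C, b < c ∧ c < a) → a ∈ C

/-- A stationary subset of a linear order: one meeting every club set. -/
def IsStationaryIn {α : Type*} [LinearOrder α] (S : Set α) : Prop :=
  ∀ C : Set α, IsClubIn C → (S ∩ C).Nonempty

/-- A `(κ,S)`-graph: `κ` is a regular uncountable cardinal, the vertex set is `κ`,
`S ⊆ κ` is a stationary set of ordinals of cofinality `ω`, and for every `s ∈ S`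
the set of neighbours of `s` below `s` is countable with supremum `s`. -/
def IsKappaSGraph (κ : Cardinal.{u}) (S : Set κ.ord.ToType)
    (H : SimpleGraph κ.ord.ToType) : Prop :=
  κ.IsRegular ∧ Cardinal.aleph0 < κ ∧ IsStationaryIn S ∧
  (∀ s ∈ S, ∃ f : ℕ → κ.ord.ToType, StrictMono f ∧ (∀ n, f n < s) ∧
    ∀ x < s, ∃ n, x ≤ f n) ∧
  ∀ s ∈ S, {v | H.Adj s v ∧ v < s}.Countable ∧
    ∀ x < s, ∃ v, H.Adj s v ∧ v < s ∧ x < v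

section Aux
open Cardinal Set

section ClubLemmas
variable {α : Type*} [LinearOrder α]

lemma isClubIn_Ioi (hnomax : ∀ a : α, ∃ b, a < b) (a : α) : IsClubIn (Set.Ioi a) := by
  constructor
  · intro c
    obtain ⟨b, hb⟩ := hnomax (max a c)
    exact ⟨b, lt_of_le_of_lt (le_max_left _ _) hb, lt_of_le_of_lt (le_max_right _ _) hb⟩
  · rintro a' ⟨b₀, hb₀⟩ hcof
    obtain ⟨c, hc, _, hca'⟩ := hcof b₀ hb₀
    exact hc.trans hca'

lemma isClubIn_univ (hnomax : ∀ a : α, ∃ b, a < b) : IsClubIn (Set.univ : Set α) := by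
  refine ⟨fun a => ?_, fun _ _ _ => Set.mem_univ _⟩
  obtain ⟨b, hb⟩ := hnomax a
  exact ⟨b, Set.mem_univ _, hb⟩

lemma IsStationaryIn.nonempty (hnomax : ∀ a : α, ∃ b, a < b) {S : Set α}
    (hS : IsStationaryIn S) : S.Nonempty := by
  obtain ⟨s, hs, -⟩ := hS _ (isClubIn_univ hnomax)
  exact ⟨s, hs⟩

lemma IsStationaryIn.unbounded (hnomax : ∀ a : α, ∃ b, a < b) {S : Set α}
    (hS : IsStationaryIn S) (a : α) : ∃ s ∈ S, a < s := by
  obtain ⟨s, hs, hs2⟩ := hS _ (isClubIn_Ioi hnomax a)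
  exact ⟨s, hs, hs2⟩

variable [WellFoundedLT α]

lemma isClubIn_diag
    (hnomax : ∀ a : α, ∃ b, a < b)
    (hseg : ∀ (a : α) (f : α → α), ∃ b, ∀ x ≤ a, f x < b)
    (hcnt : ∀ s : Set α, s.Countable → ∃ b, ∀ x ∈ s, x < b)
    (C : α → Set α) (hC : ∀ x, IsClubIn (C x)) :
    IsClubIn {β : α | ∀ x < β, β ∈ C x} := by
  constructor
  · intro a
    choose pc hpc1 hpc2 using fun x p => (hC x).1 p
    have hnext : ∀ p : α, ∃ q, p < q ∧ ∀ x ≤ p, pc x p < q := by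
      intro p
      obtain ⟨b0, hb0⟩ := hseg p fun x => pc x p
      obtain ⟨b1, hb1⟩ := hnomax p
      exact ⟨max b0 b1, lt_of_lt_of_le hb1 (le_max_right _ _),
        fun x hx => lt_of_lt_of_le (hb0 x hx) (le_max_left _ _)⟩
    choose next hn1 hn2 using hnext
    set b : ℕ → α := fun n => next^[n] (next a) with hbdef
    have hb0 : a < b 0 := hn1 a
    have hbs : ∀ n, b (n + 1) = next (b n) := by
      intro n
      simp only [hbdef, Function.iterate_succ_apply']
    have hmono : StrictMono b := strictMono_nat_of_lt_succ (fun n => by rw [hbs]; exact hn1 _)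
    obtain ⟨t, ht⟩ := hcnt (Set.range b) (Set.countable_range b)
    have hne : {x : α | ∀ n, b n < x}.Nonempty := ⟨t, fun n => ht _ ⟨n, rfl⟩⟩
    have hβ1 : ∀ n, b n < (wellFounded_lt (α := α)).min _ hne :=
      (wellFounded_lt (α := α)).min_mem _ hne
    set β := (wellFounded_lt (α := α)).min _ hne with hβdef
    have hβ2 : ∀ γ, γ < β → ∃ n, γ ≤ b n := by
      intro γ hγ
      by_contra hcon
      push_neg at hcon
      exact (wellFounded_lt (α := α)).not_lt_min {x : α | ∀ n, b n < x} (x := γ) (fun n => hcon n) hγ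
    refine ⟨β, ?_, hb0.trans (hβ1 0)⟩
    intro x hxβ
    obtain ⟨m, hm⟩ := hβ2 x hxβ
    refine (hC x).2 β ⟨b 0, hβ1 0⟩ ?_
    intro γ hγ
    obtain ⟨n, hn⟩ := hβ2 γ hγ
    have hxk : x ≤ b (max m n) := le_trans hm (hmono.monotone (le_max_left _ _))
    have hγk : γ ≤ b (max m n) := le_trans hn (hmono.monotone (le_max_right _ _))
    refine ⟨pc x (b (max m n)), hpc1 _ _, lt_of_le_of_lt hγk (hpc2 _ _), ?_⟩
    calc pc x (b (max m n)) < b (max m n + 1) := by rw [hbs]; exact hn2 _ x hxk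
    _ < β := hβ1 _
  · rintro a' ⟨b₀, hb₀⟩ hcof x hx
    refine (hC x).2 a' ⟨b₀, hb₀⟩ ?_
    intro γ hγ
    obtain ⟨d, hd, hd1, hd2⟩ := hcof (max γ x) (max_lt hγ hx)
    exact ⟨d, hd x (lt_of_le_of_lt (le_max_right _ _) hd1),
      lt_of_le_of_lt (le_max_left _ _) hd1, hd2⟩

lemma IsClubIn.inter
    (hnomax : ∀ a : α, ∃ b, a < b)
    (hseg : ∀ (a : α) (f : α → α), ∃ b, ∀ x ≤ a, f x < b)
    (hcnt : ∀ s : Set α, s.Countable → ∃ b, ∀ x ∈ s, x < b)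
    {C D : Set α} (hC : IsClubIn C) (hD : IsClubIn D) : IsClubIn (C ∩ D) := by
  constructor
  · intro a
    have hneα : Nonempty α := ⟨a⟩
    set mm := (wellFounded_lt (α := α)).min Set.univ ⟨a, Set.mem_univ a⟩ with hmm
    obtain ⟨y, hy⟩ := hnomax mm
    have hmle : ∀ z : α, mm ≤ z := by
      intro z
      have := (wellFounded_lt (α := α)).not_lt_min Set.univ (Set.mem_univ z)
      exact not_lt.1 this
    set E : α → Set α := fun x => if x = mm then C else D with hE
    have hEc : ∀ x, IsClubIn (E x) := by
      intro x
      by_cases h : x = mm <;> simp [hE, h, hC, hD]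
    obtain ⟨β, hβ, hβgt⟩ := (isClubIn_diag hnomax hseg hcnt E hEc).1 (max a y)
    have hyβ : y < β := lt_of_le_of_lt (le_max_right _ _) hβgt
    have hmβ : mm < β := lt_of_le_of_lt (hmle y) hyβ
    refine ⟨β, ⟨?_, ?_⟩, lt_of_le_of_lt (le_max_left _ _) hβgt⟩
    · have := hβ mm hmβ
      simpa [hE] using this
    · have := hβ y hyβ
      rw [hE] at this
      simpa [ne_of_gt hy] using this
  · rintro a' hex hcof
    constructor
    · exact hC.2 a' hex (fun γ hγ => by
        obtain ⟨c, hc, h1, h2⟩ := hcof γ hγ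
        exact ⟨c, hc.1, h1, h2⟩)
    · exact hD.2 a' hex (fun γ hγ => by
        obtain ⟨c, hc, h1, h2⟩ := hcof γ hγ
        exact ⟨c, hc.2, h1, h2⟩)

end ClubLemmas

section ClubLemmas2
variable {α : Type*} [LinearOrder α] [WellFoundedLT α]

lemma isClubIn_iInter_nat
    (hnomax : ∀ a : α, ∃ b, a < b)
    (hseg : ∀ (a : α) (f : α → α), ∃ b, ∀ x ≤ a, f x < b)
    (hcnt : ∀ s : Set α, s.Countable → ∃ b, ∀ x ∈ s, x < b)
    (C : ℕ → Set α) (hC : ∀ n, IsClubIn (C n)) : IsClubIn (⋂ n, C n) := by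
  constructor
  · intro a
    have hnomax' := hnomax
    choose nx hnx using hnomax'
    set y : ℕ → α := fun n => nx^[n + 1] a with hydef
    have hys : ∀ n, y (n + 1) = nx (y n) := by
      intro n
      simp only [hydef, Function.iterate_succ_apply']
    have hymono : StrictMono y := strictMono_nat_of_lt_succ (fun n => by rw [hys]; exact hnx _)
    classical
    set g : α → ℕ := fun x => if h : ∃ n, y n = x then h.choose else 0 with hgdef
    have hgy : ∀ n, g (y n) = n := by
      intro n
      have h : ∃ m, y m = y n := ⟨n, rfl⟩
      have : y h.choose = y n := h.choose_spec
      simp only [hgdef, dif_pos h]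
      exact hymono.injective this
    have hEc : ∀ x, IsClubIn (C (g x)) := fun x => hC (g x)
    obtain ⟨t, ht⟩ := hcnt (Set.range y) (Set.countable_range y)
    obtain ⟨β, hβ, hβgt⟩ := (isClubIn_diag hnomax hseg hcnt (fun x => C (g x)) hEc).1 (max a t)
    refine ⟨β, Set.mem_iInter.2 fun n => ?_, lt_of_le_of_lt (le_max_left _ _) hβgt⟩
    have hynβ : y n < β := lt_of_lt_of_le (ht _ ⟨n, rfl⟩) (le_of_lt (lt_of_le_of_lt (le_max_right _ _) hβgt))
    have := hβ (y n) hynβ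
    rwa [hgy n] at this
  · intro a' hex hcof
    refine Set.mem_iInter.2 fun n => (hC n).2 a' hex ?_
    intro γ hγ
    obtain ⟨c, hc, h1, h2⟩ := hcof γ hγ
    exact ⟨c, Set.mem_iInter.1 hc n, h1, h2⟩

lemma fodor_lemma
    (hnomax : ∀ a : α, ∃ b, a < b)
    (hseg : ∀ (a : α) (f : α → α), ∃ b, ∀ x ≤ a, f x < b)
    (hcnt : ∀ s : Set α, s.Countable → ∃ b, ∀ x ∈ s, x < b)
    {S : Set α} (hS : IsStationaryIn S) (f : α → α) (hf : ∀ s ∈ S, f s < s) :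
    ∃ x, IsStationaryIn {s | s ∈ S ∧ f s = x} := by
  by_contra hcon
  push_neg at hcon
  have hcl : ∀ x, ∃ C, IsClubIn C ∧ ({s | s ∈ S ∧ f s = x} ∩ C) = ∅ := by
    intro x
    have h := hcon x
    unfold IsStationaryIn at h
    push_neg at h
    obtain ⟨C, h1, h2⟩ := h
    exact ⟨C, h1, h2⟩
  choose C hC1 hC2 using hcl
  obtain ⟨s, hsS, hsD⟩ := hS _ (isClubIn_diag hnomax hseg hcnt C hC1)
  have hmem : s ∈ {s' | s' ∈ S ∧ f s' = f s} ∩ C (f s) := ⟨⟨hsS, rfl⟩, hsD (f s) (hf s hsS)⟩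
  rw [hC2] at hmem
  exact hmem

lemma stationary_pigeonhole
    (hnomax : ∀ a : α, ∃ b, a < b)
    (hseg : ∀ (a : α) (f : α → α), ∃ b, ∀ x ≤ a, f x < b)
    (hcnt : ∀ s : Set α, s.Countable → ∃ b, ∀ x ∈ s, x < b)
    {S : Set α} (hS : IsStationaryIn S)
    {I : Type*} [Countable I] (g : α → I) :
    ∃ i, IsStationaryIn {s | s ∈ S ∧ g s = i} := by
  obtain ⟨s₀, hs₀⟩ := hS.nonempty hnomax
  have : Nonempty I := ⟨g s₀⟩
  obtain ⟨e, he⟩ := exists_surjective_nat I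
  by_contra hcon
  push_neg at hcon
  have hcl : ∀ i, ∃ C, IsClubIn C ∧ ({s | s ∈ S ∧ g s = i} ∩ C) = ∅ := by
    intro i
    have h := hcon i
    unfold IsStationaryIn at h
    push_neg at h
    obtain ⟨C, h1, h2⟩ := h
    exact ⟨C, h1, h2⟩
  choose C hC1 hC2 using hcl
  obtain ⟨s, hsS, hsD⟩ := hS _ (isClubIn_iInter_nat hnomax hseg hcnt (fun n => C (e n)) (fun n => hC1 _))
  obtain ⟨n, hn⟩ := he (g s)
  have hmem : s ∈ {s' | s' ∈ S ∧ g s' = g s} ∩ C (g s) :=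
    ⟨⟨hsS, rfl⟩, by have := Set.mem_iInter.1 hsD n; rwa [hn] at this⟩
  rw [hC2] at hmem
  exact hmem

end ClubLemmas2

noncomputable def otypein {o : Ordinal.{u}} (x : o.ToType) : Ordinal.{u} :=
  @Ordinal.typein o.ToType (· < ·) isWellOrder_lt x

noncomputable def oenum {o : Ordinal.{u}} (a : Ordinal.{u}) (h : a < o) : o.ToType :=
  @Ordinal.enum o.ToType (· < ·) isWellOrder_lt ⟨a, by rwa [Ordinal.type_toType]⟩

lemma otypein_lt_self {o : Ordinal.{u}} (x : o.ToType) : otypein x < o := by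
  unfold otypein
  conv_rhs => rw [← Ordinal.type_toType o]
  exact @Ordinal.typein_lt_type _ (· < ·) isWellOrder_lt x

lemma otypein_oenum {o : Ordinal.{u}} (a : Ordinal.{u}) (h : a < o) : otypein (oenum a h) = a := by
  unfold otypein oenum
  exact @Ordinal.typein_enum _ (· < ·) isWellOrder_lt _ _

lemma otypein_lt_iff {o : Ordinal.{u}} {x y : o.ToType} : otypein x < otypein y ↔ x < y := by
  unfold otypein
  exact @Ordinal.typein_lt_typein _ (· < ·) isWellOrder_lt _ _

section KappaFacts
variable {κ : Cardinal.{u}}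

lemma kappa_bdd (hreg : κ.IsRegular) (s : Set κ.ord.ToType) (hs : #s < κ) :
    ∃ b : κ.ord.ToType, ∀ x ∈ s, x < b := by
  have hlim : Order.IsSuccLimit κ.ord := Cardinal.isSuccLimit_ord hreg.aleph0_le
  set f : s → Ordinal.{u} := fun x => otypein x.1 with hf
  have hflt : ∀ x, f x < κ.ord := fun x => otypein_lt_self x.1
  have hsup : iSup f < κ.ord := by
    apply Ordinal.iSup_lt_ord _ hflt
    rwa [hreg.cof_eq]
  have hsup1 : iSup f + 1 < κ.ord := by
    have := hlim.succ_lt hsup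
    rwa [Order.succ_eq_add_one] at this
  refine ⟨oenum (iSup f + 1) hsup1, ?_⟩
  intro x hx
  have h1 : f ⟨x, hx⟩ ≤ iSup f := Ordinal.le_iSup f ⟨x, hx⟩
  have h2 : otypein x < otypein (oenum (iSup f + 1) hsup1) := by
    rw [otypein_oenum]
    exact lt_of_le_of_lt h1 (lt_add_one _)
  exact otypein_lt_iff.1 h2

lemma kappa_nomax (hreg : κ.IsRegular) (hκ : ℵ₀ < κ) (a : κ.ord.ToType) :
    ∃ b, a < b := by
  obtain ⟨b, hb⟩ := kappa_bdd hreg {a} (by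
    rw [mk_singleton]
    exact lt_of_lt_of_le one_lt_aleph0 hreg.aleph0_le)
  exact ⟨b, hb a rfl⟩

lemma kappa_Iic_small (hreg : κ.IsRegular) (a : κ.ord.ToType) : #(Set.Iic a) < κ := by
  have h1 : #(Set.Iio a) < κ := Cardinal.mk_Iio_ord_toType a
  have : (Set.Iic a : Set κ.ord.ToType) = insert a (Set.Iio a) := by
    rw [Set.Iio_insert]
  rw [this]
  refine lt_of_le_of_lt (Cardinal.mk_insert_le) ?_
  exact Cardinal.add_lt_of_lt hreg.aleph0_le h1 (lt_of_lt_of_le one_lt_aleph0 hreg.aleph0_le)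

lemma kappa_seg (hreg : κ.IsRegular) (hκ : ℵ₀ < κ) (a : κ.ord.ToType) (f : κ.ord.ToType → κ.ord.ToType) :
    ∃ b, ∀ x ≤ a, f x < b := by
  obtain ⟨b, hb⟩ := kappa_bdd hreg (f '' Set.Iic a)
    (lt_of_le_of_lt Cardinal.mk_image_le (kappa_Iic_small hreg a))
  exact ⟨b, fun x hx => hb _ ⟨x, hx, rfl⟩⟩

lemma kappa_cnt (hreg : κ.IsRegular) (hκ : ℵ₀ < κ) (s : Set κ.ord.ToType) (hs : s.Countable) :
    ∃ b, ∀ x ∈ s, x < b := by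
  refine kappa_bdd hreg s ?_
  have : Countable s := hs.to_subtype
  exact lt_of_le_of_lt (Cardinal.mk_le_aleph0_iff.2 this) hκ

end KappaFacts

section KappaStationary
variable {κ : Cardinal.{u}}

lemma kappa_stationary_diff (hreg : κ.IsRegular) (hκ : ℵ₀ < κ)
    {S R : Set κ.ord.ToType} (hS : IsStationaryIn S) (hR : R.Countable) :
    IsStationaryIn (S \ R) := by
  intro C hC
  obtain ⟨b, hb⟩ := kappa_cnt hreg hκ R hR
  obtain ⟨s, hsS, hsC, hsb⟩ := hS _ (IsClubIn.inter (kappa_nomax hreg hκ) (kappa_seg hreg hκ)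
    (kappa_cnt hreg hκ) hC (isClubIn_Ioi (kappa_nomax hreg hκ) b))
  exact ⟨s, ⟨hsS, fun hr => absurd (hb s hr) (not_lt.2 (le_of_lt hsb))⟩, hsC⟩

lemma kappa_stationary_uncountable (hreg : κ.IsRegular) (hκ : ℵ₀ < κ)
    {S : Set κ.ord.ToType} (hS : IsStationaryIn S) : ¬ S.Countable := by
  intro hcnt
  obtain ⟨b, hb⟩ := kappa_cnt hreg hκ S hcnt
  obtain ⟨s, hsS, hsb⟩ := hS _ (isClubIn_Ioi (kappa_nomax hreg hκ) b)
  exact absurd (hb s hsS) (not_lt.2 (le_of_lt hsb))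

end KappaStationary

section Greedy

lemma countable_Iic_aleph1 (w : (Cardinal.aleph 1).ord.ToType) : (Set.Iic w).Countable := by
  rw [Cardinal.countable_iff_lt_aleph_one]
  exact kappa_Iic_small Cardinal.isRegular_aleph_one w

lemma exists_disjoint_selection {α : Type u} (A : ℕ → Set α) (hA : ∀ n, ¬(A n).Countable) :
    ∃ G : (Cardinal.aleph 1).ord.ToType × ℕ → α,
      Function.Injective G ∧ ∀ p, G p ∈ A p.2 := by
  classical
  set W := (Cardinal.aleph 1).ord.ToType with hW
  set r : W × ℕ → W × ℕ → Prop := Prod.Lex (· < ·) (· < ·) with hr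
  have hwf : WellFounded r := WellFounded.prod_lex wellFounded_lt wellFounded_lt
  have hcntq : ∀ p : W × ℕ, Countable {q : W × ℕ // r q p} := by
    intro p
    have h1 : Countable (Set.Iic p.1) := (countable_Iic_aleph1 p.1).to_subtype
    have hf : Function.Injective (fun q : {q : W × ℕ // r q p} =>
        ((⟨q.1.1, by
          rcases Prod.lex_iff.1 q.2 with h | ⟨h, -⟩
          · exact le_of_lt h
          · exact le_of_eq h⟩ : Set.Iic p.1), q.1.2)) := by
      intro q q' hqq
      simp only [Prod.mk.injEq, Subtype.mk.injEq] at hqq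
      exact Subtype.ext (Prod.ext hqq.1 hqq.2)
    exact Function.Injective.countable hf
  have key : ∀ (p : W × ℕ) (IH : ∀ q, r q p → α),
      (A p.2 \ Set.range (fun q : {q : W × ℕ // r q p} => IH q.1 q.2)).Nonempty := by
    intro p IH
    rw [Set.nonempty_iff_ne_empty]
    intro hemp
    have hsub : A p.2 ⊆ Set.range (fun q : {q : W × ℕ // r q p} => IH q.1 q.2) := by
      intro x hx
      by_contra hxr
      have : x ∈ A p.2 \ Set.range (fun q : {q : W × ℕ // r q p} => IH q.1 q.2) := ⟨hx, hxr⟩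
      rw [hemp] at this
      exact this
    exact hA p.2 ((Set.countable_range _).mono hsub)
  set body : ∀ p : W × ℕ, (∀ q, r q p → α) → α := fun p IH => (key p IH).some with hbody
  set G : W × ℕ → α := hwf.fix body with hG
  have hfix : ∀ p, G p = body p (fun q _ => G q) := fun p => hwf.fix_eq body p
  have hmem : ∀ p, G p ∈ A p.2 \ Set.range (fun q : {q : W × ℕ // r q p} => G q.1) := by
    intro p
    rw [hfix p]
    exact (key p (fun q _ => G q)).some_mem
  have hne : ∀ p q, r q p → G p ≠ G q := by
    intro p q hq heq
    exact (hmem p).2 ⟨⟨q, hq⟩, heq.symm⟩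
  refine ⟨G, ?_, fun p => (hmem p).1⟩
  intro p q hpq
  by_contra hne'
  have : r p q ∨ r q p := by
    rcases lt_trichotomy p.1 q.1 with h | h | h
    · exact Or.inl (Prod.lex_iff.2 (Or.inl h))
    · rcases lt_trichotomy p.2 q.2 with h2 | h2 | h2
      · exact Or.inl (Prod.lex_iff.2 (Or.inr ⟨h, h2⟩))
      · exact absurd (Prod.ext h h2) hne'
      · exact Or.inr (Prod.lex_iff.2 (Or.inr ⟨h.symm, h2⟩))
    · exact Or.inr (Prod.lex_iff.2 (Or.inl h))
  rcases this with h | h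
  · exact hne q p h hpq.symm
  · exact hne p q h hpq

lemma aleph1_toType_uncountable : ¬ Countable (Cardinal.aleph 1).ord.ToType := by
  intro h
  have h1 : #(Cardinal.aleph 1).ord.ToType ≤ ℵ₀ := Cardinal.mk_le_aleph0_iff.2 h
  rw [Cardinal.mk_toType, Cardinal.card_ord] at h1
  exact absurd h1 (not_le.2 Cardinal.aleph0_lt_aleph_one)

end Greedy


lemma exists_connecting_path {V : Type v} (H : SimpleGraph V) (br : Set V)
    (conn : (H.induce br).Connected)
    {u1 u2 h1 h2 : V} (hu1 : u1 ∈ br) (hu2 : u2 ∈ br)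
    (e1 : H.Adj h1 u1) (e2 : H.Adj u2 h2)
    (h1br : h1 ∉ br) (h2br : h2 ∉ br) (hne : h1 ≠ h2) :
    ∃ w : H.Walk h1 h2, w.IsPath ∧ u1 ∈ w.support ∧
      ∀ v ∈ w.support, v = h1 ∨ v = h2 ∨ v ∈ br := by
  classical
  obtain ⟨p0⟩ := conn.preconnected ⟨u1, hu1⟩ ⟨u2, hu2⟩
  set p1 : (H.induce br).Walk ⟨u1, hu1⟩ ⟨u2, hu2⟩ := (p0.toPath : (H.induce br).Path _ _).val with hp1
  have hp1path : p1.IsPath := p0.toPath.2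
  set f : H.induce br ↪g H := SimpleGraph.Embedding.induce br with hf
  have hfval : ∀ y : br, f y = y.1 := fun y => rfl
  set pinner : H.Walk u1 u2 := p1.map f.toHom with hpinner
  have hpinnerpath : pinner.IsPath := Walk.map_isPath_of_injective f.injective hp1path
  have hpinnersup : ∀ v ∈ pinner.support, v ∈ br := by
    intro v hv
    have hv' : v ∈ p1.support.map f.toHom := by rw [← Walk.support_map]; exact hv
    obtain ⟨y, _, rfl⟩ := List.mem_map.1 hv'
    exact y.2
  set w : H.Walk h1 h2 := Walk.cons e1 (pinner.append (Walk.cons e2 Walk.nil)) with hw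
  have hwsup : w.support = h1 :: (pinner.support ++ [h2]) := by
    rw [hw, Walk.support_cons, Walk.support_append, Walk.support_cons, Walk.support_nil]
    rfl
  have h2nmem : h2 ∉ pinner.support := fun h => h2br (hpinnersup _ h)
  have h1nmem : h1 ∉ pinner.support := fun h => h1br (hpinnersup _ h)
  refine ⟨w, ?_, ?_, ?_⟩
  · rw [Walk.isPath_def, hwsup]
    refine List.nodup_cons.2 ⟨?_, ?_⟩
    · intro h
      rcases List.mem_append.1 h with h | h
      · exact h1nmem h
      · exact hne (List.mem_singleton.1 h)
    · refine List.Nodup.append hpinnerpath.support_nodup (List.nodup_singleton _) ?_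
      intro a ha hb
      rw [List.mem_singleton] at hb
      subst hb
      exact h2nmem ha
  · rw [hwsup]
    exact List.mem_cons_of_mem _ (List.mem_append_left _ pinner.start_mem_support)
  · intro v hv
    rw [hwsup] at hv
    rcases List.mem_cons.1 hv with rfl | hv
    · exact Or.inl rfl
    rcases List.mem_append.1 hv with hv | hv
    · exact Or.inr (Or.inr (hpinnersup _ hv))
    · exact Or.inr (Or.inl (List.mem_singleton.1 hv))

end Aux

open Cardinal in
/-- Every countably inflated `IX` graph of a `(κ,S)`-graph `X` contains a fat `TK^{ℵ₀}`. -/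
theorem stmt18 {V : Type v} (κ : Cardinal.{u}) (S : Set κ.ord.ToType)
    (X : SimpleGraph κ.ord.ToType) (hX : IsKappaSGraph κ S X)
    (H : SimpleGraph V) (m : MinorMap X H)
    (hcover : (⋃ x, m.branch x) = Set.univ)
    (hcount : ∀ x, (m.branch x).Countable) :
    HasFatTK H := by
  classical
  obtain ⟨hreg, hκ, hStat, hcof, hnb⟩ := hX
  have hnomax := kappa_nomax hreg hκ
  have hseg := kappa_seg hreg hκ
  have hcnt := kappa_cnt hreg hκ
  letI : OrderBot κ.ord.ToType :=
    Ordinal.toTypeOrderBot (Cardinal.isSuccLimit_ord hreg.aleph0_le).bot_lt.ne'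
  have hbots : ∀ s ∈ S, (⊥ : κ.ord.ToType) < s := by
    intro s hsS
    obtain ⟨f, -, hf2, -⟩ := hcof s hsS
    exact lt_of_le_of_lt bot_le (hf2 0)
  obtain ⟨s₀, hs₀S⟩ := hStat.nonempty hnomax
  haveI hVne : Nonempty V := ⟨(m.branch_nonempty s₀).some⟩
  -- attachment choices
  have hAB : ∀ pq : κ.ord.ToType × κ.ord.ToType, X.Adj pq.1 pq.2 →
      ∃ u, u ∈ m.branch pq.1 ∧ ∃ vv, vv ∈ m.branch pq.2 ∧ H.Adj u vv := by
    intro pq h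
    obtain ⟨u, hu, vv, hvv, h'⟩ := m.branch_adj h
    exact ⟨u, hu, vv, hvv, h'⟩
  choose! aF hmemA bF hmemB hadjAB using hAB
  -- one refinement step
  have step : ∀ (T : Set κ.ord.ToType) (q : κ.ord.ToType), IsStationaryIn T → T ⊆ S →
      (∀ s ∈ T, q < s) →
      ∃ x : κ.ord.ToType, ∃ hv : V, ∃ T' : Set κ.ord.ToType,
        q < x ∧ hv ∈ m.branch x ∧ IsStationaryIn T' ∧ T' ⊆ T ∧
        ∀ s ∈ T', X.Adj s x ∧ x < s ∧ bF (s, x) = hv := by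
    intro T q hT hTS hq
    have hg : ∀ s, s ∈ T → ∃ vv, X.Adj s vv ∧ vv < s ∧ q < vv :=
      fun s hss => (hnb s (hTS hss)).2 q (hq s hss)
    choose! g hg1 hg2 hg3 using hg
    obtain ⟨x, hx⟩ := fodor_lemma hnomax hseg hcnt hT g (fun s hss => hg2 s hss)
    obtain ⟨s₁, hs₁⟩ := hx.nonempty hnomax
    have hqx : q < x := hs₁.2 ▸ hg3 s₁ hs₁.1
    haveI hcntbr : Countable (m.branch x) := (hcount x).to_subtype
    have hbrne : (m.branch x).Nonempty := m.branch_nonempty x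
    set gg : κ.ord.ToType → m.branch x := fun s =>
      if h : bF (s, x) ∈ m.branch x then ⟨_, h⟩ else ⟨hbrne.some, hbrne.some_mem⟩ with hgg
    obtain ⟨i, hi⟩ := stationary_pigeonhole hnomax hseg hcnt hx gg
    refine ⟨x, i.1, {s | (s ∈ T ∧ g s = x) ∧ gg s = i}, hqx, i.2, hi,
      fun s hss => hss.1.1, ?_⟩
    intro s hss
    have hadjsx : X.Adj s x := hss.1.2 ▸ hg1 s hss.1.1
    have hxs : x < s := hss.1.2 ▸ hg2 s hss.1.1
    have hbmem : bF (s, x) ∈ m.branch x := hmemB (s, x) hadjsx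
    refine ⟨hadjsx, hxs, ?_⟩
    have h2 := hss.2
    rw [hgg] at h2
    simp only [dif_pos hbmem] at h2
    exact congrArg Subtype.val h2
  -- iterate the step
  let St := {qq : κ.ord.ToType × Set κ.ord.ToType //
    IsStationaryIn qq.2 ∧ qq.2 ⊆ S ∧ ∀ s ∈ qq.2, qq.1 < s}
  have nextEx : ∀ qq : St, ∃ q' : St, ∃ hv : V, q'.1.2 ⊆ qq.1.2 ∧ qq.1.1 < q'.1.1 ∧
      hv ∈ m.branch q'.1.1 ∧ ∀ s ∈ q'.1.2, X.Adj s q'.1.1 ∧ bF (s, q'.1.1) = hv := by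
    intro qq
    obtain ⟨x, hv, T', h1, h2, h3, h4, h5⟩ :=
      step qq.1.2 qq.1.1 qq.2.1 qq.2.2.1 qq.2.2.2
    exact ⟨⟨(x, T'), h3, h4.trans qq.2.2.1, fun s hss => (h5 s hss).2.1⟩, hv, h4, h1, h2,
      fun s hss => ⟨(h5 s hss).1, (h5 s hss).2.2⟩⟩
  choose nextSt nextHv hsub hlt hhv hprop using nextEx
  let seq : ℕ → St := fun n =>
    Nat.rec ⟨((⊥ : κ.ord.ToType), S), hStat, subset_rfl, hbots⟩ (fun _ st => nextSt st) n
  have hseqs : ∀ n, seq (n + 1) = nextSt (seq n) := fun n => rfl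
  let xs : ℕ → κ.ord.ToType := fun n => (seq (n + 1)).1.1
  let hvs : ℕ → V := fun n => nextHv (seq n)
  let Ts : ℕ → Set κ.ord.ToType := fun n => (seq n).1.2
  have hTstat : ∀ n, IsStationaryIn (Ts n) := fun n => (seq n).2.1
  have hTsub : ∀ n, Ts (n + 1) ⊆ Ts n := fun n => by
    have := hsub (seq n); rw [← hseqs n] at this; exact this
  have hTanti : ∀ a b : ℕ, a ≤ b → Ts b ⊆ Ts a := by
    intro a b hab
    induction b with
    | zero => simp_all
    | succ b ih =>
      rcases Nat.lt_or_ge a (b + 1) with h | h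
      · exact (hTsub b).trans (ih (by omega))
      · have : a = b + 1 := by omega
        subst this; exact subset_rfl
  have hxmono : StrictMono xs := by
    apply strictMono_nat_of_lt_succ
    intro n
    have := hlt (seq (n + 1))
    rw [← hseqs (n + 1)] at this
    exact this
  have hhvmem : ∀ n, hvs n ∈ m.branch (xs n) := fun n => by
    have := hhv (seq n); rw [← hseqs n] at this; exact this
  have hTadj : ∀ n s, s ∈ Ts (n + 1) → X.Adj s (xs n) ∧ bF (s, xs n) = hvs n := by
    intro n s hss
    have := hprop (seq n)
    rw [← hseqs n] at this
    exact this s hss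
  have hTlt : ∀ n s, s ∈ Ts (n + 1) → xs n < s := fun n s hss => (seq (n + 1)).2.2.2 s hss
  have hvs_inj : Function.Injective hvs := by
    intro n n' h
    by_contra hne
    exact (m.branch_disjoint (hxmono.injective.ne hne)).ne_of_mem (hhvmem n) (hhvmem n') h
  -- greedy selection
  set A : ℕ → Set κ.ord.ToType := fun c => Ts ((Nat.unpair c).2 + 1) \ Set.range xs with hA
  have hAunc : ∀ c, ¬ (A c).Countable := by
    intro c hc
    have hc' : (Ts ((Nat.unpair c).2 + 1) \ Set.range xs).Countable := hc
    exact kappa_stationary_uncountable hreg hκ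
      (kappa_stationary_diff hreg hκ (hTstat ((Nat.unpair c).2 + 1)) (Set.countable_range xs)) hc'
  obtain ⟨G, hGinj, hGmem⟩ := exists_disjoint_selection A hAunc
  -- the uncountable index type
  have hκα : #κ.ord.ToType = κ := by rw [Cardinal.mk_toType, Cardinal.card_ord]
  have hembV : Function.Injective (fun t : κ.ord.ToType => (m.branch_nonempty t).some) := by
    intro t t' h
    by_contra hne
    exact (m.branch_disjoint hne).ne_of_mem (m.branch_nonempty t).some_mem
      (m.branch_nonempty t').some_mem h
  have h1V : (Cardinal.aleph 1 : Cardinal.{v}) ≤ #V := by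
    have h1 : (Cardinal.aleph 1 : Cardinal.{u}) ≤ #κ.ord.ToType := by
      rw [hκα, ← Cardinal.succ_aleph0]
      exact Order.succ_le_of_lt hκ
    have h2 : Cardinal.lift.{v} #κ.ord.ToType ≤ Cardinal.lift.{u} #V :=
      Cardinal.lift_mk_le'.2 ⟨⟨_, hembV⟩⟩
    rw [← Cardinal.lift_le.{u}]
    calc Cardinal.lift.{u} (Cardinal.aleph 1 : Cardinal.{v})
        = Cardinal.lift.{v} (Cardinal.aleph 1 : Cardinal.{u}) := by simp
      _ ≤ Cardinal.lift.{v} #κ.ord.ToType := Cardinal.lift_le.2 h1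
      _ ≤ Cardinal.lift.{u} #V := h2
  obtain ⟨p, hp⟩ := Cardinal.le_mk_iff_exists_set.1 h1V
  have hιunc : ¬ Countable ↥p := by
    intro h
    have := Cardinal.mk_le_aleph0_iff.2 h
    rw [hp] at this
    exact absurd this (not_le.2 Cardinal.aleph0_lt_aleph_one)
  have hembW : Nonempty (↥p ↪ (Cardinal.aleph 1).ord.ToType) := by
    refine Cardinal.lift_mk_le'.1 ?_
    rw [hp, Cardinal.mk_toType, Cardinal.card_ord]
  obtain ⟨embW⟩ := hembW
  -- selection function
  set sel : ℕ → ℕ → ↥p → κ.ord.ToType := fun i j k => G (embW k, Nat.pair i j) with hsel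
  have hselmem : ∀ i j k, sel i j k ∈ Ts (j + 1) \ Set.range xs := by
    intro i j k
    have := hGmem (embW k, Nat.pair i j)
    rw [hA] at this
    simpa [Nat.unpair_pair] using this
  have hselinj : ∀ i j k i' j' k', sel i j k = sel i' j' k' → i = i' ∧ j = j' ∧ k = k' := by
    intro i j k i' j' k' h
    have h2 := hGinj h
    have h3 : embW k = embW k' := congrArg Prod.fst h2
    have h4 : Nat.pair i j = Nat.pair i' j' := congrArg Prod.snd h2
    have h5 := congrArg Nat.unpair h4
    rw [Nat.unpair_pair, Nat.unpair_pair] at h5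
    exact ⟨congrArg Prod.fst h5, congrArg Prod.snd h5, embW.injective h3⟩
  -- build the paths
  have hpath : ∀ (i j : ℕ), i < j → ∀ k : ↥p,
      ∃ w : H.Walk (hvs i) (hvs j), w.IsPath ∧
        (aF (sel i j k, xs i)) ∈ w.support ∧
        ∀ v ∈ w.support, v = hvs i ∨ v = hvs j ∨ v ∈ m.branch (sel i j k) := by
    intro i j hij k
    have hsT : sel i j k ∈ Ts (j + 1) := (hselmem i j k).1
    have hsnx : ∀ n, sel i j k ≠ xs n := fun n h => (hselmem i j k).2 ⟨n, h.symm⟩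
    have hsTi : sel i j k ∈ Ts (i + 1) := hTanti (i + 1) (j + 1) (by omega) hsT
    have hadji : X.Adj (sel i j k) (xs i) := (hTadj i _ hsTi).1
    have hadjj : X.Adj (sel i j k) (xs j) := (hTadj j _ hsT).1
    have hbi : bF (sel i j k, xs i) = hvs i := (hTadj i _ hsTi).2
    have hbj : bF (sel i j k, xs j) = hvs j := (hTadj j _ hsT).2
    have hai : aF (sel i j k, xs i) ∈ m.branch (sel i j k) := hmemA (sel i j k, xs i) hadji
    have haj : aF (sel i j k, xs j) ∈ m.branch (sel i j k) := hmemA (sel i j k, xs j) hadjj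
    have he1 : H.Adj (hvs i) (aF (sel i j k, xs i)) := by
      rw [← hbi]
      exact (hadjAB (sel i j k, xs i) hadji).symm
    have he2 : H.Adj (aF (sel i j k, xs j)) (hvs j) := by
      rw [← hbj]
      exact hadjAB (sel i j k, xs j) hadjj
    have hd1 : hvs i ∉ m.branch (sel i j k) := fun h =>
      (m.branch_disjoint (show xs i ≠ sel i j k from fun he => hsnx i he.symm)).ne_of_mem
        (hhvmem i) h rfl
    have hd2 : hvs j ∉ m.branch (sel i j k) := fun h =>
      (m.branch_disjoint (show xs j ≠ sel i j k from fun he => hsnx j he.symm)).ne_of_mem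
        (hhvmem j) h rfl
    exact exists_connecting_path H (m.branch (sel i j k)) (m.branch_connected (sel i j k))
      hai haj he1 he2 hd1 hd2 (hvs_inj.ne (Nat.ne_of_lt hij))
  choose P hP1 hP2 hP3 using hpath
  -- helper: a vertex in a branch of a selected s is not a branch vertex hvs n
  have hbrsel : ∀ i j k n (vv : V), vv ∈ m.branch (sel i j k) → vv ≠ hvs n := by
    intro i j k n vv hvv heq
    have hsnx : ∀ n', sel i j k ≠ xs n' := fun n' h => (hselmem i j k).2 ⟨n', h.symm⟩
    exact (m.branch_disjoint (hsnx n)).ne_of_mem hvv (hhvmem n) heq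
  refine ⟨⟨hvs, hvs_inj, ↥p, hιunc, P, hP1, ?_, ?_, ?_⟩⟩
  · -- pinj
    intro i j hij k k' h
    by_contra hkk
    have hss : sel i j k ≠ sel i j k' := fun he => hkk (hselinj i j k i j k' he).2.2
    have hmem := hP2 i j hij k
    rw [h] at hmem
    rcases hP3 i j hij k' _ hmem with h1 | h1 | h1
    · exact hbrsel i j k i _ (hmemA (sel i j k, xs i) ((hTadj i _
        (hTanti (i+1) (j+1) (by omega) (hselmem i j k).1)).1)) h1
    · exact hbrsel i j k j _ (hmemA (sel i j k, xs i) ((hTadj i _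
        (hTanti (i+1) (j+1) (by omega) (hselmem i j k).1)).1)) h1
    · exact (m.branch_disjoint hss).ne_of_mem (hmemA (sel i j k, xs i) ((hTadj i _
        (hTanti (i+1) (j+1) (by omega) (hselmem i j k).1)).1)) h1 rfl
  · -- internal
    intro i j hij k v hv hex
    obtain ⟨n, rfl⟩ := hex
    rcases hP3 i j hij k _ hv with h1 | h1 | h1
    · exact Or.inl h1
    · exact Or.inr h1
    · exact absurd rfl (hbrsel i j k n _ h1)
  · -- disj
    intro i j hij k i' j' hij' k' hne v hv hv'
    have hss : sel i j k ≠ sel i' j' k' := by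
      intro he
      obtain ⟨e1, e2, e3⟩ := hselinj i j k i' j' k' he
      rcases hne with h | h | h
      · exact h e1
      · exact h e2
      · exact h e3
    rcases hP3 i j hij k _ hv with h1 | h1 | h1
    · exact ⟨i, h1⟩
    · exact ⟨j, h1⟩
    · rcases hP3 i' j' hij' k' _ hv' with h2 | h2 | h2
      · exact ⟨i', h2⟩
      · exact ⟨j', h2⟩
      · exact absurd rfl ((m.branch_disjoint hss).ne_of_mem h1 h2)
end
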